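/- arXiv:2404.10950 — 6 statements merged into one kernel-verified Lean document; each statement's English description precedes it below -/
import Mathlib

section
/- Let α ∈ (1,∞), let p_X be a strictly positive probability distribution on 𝒳 and p_{Y|X} a channel with p_{Y|X}(y|x) > 0 for all x, y. Then I_α^C = sup over channels q̃_{Y|X} and strictly positive reverse channels r_{X|Y} of F̃_α^C(q̃_{Y|X}, r_{X|Y}) := (α/(1−α)) D(p_X q̃_{Y|X} ‖ p_X p_{Y|X}) + Σ_{x,y} p_X(x) q̃_{Y|X}(y|x) log( r_{X|Y}(x|y) / p_X(x) ), and the supremum is attained. -/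
/-- A probability mass function on a finite type. -/
def IsPMF {Z : Type*} [Fintype Z] (q : Z → ℝ) : Prop :=
  (∀ z, 0 ≤ q z) ∧ ∑ z, q z = 1

/-- Kullback--Leibler divergence (natural log). -/
noncomputable def klD {Z : Type*} [Fintype Z] (p q : Z → ℝ) : ℝ :=
  ∑ z, p z * Real.log (p z / q z)

/-- Rényi divergence of order `α`, valued in `EReal` (equal to `⊤` when `α > 1` and
`q` vanishes somewhere on the support of `p`). -/
noncomputable def renyiDE {Z : Type*} [Fintype Z] (α : ℝ) (p q : Z → ℝ) : EReal :=
  if 1 < α ∧ ∃ z, p z ≠ 0 ∧ q z = 0 then ⊤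
  else (((1 / (α - 1)) * Real.log (∑ z, p z ^ α * q z ^ (1 - α)) : ℝ) : EReal)

/-- Augustin--Csiszár mutual information of order `α`. -/
noncomputable def acMI {X Y : Type*} [Fintype X] [Fintype Y]
    (α : ℝ) (pX : X → ℝ) (pYX : X → Y → ℝ) : EReal :=
  sInf {v : EReal | ∃ qY : Y → ℝ, IsPMF qY ∧
    v = ∑ x, ((pX x : ℝ) : EReal) * renyiDE α (fun y => pYX x y) qY}

section AuxLemmas

open Real Finset

private lemma acmi_gibbs {Z : Type*} [Fintype Z] (a b : Z → ℝ) (ha : ∀ z, 0 ≤ a z)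
    (hb : ∀ z, 0 < b z) (hbs : ∑ z, b z ≤ 1) (has : ∑ z, a z = 1) :
    ∑ z, a z * Real.log (b z / a z) ≤ 0 := by
  have key : ∀ z, a z * Real.log (b z / a z) ≤ b z - a z := by
    intro z
    rcases eq_or_lt_of_le (ha z) with h | h
    · simp [← h]; exact (hb z).le
    · have hpos : 0 < b z / a z := div_pos (hb z) h
      have h1 := Real.log_le_sub_one_of_pos hpos
      calc a z * Real.log (b z / a z) ≤ a z * (b z / a z - 1) :=
            mul_le_mul_of_nonneg_left h1 h.le
        _ = b z - a z := by field_simp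
  calc ∑ z, a z * Real.log (b z / a z) ≤ ∑ z, (b z - a z) :=
        Finset.sum_le_sum (fun z _ => key z)
    _ = (∑ z, b z) - 1 := by rw [Finset.sum_sub_distrib, has]
    _ ≤ 0 := by linarith

private lemma acmi_key_identity {Y : Type*} [Fintype Y] [Nonempty Y] (α : ℝ) (hα : 1 < α)
    (p s w : Y → ℝ) (hp : ∀ y, 0 < p y) (hs : ∀ y, 0 < s y)
    (hw : ∀ y, 0 ≤ w y) (hws : ∑ y, w y = 1) :
    (∑ y, w y * Real.log (w y / s y)) - (α/(α-1)) * ∑ y, w y * Real.log (w y / p y)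
    = (α-1)⁻¹ * Real.log (∑ y, p y ^ α * s y ^ (1-α))
      - (α-1)⁻¹ * ∑ y, w y * Real.log (w y /
          (p y ^ α * s y ^ (1-α) / (∑ y', p y' ^ α * s y' ^ (1-α)))) := by
  have hα1 : α - 1 ≠ 0 := by linarith
  set S : ℝ := ∑ y, p y ^ α * s y ^ (1-α) with hS
  have hSpos : 0 < S := by
    apply Finset.sum_pos
    · intro y _
      exact mul_pos (Real.rpow_pos_of_pos (hp y) _) (Real.rpow_pos_of_pos (hs y) _)
    · exact Finset.univ_nonempty
  have perY : ∀ y, w y * Real.log (w y / s y) - (α/(α-1)) * (w y * Real.log (w y / p y))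
      = (α-1)⁻¹ * Real.log S * w y
        - (α-1)⁻¹ * (w y * Real.log (w y / (p y ^ α * s y ^ (1-α) / S))) := by
    intro y
    rcases eq_or_lt_of_le (hw y) with h | h
    · simp [← h]
    · have hwy := h.ne'
      have hty : (0:ℝ) < p y ^ α * s y ^ (1-α) :=
        mul_pos (Real.rpow_pos_of_pos (hp y) _) (Real.rpow_pos_of_pos (hs y) _)
      rw [Real.log_div hwy (hs y).ne', Real.log_div hwy (hp y).ne',
          Real.log_div hwy (by positivity), Real.log_div hty.ne' hSpos.ne',
          Real.log_mul (Real.rpow_pos_of_pos (hp y) _).ne' (Real.rpow_pos_of_pos (hs y) _).ne',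
          Real.log_rpow (hp y), Real.log_rpow (hs y)]
      field_simp
      ring
  calc (∑ y, w y * Real.log (w y / s y)) - (α/(α-1)) * ∑ y, w y * Real.log (w y / p y)
      = ∑ y, (w y * Real.log (w y / s y) - (α/(α-1)) * (w y * Real.log (w y / p y))) := by
        rw [Finset.sum_sub_distrib, Finset.mul_sum]
    _ = ∑ y, ((α-1)⁻¹ * Real.log S * w y
        - (α-1)⁻¹ * (w y * Real.log (w y / (p y ^ α * s y ^ (1-α) / S)))) := by
        exact Finset.sum_congr rfl (fun y _ => perY y)
    _ = (α-1)⁻¹ * Real.log S - (α-1)⁻¹ * ∑ y, w y * Real.log (w y /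
          (p y ^ α * s y ^ (1-α) / S)) := by
        rw [Finset.sum_sub_distrib, ← Finset.mul_sum, ← Finset.mul_sum, hws, mul_one]

private lemma acmi_tiltS_pos {Y : Type*} [Fintype Y] [Nonempty Y]
    (α : ℝ) (p s : Y → ℝ) (hp : ∀ y, 0 < p y) (hs : ∀ y, 0 < s y) :
    0 < ∑ y, p y ^ α * s y ^ (1-α) :=
  Finset.sum_pos (fun y _ => mul_pos (Real.rpow_pos_of_pos (hp y) _)
    (Real.rpow_pos_of_pos (hs y) _)) Finset.univ_nonempty

private lemma acmi_key_le {Y : Type*} [Fintype Y] [Nonempty Y] (α : ℝ) (hα : 1 < α)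
    (p s w : Y → ℝ) (hp : ∀ y, 0 < p y) (hs : ∀ y, 0 < s y)
    (hw : ∀ y, 0 ≤ w y) (hws : ∑ y, w y = 1) :
    (∑ y, w y * Real.log (w y / s y)) - (α/(α-1)) * ∑ y, w y * Real.log (w y / p y)
    ≤ (α-1)⁻¹ * Real.log (∑ y, p y ^ α * s y ^ (1-α)) := by
  rw [acmi_key_identity α hα p s w hp hs hw hws]
  have hSpos := acmi_tiltS_pos α p s hp hs
  set S : ℝ := ∑ y, p y ^ α * s y ^ (1-α)
  have hwstar : ∀ y, 0 < p y ^ α * s y ^ (1-α) / S := fun y =>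
    div_pos (mul_pos (Real.rpow_pos_of_pos (hp y) _) (Real.rpow_pos_of_pos (hs y) _)) hSpos
  have hsum : ∑ y, p y ^ α * s y ^ (1-α) / S = 1 := by
    rw [← Finset.sum_div]; exact div_self hSpos.ne'
  have hgibbs := acmi_gibbs w (fun y => p y ^ α * s y ^ (1-α) / S) hw hwstar hsum.le hws
  have hneg : ∑ y, w y * Real.log (w y / (p y ^ α * s y ^ (1-α) / S))
      = - ∑ y, w y * Real.log ((p y ^ α * s y ^ (1-α) / S) / w y) := by
    rw [← Finset.sum_neg_distrib]
    refine Finset.sum_congr rfl (fun y _ => ?_)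
    rcases eq_or_lt_of_le (hw y) with h | h
    · simp [← h]
    · rw [Real.log_div h.ne' (hwstar y).ne', Real.log_div (hwstar y).ne' h.ne']; ring
  have h2 : 0 ≤ (α-1)⁻¹ * ∑ y, w y * Real.log (w y / (p y ^ α * s y ^ (1-α) / S)) := by
    apply mul_nonneg (inv_nonneg.mpr (by linarith : (0:ℝ) ≤ α - 1))
    rw [hneg]; linarith
  linarith

private lemma acmi_key_eq {Y : Type*} [Fintype Y] [Nonempty Y] (α : ℝ) (hα : 1 < α)
    (p s : Y → ℝ) (hp : ∀ y, 0 < p y) (hs : ∀ y, 0 < s y) :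
    (∑ y, (p y ^ α * s y ^ (1-α) / (∑ y', p y' ^ α * s y' ^ (1-α))) *
        Real.log ((p y ^ α * s y ^ (1-α) / (∑ y', p y' ^ α * s y' ^ (1-α))) / s y))
    - (α/(α-1)) * ∑ y, (p y ^ α * s y ^ (1-α) / (∑ y', p y' ^ α * s y' ^ (1-α))) *
        Real.log ((p y ^ α * s y ^ (1-α) / (∑ y', p y' ^ α * s y' ^ (1-α))) / p y)
    = (α-1)⁻¹ * Real.log (∑ y, p y ^ α * s y ^ (1-α)) := by
  have hSpos := acmi_tiltS_pos α p s hp hs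
  have hwstar : ∀ y, 0 < p y ^ α * s y ^ (1-α) / (∑ y', p y' ^ α * s y' ^ (1-α)) := fun y =>
    div_pos (mul_pos (Real.rpow_pos_of_pos (hp y) _) (Real.rpow_pos_of_pos (hs y) _)) hSpos
  have hsum : ∑ y, p y ^ α * s y ^ (1-α) / (∑ y', p y' ^ α * s y' ^ (1-α)) = 1 := by
    rw [← Finset.sum_div]; exact div_self hSpos.ne'
  rw [acmi_key_identity α hα p s _ hp hs (fun y => (hwstar y).le) hsum]
  have : ∑ y, (p y ^ α * s y ^ (1-α) / (∑ y', p y' ^ α * s y' ^ (1-α))) *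
      Real.log ((p y ^ α * s y ^ (1-α) / (∑ y', p y' ^ α * s y' ^ (1-α))) /
        (p y ^ α * s y ^ (1-α) / (∑ y', p y' ^ α * s y' ^ (1-α)))) = 0 := by
    refine Finset.sum_eq_zero (fun y _ => ?_)
    rw [div_self (hwstar y).ne', Real.log_one, mul_zero]
  rw [this, mul_zero, sub_zero]

private lemma acmi_coe_sum {I : Type*} (s : Finset I) (f : I → ℝ) :
    ((∑ i ∈ s, f i : ℝ) : EReal) = ∑ i ∈ s, (f i : EReal) := by
  induction s using Finset.cons_induction with
  | empty => simp
  | cons a s ha ih => rw [Finset.sum_cons, Finset.sum_cons, EReal.coe_add, ih]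

private lemma acmi_sum_ne_bot {I : Type*} (s : Finset I) (f : I → EReal)
    (h : ∀ i ∈ s, f i ≠ ⊥) : ∑ i ∈ s, f i ≠ ⊥ := by
  induction s using Finset.cons_induction with
  | empty => simp
  | cons a s ha ih =>
    rw [Finset.sum_cons]
    rw [Ne, EReal.add_eq_bot_iff]
    push_neg
    exact ⟨h a (Finset.mem_cons_self a s), ih (fun i hi => h i (Finset.mem_cons_of_mem hi))⟩

private lemma acmi_sum_eq_top {I : Type*} (s : Finset I) (hs : s.Nonempty) (f : I → EReal)
    (h : ∀ i ∈ s, f i = ⊤) : ∑ i ∈ s, f i = ⊤ := by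
  classical
  obtain ⟨i, hi⟩ := hs
  rw [← Finset.add_sum_erase _ f hi, h i hi]
  exact EReal.top_add_of_ne_bot (acmi_sum_ne_bot _ _ (fun j hj => by
    rw [h j (Finset.mem_of_mem_erase hj)]; exact (bot_lt_top).ne'))

end AuxLemmas
private lemma acmi_exists_fp {X Y : Type*} [Fintype X] [Fintype Y] [Nonempty X] [Nonempty Y]
    (α : ℝ) (hα : 1 < α)
    (pX : X → ℝ) (hpX : (∀ x, 0 ≤ pX x) ∧ ∑ x, pX x = 1) (hpXpos : ∀ x, 0 < pX x)
    (pYX : X → Y → ℝ) (hpYXpos : ∀ x y, 0 < pYX x y) :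
    ∃ q : Y → ℝ, (∀ y, 0 < q y) ∧ (∑ y, q y = 1) ∧
      (∀ y, ∑ x, pX x * (pYX x y ^ α * q y ^ (1-α) /
          ∑ y', pYX x y' ^ α * q y' ^ (1-α)) = q y) := by
  classical
  obtain ⟨ε, hεpos, q, hqK, hqint, hqmin⟩ :
      ∃ ε > 0, ∃ q : Y → ℝ, ((∀ y, ε ≤ q y) ∧ ∑ y, q y = 1) ∧ (∀ y, ε < q y) ∧
      IsMinOn (fun q : Y → ℝ => ∑ x, pX x * ((α-1)⁻¹ *
          Real.log (∑ y, pYX x y ^ α * q y ^ (1-α))))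
        {q : Y → ℝ | (∀ y, ε ≤ q y) ∧ ∑ y, q y = 1} q := by
    set g : (Y → ℝ) → ℝ := fun q => ∑ x, pX x * ((α-1)⁻¹ *
        Real.log (∑ y, pYX x y ^ α * q y ^ (1-α))) with hg
    set u : Y → ℝ := fun _ => (Fintype.card Y : ℝ)⁻¹ with hu
    have hcard : (0:ℝ) < (Fintype.card Y : ℝ) := by
      exact_mod_cast Fintype.card_pos
    set M : ℝ := g u with hM
    set m : ℝ := Finset.univ.inf' Finset.univ_nonempty
        (fun z : X × Y => Real.log (pYX z.1 z.2)) with hm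
    set ε : ℝ := min ((Fintype.card Y : ℝ)⁻¹) (Real.exp ((α-1)⁻¹*α*m - M - 1)) with hε
    have hεpos : 0 < ε := lt_min (by positivity) (Real.exp_pos _)
    set K : Set (Y → ℝ) := {q | (∀ y, ε ≤ q y) ∧ ∑ y, q y = 1} with hK
    have huK : u ∈ K := by
      constructor
      · intro y; exact min_le_left _ _
      · simp only [hu, Finset.sum_const, Finset.card_univ, nsmul_eq_mul]
        exact mul_inv_cancel₀ hcard.ne'
    have hKc : IsClosed K := by
      have : K = (⋂ y, {q : Y → ℝ | ε ≤ q y}) ∩ {q : Y → ℝ | ∑ y, q y = 1} := by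
        ext q; simp [hK, Set.mem_iInter]
      rw [this]
      exact IsClosed.inter (isClosed_iInter fun y =>
          isClosed_le continuous_const (continuous_apply y))
        (isClosed_eq (continuous_finset_sum _ fun y _ => continuous_apply y) continuous_const)
    have hKcomp : IsCompact K := by
      apply IsCompact.of_isClosed_subset (isCompact_univ_pi fun _ : Y => isCompact_Icc
        (a := ε) (b := 1)) hKc
      intro q hq
      rw [Set.mem_univ_pi]
      intro y
      refine ⟨hq.1 y, ?_⟩
      calc q y ≤ ∑ y', q y' := Finset.single_le_sum
            (fun y' _ => le_trans hεpos.le (hq.1 y')) (Finset.mem_univ y)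
        _ = 1 := hq.2
    have hSpos : ∀ (x : X) (q : Y → ℝ), q ∈ K → 0 < ∑ y, pYX x y ^ α * q y ^ (1-α) := by
      intro x q hq
      exact Finset.sum_pos (fun y _ => mul_pos (Real.rpow_pos_of_pos (hpYXpos x y) _)
        (Real.rpow_pos_of_pos (lt_of_lt_of_le hεpos (hq.1 y)) _)) Finset.univ_nonempty
    have hgc : ContinuousOn g K := by
      apply continuousOn_finset_sum
      intro x _
      apply ContinuousOn.mul continuousOn_const
      apply ContinuousOn.mul continuousOn_const
      apply ContinuousOn.log
      · apply continuousOn_finset_sum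
        intro y _
        apply ContinuousOn.mul continuousOn_const
        apply ContinuousOn.rpow_const (continuous_apply y).continuousOn
        intro q hq
        exact Or.inl (ne_of_gt (lt_of_lt_of_le hεpos (hq.1 y)))
      · intro q hq
        exact (hSpos x q hq).ne'
    obtain ⟨q, hqK, hqmin⟩ := hKcomp.exists_isMinOn ⟨u, huK⟩ hgc
    refine ⟨ε, hεpos, q, hqK, ?_, hqmin⟩
    intro y
    by_contra hcon
    push_neg at hcon
    have hqy : q y ≤ ε := hcon
    have hqypos : 0 < q y := lt_of_lt_of_le hεpos (hqK.1 y)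
    -- lower bound on g q
    have hbound : ∀ x, (α-1)⁻¹*α*m - Real.log ε ≤
        (α-1)⁻¹ * Real.log (∑ y', pYX x y' ^ α * q y' ^ (1-α)) := by
      intro x
      have h1 : pYX x y ^ α * q y ^ (1-α) ≤ ∑ y', pYX x y' ^ α * q y' ^ (1-α) :=
        Finset.single_le_sum (f := fun y' => pYX x y' ^ α * q y' ^ (1-α))
          (fun y' _ => le_of_lt (mul_pos (Real.rpow_pos_of_pos (hpYXpos x y') _)
            (Real.rpow_pos_of_pos (lt_of_lt_of_le hεpos (hqK.1 y')) _))) (Finset.mem_univ y)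
      have h2 : Real.log (pYX x y ^ α * q y ^ (1-α)) ≤
          Real.log (∑ y', pYX x y' ^ α * q y' ^ (1-α)) :=
        Real.log_le_log (mul_pos (Real.rpow_pos_of_pos (hpYXpos x y) _)
          (Real.rpow_pos_of_pos hqypos _)) h1
      rw [Real.log_mul (Real.rpow_pos_of_pos (hpYXpos x y) _).ne'
          (Real.rpow_pos_of_pos hqypos _).ne',
        Real.log_rpow (hpYXpos x y), Real.log_rpow hqypos] at h2
      have h3 : m ≤ Real.log (pYX x y) := Finset.inf'_le _ (Finset.mem_univ (x, y))
      have h4 : Real.log (q y) ≤ Real.log ε := Real.log_le_log hqypos hqy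
      have h5 : (1-α) * Real.log ε ≤ (1-α) * Real.log (q y) := by nlinarith
      have hc1 : (0:ℝ) < (α-1)⁻¹ := inv_pos.mpr (by linarith)
      have h6 : α * m + (1-α) * Real.log ε ≤ α * Real.log (pYX x y) + (1-α) * Real.log (q y) := by
        nlinarith
      have h7 := mul_le_mul_of_nonneg_left (le_trans h6 h2) hc1.le
      calc (α-1)⁻¹*α*m - Real.log ε = (α-1)⁻¹ * (α * m + (1-α) * Real.log ε) := by
            have hα1 : α - 1 ≠ 0 := by linarith
            field_simp
            ring
        _ ≤ _ := h7
    have hgq : (α-1)⁻¹*α*m - Real.log ε ≤ g q := by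
      calc (α-1)⁻¹*α*m - Real.log ε
          = ∑ x, pX x * ((α-1)⁻¹*α*m - Real.log ε) := by
            rw [← Finset.sum_mul, hpX.2, one_mul]
        _ ≤ g q := Finset.sum_le_sum (fun x _ =>
            mul_le_mul_of_nonneg_left (hbound x) (hpXpos x).le)
    have hεle : Real.log ε ≤ (α-1)⁻¹*α*m - M - 1 := by
      calc Real.log ε ≤ Real.log (Real.exp ((α-1)⁻¹*α*m - M - 1)) :=
            Real.log_le_log hεpos (min_le_right _ _)
        _ = _ := Real.log_exp _
    have hgM : g q ≤ M := hqmin huK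
    linarith
  refine ⟨q, fun y => lt_of_lt_of_le hεpos (hqK.1 y), hqK.2, ?_⟩
  classical
  have hqpos : ∀ y, 0 < q y := fun y => lt_of_lt_of_le hεpos (hqK.1 y)
  set Sx : X → ℝ := fun x => ∑ y, pYX x y ^ α * q y ^ (1-α) with hSx
  have hSpos : ∀ x, 0 < Sx x := fun x =>
    Finset.sum_pos (fun y _ => mul_pos (Real.rpow_pos_of_pos (hpYXpos x y) _)
      (Real.rpow_pos_of_pos (hqpos y) _)) Finset.univ_nonempty
  set A : X → Y → ℝ := fun x y => pYX x y ^ α * q y ^ (-α) with hA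
  set φ : Y → ℝ := fun y => ∑ x, pX x * (A x y / Sx x) with hφ
  -- derivative step : φ is constant
  have hφconst : ∀ y1 y2, φ y1 = φ y2 := by
    intro y1 y2
    rcases eq_or_ne y1 y2 with rfl | hne
    · rfl
    set d : Y → ℝ := fun y => (if y = y1 then (1:ℝ) else 0) - (if y = y2 then 1 else 0)
      with hd
    have hd1 : d y1 = 1 := by simp [hd, hne]
    have hd2 : d y2 = -1 := by simp [hd, hne.symm]
    have hdsum : ∑ y, d y = 0 := by
      simp [hd, Finset.sum_sub_distrib]
    set δ : ℝ := min (q y1 - ε) (q y2 - ε) with hδ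
    have hδpos : 0 < δ := lt_min (by linarith [hqint y1]) (by linarith [hqint y2])
    set h : ℝ → ℝ := fun t => ∑ x, pX x * ((α-1)⁻¹ *
        Real.log (∑ y, pYX x y ^ α * (q y + d y * t) ^ (1-α))) with hh
    have hmem : ∀ t ∈ Metric.ball (0:ℝ) δ,
        (fun y => q y + d y * t) ∈ {q : Y → ℝ | (∀ y, ε ≤ q y) ∧ ∑ y, q y = 1} := by
      intro t ht
      rw [Metric.mem_ball, Real.dist_eq, sub_zero] at ht
      have habs := abs_lt.mp ht
      constructor
      · intro y
        show ε ≤ q y + d y * t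
        rcases eq_or_ne y y1 with rfl | h1
        · rw [hd1, one_mul]
          have : δ ≤ q y - ε := min_le_left _ _
          linarith
        rcases eq_or_ne y y2 with rfl | h2
        · rw [hd2]
          have : δ ≤ q y - ε := min_le_right _ _
          linarith
        · have : d y = 0 := by simp [hd, h1, h2]
          rw [this, zero_mul, add_zero]
          exact hqK.1 y
      · rw [Finset.sum_add_distrib, hqK.2, ← Finset.sum_mul, hdsum, zero_mul, add_zero]
    have hpos0 : ∀ y, q y + d y * 0 ≠ 0 := by
      intro y; rw [mul_zero, add_zero]; exact (hqpos y).ne'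
    -- local min
    have hloc : IsLocalMin h 0 := by
      have h0 : h 0 = ∑ x, pX x * ((α-1)⁻¹ *
          Real.log (∑ y, pYX x y ^ α * q y ^ (1-α))) := by
        simp [hh]
      apply Filter.eventually_of_mem (Metric.ball_mem_nhds (0:ℝ) hδpos)
      intro t ht
      have := hqmin (hmem t ht)
      simpa [hh, h0] using this
    -- derivative
    have hterm : ∀ x y, HasDerivAt (fun t => pYX x y ^ α * (q y + d y * t) ^ (1-α))
        (pYX x y ^ α * (d y * (1-α) * q y ^ (1-α-1))) 0 := by
      intro x y
      have hbase : HasDerivAt (fun t => q y + d y * t) (d y) 0 := by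
        simpa using ((hasDerivAt_id (0:ℝ)).const_mul (d y)).const_add (q y)
      have h1 := hbase.rpow_const (p := 1-α) (Or.inl (hpos0 y))
      have h2 := h1.const_mul (pYX x y ^ α)
      rw [mul_zero, add_zero] at h2
      exact h2
    have hSder : ∀ x, HasDerivAt (fun t => ∑ y, pYX x y ^ α * (q y + d y * t) ^ (1-α))
        (∑ y, pYX x y ^ α * (d y * (1-α) * q y ^ (1-α-1))) 0 :=
      fun x => HasDerivAt.fun_sum (fun y _ => hterm x y)
    have hS0 : ∀ x, (∑ y, pYX x y ^ α * (q y + d y * 0) ^ (1-α)) = Sx x := by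
      intro x; simp [hSx]
    have hlogder : ∀ x, HasDerivAt (fun t => pX x * ((α-1)⁻¹ *
        Real.log (∑ y, pYX x y ^ α * (q y + d y * t) ^ (1-α))))
        (pX x * ((α-1)⁻¹ * ((∑ y, pYX x y ^ α * (d y * (1-α) * q y ^ (1-α-1))) / Sx x))) 0 := by
      intro x
      have h1 := (hSder x).log (by rw [hS0 x]; exact (hSpos x).ne')
      rw [hS0 x] at h1
      exact (h1.const_mul ((α-1)⁻¹)).const_mul (pX x)
    have hder : HasDerivAt h (∑ x, pX x * ((α-1)⁻¹ *
        ((∑ y, pYX x y ^ α * (d y * (1-α) * q y ^ (1-α-1))) / Sx x))) 0 :=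
      HasDerivAt.fun_sum (fun x _ => hlogder x)
    have hzero := hloc.hasDerivAt_eq_zero hder
    -- simplify inner sums
    have hinner : ∀ x, (∑ y, pYX x y ^ α * (d y * (1-α) * q y ^ (1-α-1)))
        = (1-α) * (A x y1 - A x y2) := by
      intro x
      have : ∀ y, pYX x y ^ α * (d y * (1-α) * q y ^ (1-α-1))
          = (1-α) * (d y * A x y) := by
        intro y
        rw [show (1:ℝ) - α - 1 = -α by ring, hA]
        ring
      rw [Finset.sum_congr rfl (fun y _ => this y), ← Finset.mul_sum]
      congr 1
      have : ∀ y, d y * A x y = (if y = y1 then A x y else 0) - (if y = y2 then A x y else 0) := by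
        intro y
        by_cases h1 : y = y1
        · subst h1
          simp [hd, hne, Ne.symm hne]
        · by_cases h2 : y = y2
          · subst h2
            simp [hd, h1]
          · simp [hd, h1, h2]
      rw [Finset.sum_congr rfl (fun y _ => this y), Finset.sum_sub_distrib,
        Finset.sum_ite_eq' Finset.univ y1 (A x), Finset.sum_ite_eq' Finset.univ y2 (A x)]
      simp
    rw [Finset.sum_congr rfl (fun x _ => by rw [hinner x])] at hzero
    -- conclude φ y1 = φ y2
    have hα1 : α - 1 ≠ 0 := by linarith
    have : φ y1 - φ y2 = -(∑ x, pX x * ((α-1)⁻¹ * ((1-α) * (A x y1 - A x y2) / Sx x))) := by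
      rw [hφ, ← Finset.sum_sub_distrib, ← Finset.sum_neg_distrib]
      refine Finset.sum_congr rfl (fun x _ => ?_)
      have hco : (α-1)⁻¹ * (1-α) = -1 := by field_simp; ring
      calc pX x * (A x y1 / Sx x) - pX x * (A x y2 / Sx x)
          = -((α-1)⁻¹ * (1-α)) * (pX x * ((A x y1 - A x y2) / Sx x)) := by
            rw [hco]; ring
        _ = -(pX x * ((α-1)⁻¹ * ((1-α) * (A x y1 - A x y2) / Sx x))) := by ring
    rw [hzero, neg_zero] at this
    linarith [this]
  -- φ y = 1 for all y
  have hqA : ∀ x y, q y * A x y = pYX x y ^ α * q y ^ (1-α) := by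
    intro x y
    rw [hA]
    have : q y ^ (1-α) = q y * q y ^ (-α) := by
      rw [show (1:ℝ) - α = 1 + -α by ring, Real.rpow_add (hqpos y), Real.rpow_one]
    rw [this]; ring
  have hsumφ : ∑ y, q y * φ y = 1 := by
    simp only [hφ]
    have : ∀ y, q y * ∑ x, pX x * (A x y / Sx x) = ∑ x, pX x * (q y * A x y / Sx x) := by
      intro y
      rw [Finset.mul_sum]
      exact Finset.sum_congr rfl (fun x _ => by ring)
    rw [Finset.sum_congr rfl (fun y _ => this y), Finset.sum_comm]
    have : ∀ x, ∑ y, pX x * (q y * A x y / Sx x) = pX x := by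
      intro x
      rw [← Finset.mul_sum]
      have : ∑ y, q y * A x y / Sx x = 1 := by
        rw [← Finset.sum_div]
        rw [Finset.sum_congr rfl (fun y _ => by rw [hqA x y])]
        exact div_self (hSpos x).ne'
      rw [this, mul_one]
    rw [Finset.sum_congr rfl (fun x _ => this x), hpX.2]
  have hφ1 : ∀ y, φ y = 1 := by
    intro y
    have : ∑ y', q y' * φ y' = ∑ y', q y' * φ y := by
      exact Finset.sum_congr rfl (fun y' _ => by rw [hφconst y' y])
    rw [hsumφ, ← Finset.sum_mul, hqK.2, one_mul] at this
    exact this.symm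
  -- conclusion
  intro y
  have : ∀ x, pX x * (pYX x y ^ α * q y ^ (1-α) / Sx x) = q y * (pX x * (A x y / Sx x)) := by
    intro x
    rw [← hqA x y]
    ring
  rw [Finset.sum_congr rfl (fun x _ => this x), ← Finset.mul_sum]
  have hφy : φ y = ∑ x, pX x * (A x y / Sx x) := rfl
  rw [← hφy, hφ1 y, mul_one]
private lemma acmi_klD_eq {X Y : Type*} [Fintype X] [Fintype Y]
    (pX : X → ℝ) (hpX0 : ∀ x, pX x ≠ 0) (pYX qt : X → Y → ℝ) :
    klD (fun z : X × Y => pX z.1 * qt z.1 z.2) (fun z : X × Y => pX z.1 * pYX z.1 z.2)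
    = ∑ x, pX x * ∑ y, qt x y * Real.log (qt x y / pYX x y) := by
  rw [klD, Fintype.sum_prod_type]
  refine Finset.sum_congr rfl (fun x _ => ?_)
  rw [Finset.mul_sum]
  refine Finset.sum_congr rfl (fun y _ => ?_)
  rw [mul_div_mul_left _ _ (hpX0 x)]
  ring

private lemma acmi_FC_le {X Y : Type*} [Fintype X] [Fintype Y] [Nonempty X] [Nonempty Y]
    (α : ℝ) (hα : 1 < α)
    (pX : X → ℝ) (hpXsum : ∑ x, pX x = 1) (hpXpos : ∀ x, 0 < pX x)
    (pYX : X → Y → ℝ) (hpYXpos : ∀ x y, 0 < pYX x y)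
    (s : Y → ℝ) (hspos : ∀ y, 0 < s y) (hssum : ∑ y, s y = 1)
    (qt : X → Y → ℝ) (hqtnn : ∀ x y, 0 ≤ qt x y) (hqtsum : ∀ x, ∑ y, qt x y = 1)
    (r : Y → X → ℝ) (hrpos : ∀ y x, 0 < r y x) (hrsum : ∀ y, ∑ x, r y x = 1) :
    (α / (1 - α)) * klD (fun z : X × Y => pX z.1 * qt z.1 z.2)
        (fun z : X × Y => pX z.1 * pYX z.1 z.2)
      + ∑ x, ∑ y, pX x * qt x y * Real.log (r y x / pX x)
    ≤ ∑ x, pX x * ((α-1)⁻¹ * Real.log (∑ y, pYX x y ^ α * s y ^ (1-α))) := by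
  have hα1 : α - 1 ≠ 0 := by linarith
  have h1α : (1:ℝ) - α ≠ 0 := by linarith
  have hcoef : α / (1 - α) = -(α / (α - 1)) := by field_simp; ring
  rw [acmi_klD_eq pX (fun x => (hpXpos x).ne') pYX qt]
  -- split the second double sum
  have hsplit : ∀ x y, pX x * qt x y * Real.log (r y x / pX x)
      = pX x * qt x y * Real.log ((r y x * s y) / (pX x * qt x y))
        + pX x * qt x y * Real.log (qt x y / s y) := by
    intro x y
    rcases eq_or_lt_of_le (hqtnn x y) with h | h
    · simp [← h]
    · rw [Real.log_div (hrpos y x).ne' (hpXpos x).ne',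
        Real.log_div (mul_pos (hrpos y x) (hspos y)).ne'
          (mul_pos (hpXpos x) h).ne',
        Real.log_mul (hrpos y x).ne' (hspos y).ne',
        Real.log_mul (hpXpos x).ne' h.ne',
        Real.log_div h.ne' (hspos y).ne']
      ring
  have hT1 : ∑ x, ∑ y, pX x * qt x y * Real.log ((r y x * s y) / (pX x * qt x y)) ≤ 0 := by
    have := acmi_gibbs (Z := X × Y) (fun z => pX z.1 * qt z.1 z.2)
      (fun z => r z.2 z.1 * s z.2)
      (fun z => mul_nonneg (hpXpos z.1).le (hqtnn z.1 z.2))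
      (fun z => mul_pos (hrpos z.2 z.1) (hspos z.2))
      (by
        rw [Fintype.sum_prod_type_right]
        have : ∀ y, ∑ x, r y x * s y = s y := by
          intro y; rw [← Finset.sum_mul, hrsum y, one_mul]
        rw [Finset.sum_congr rfl (fun y _ => this y), hssum])
      (by
        rw [Fintype.sum_prod_type]
        have : ∀ x, ∑ y, pX x * qt x y = pX x := by
          intro x; rw [← Finset.mul_sum, hqtsum x, mul_one]
        rw [Finset.sum_congr rfl (fun x _ => this x), hpXsum])
    rw [Fintype.sum_prod_type] at this
    exact this
  have hT2 : ∀ x, ∑ y, pX x * qt x y * Real.log (qt x y / s y)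
      = pX x * ∑ y, qt x y * Real.log (qt x y / s y) := by
    intro x
    rw [Finset.mul_sum]
    exact Finset.sum_congr rfl (fun y _ => by ring)
  have hkey : ∀ x, pX x * (∑ y, qt x y * Real.log (qt x y / s y))
        + (α / (1 - α)) * (pX x * ∑ y, qt x y * Real.log (qt x y / pYX x y))
      ≤ pX x * ((α-1)⁻¹ * Real.log (∑ y, pYX x y ^ α * s y ^ (1-α))) := by
    intro x
    have h := acmi_key_le α hα (pYX x) s (qt x) (hpYXpos x) hspos (hqtnn x) (hqtsum x)
    calc pX x * (∑ y, qt x y * Real.log (qt x y / s y))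
          + (α / (1 - α)) * (pX x * ∑ y, qt x y * Real.log (qt x y / pYX x y))
        = pX x * ((∑ y, qt x y * Real.log (qt x y / s y))
            - (α/(α-1)) * ∑ y, qt x y * Real.log (qt x y / pYX x y)) := by
          rw [hcoef]; ring
      _ ≤ _ := mul_le_mul_of_nonneg_left h (hpXpos x).le
  calc (α / (1 - α)) * ∑ x, pX x * ∑ y, qt x y * Real.log (qt x y / pYX x y)
        + ∑ x, ∑ y, pX x * qt x y * Real.log (r y x / pX x)
      = (∑ x, ∑ y, pX x * qt x y * Real.log ((r y x * s y) / (pX x * qt x y)))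
        + ∑ x, (pX x * (∑ y, qt x y * Real.log (qt x y / s y))
          + (α / (1 - α)) * (pX x * ∑ y, qt x y * Real.log (qt x y / pYX x y))) := by
        rw [Finset.sum_congr rfl (fun x _ => Finset.sum_congr rfl (fun y _ => hsplit x y)),
          Finset.sum_congr rfl (fun x _ => Finset.sum_add_distrib)]
        rw [Finset.sum_add_distrib, Finset.sum_add_distrib, Finset.mul_sum]
        rw [Finset.sum_congr rfl (fun x _ => hT2 x)]
        ring
    _ ≤ 0 + ∑ x, pX x * ((α-1)⁻¹ * Real.log (∑ y, pYX x y ^ α * s y ^ (1-α))) :=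
        add_le_add hT1 (Finset.sum_le_sum (fun x _ => hkey x))
    _ = _ := by rw [zero_add]

private lemma acmi_FC_eq {X Y : Type*} [Fintype X] [Fintype Y] [Nonempty X] [Nonempty Y]
    (α : ℝ) (hα : 1 < α)
    (pX : X → ℝ) (hpXpos : ∀ x, 0 < pX x)
    (pYX : X → Y → ℝ) (hpYXpos : ∀ x y, 0 < pYX x y)
    (qs : Y → ℝ) (hqspos : ∀ y, 0 < qs y)
    (W : X → Y → ℝ)
    (hW : ∀ x y, W x y = pYX x y ^ α * qs y ^ (1-α) / (∑ y', pYX x y' ^ α * qs y' ^ (1-α)))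
    (R : Y → X → ℝ) (hR : ∀ y x, R y x = pX x * W x y / qs y) :
    (α / (1 - α)) * klD (fun z : X × Y => pX z.1 * W z.1 z.2)
        (fun z : X × Y => pX z.1 * pYX z.1 z.2)
      + ∑ x, ∑ y, pX x * W x y * Real.log (R y x / pX x)
    = ∑ x, pX x * ((α-1)⁻¹ * Real.log (∑ y, pYX x y ^ α * qs y ^ (1-α))) := by
  have hα1 : α - 1 ≠ 0 := by linarith
  have h1α : (1:ℝ) - α ≠ 0 := by linarith
  have hcoef : α / (1 - α) = -(α / (α - 1)) := by field_simp; ring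
  rw [acmi_klD_eq pX (fun x => (hpXpos x).ne') pYX W]
  have hlogR : ∀ x y, Real.log (R y x / pX x) = Real.log (W x y / qs y) := by
    intro x y
    congr 1
    rw [hR]
    field_simp [(hpXpos x).ne', (hqspos y).ne']
  have hT2 : ∀ x, ∑ y, pX x * W x y * Real.log (R y x / pX x)
      = pX x * ∑ y, W x y * Real.log (W x y / qs y) := by
    intro x
    rw [Finset.mul_sum]
    refine Finset.sum_congr rfl (fun y _ => ?_)
    rw [hlogR x y]; ring
  rw [Finset.sum_congr rfl (fun x _ => hT2 x)]
  have hkeyx : ∀ x, pX x * (∑ y, W x y * Real.log (W x y / qs y))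
        + (α / (1 - α)) * (pX x * ∑ y, W x y * Real.log (W x y / pYX x y))
      = pX x * ((α-1)⁻¹ * Real.log (∑ y, pYX x y ^ α * qs y ^ (1-α))) := by
    intro x
    have h := acmi_key_eq α hα (pYX x) qs (hpYXpos x) hqspos
    have hWx : W x = fun y => pYX x y ^ α * qs y ^ (1-α) /
        (∑ y', pYX x y' ^ α * qs y' ^ (1-α)) := funext (fun y => hW x y)
    rw [hWx]
    calc _ = pX x * ((∑ y, (pYX x y ^ α * qs y ^ (1-α) / (∑ y', pYX x y' ^ α * qs y' ^ (1-α))) *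
            Real.log ((pYX x y ^ α * qs y ^ (1-α) / (∑ y', pYX x y' ^ α * qs y' ^ (1-α))) / qs y))
          - (α/(α-1)) * ∑ y, (pYX x y ^ α * qs y ^ (1-α) / (∑ y', pYX x y' ^ α * qs y' ^ (1-α))) *
            Real.log ((pYX x y ^ α * qs y ^ (1-α) / (∑ y', pYX x y' ^ α * qs y' ^ (1-α))) / pYX x y)) := by
          rw [hcoef]; ring
      _ = _ := by rw [h]
  calc (α / (1 - α)) * ∑ x, pX x * ∑ y, W x y * Real.log (W x y / pYX x y)
        + ∑ x, pX x * ∑ y, W x y * Real.log (W x y / qs y)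
      = ∑ x, (pX x * (∑ y, W x y * Real.log (W x y / qs y))
          + (α / (1 - α)) * (pX x * ∑ y, W x y * Real.log (W x y / pYX x y))) := by
        rw [Finset.sum_add_distrib, Finset.mul_sum]
        ring
    _ = _ := Finset.sum_congr rfl (fun x _ => hkeyx x)
/-- For `α > 1`, the Augustin--Csiszár mutual information of order `α` is the supremum,
over channels `q̃_{Y|X}` and strictly positive reverse channels `r_{X|Y}`, of
`F̃_α^C(q̃_{Y|X}, r) = (α/(1−α)) D(p_X q̃_{Y|X} ‖ p_X p_{Y|X})
  + Σ_{x,y} p_X(x) q̃_{Y|X}(y|x) log(r(x|y)/p_X(x))`, and the supremum is attained. -/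
theorem acMI_eq_sup_FC {X Y : Type*} [Fintype X] [Fintype Y] [Nonempty X] [Nonempty Y]
    (α : ℝ) (hα : 1 < α)
    (pX : X → ℝ) (hpX : IsPMF pX) (hpXpos : ∀ x, 0 < pX x)
    (pYX : X → Y → ℝ) (hpYX : ∀ x, IsPMF (pYX x)) (hpYXpos : ∀ x y, 0 < pYX x y) :
    IsGreatest
      {v : EReal | ∃ qt : X → Y → ℝ, (∀ x, IsPMF (qt x)) ∧
        ∃ r : Y → X → ℝ, (∀ y, IsPMF (r y)) ∧ (∀ y x, 0 < r y x) ∧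
        v = (((α / (1 - α)) *
                klD (fun z : X × Y => pX z.1 * qt z.1 z.2)
                    (fun z : X × Y => pX z.1 * pYX z.1 z.2)
              + ∑ x, ∑ y, pX x * qt x y * Real.log (r y x / pX x) : ℝ) : EReal)}
      (acMI α pX pYX) := by
  classical
  obtain ⟨hpXnn, hpXsum⟩ := hpX
  obtain ⟨qs, hqspos, hqssum, hfp⟩ :=
    acmi_exists_fp α hα pX ⟨hpXnn, hpXsum⟩ hpXpos pYX hpYXpos
  have hα1 : α - 1 ≠ 0 := by linarith
  have hSpos : ∀ x, 0 < ∑ y, pYX x y ^ α * qs y ^ (1-α) := fun x =>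
    acmi_tiltS_pos α (pYX x) qs (hpYXpos x) hqspos
  set W : X → Y → ℝ := fun x y =>
    pYX x y ^ α * qs y ^ (1-α) / (∑ y', pYX x y' ^ α * qs y' ^ (1-α)) with hWdef
  have hW : ∀ x y, W x y = pYX x y ^ α * qs y ^ (1-α) /
      (∑ y', pYX x y' ^ α * qs y' ^ (1-α)) := fun _ _ => rfl
  set R : Y → X → ℝ := fun y x => pX x * W x y / qs y with hRdef
  have hR : ∀ y x, R y x = pX x * W x y / qs y := fun _ _ => rfl
  have hWpos : ∀ x y, 0 < W x y := fun x y =>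
    div_pos (mul_pos (Real.rpow_pos_of_pos (hpYXpos x y) _)
      (Real.rpow_pos_of_pos (hqspos y) _)) (hSpos x)
  have hWsum : ∀ x, ∑ y, W x y = 1 := by
    intro x
    simp only [hWdef]
    rw [← Finset.sum_div]
    exact div_self (hSpos x).ne'
  have hRpos : ∀ y x, 0 < R y x := fun y x =>
    div_pos (mul_pos (hpXpos x) (hWpos x y)) (hqspos y)
  have hRsum : ∀ y, ∑ x, R y x = 1 := by
    intro y
    simp only [hRdef, hWdef]
    rw [← Finset.sum_div, hfp y]
    exact div_self (hqspos y).ne'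
  have hFeq := acmi_FC_eq α hα pX hpXpos pYX hpYXpos qs hqspos W hW R hR
  -- the value of any element of the inf-defining set at a positive pmf qY
  have helem : ∀ qY : Y → ℝ, (∀ y, 0 < qY y) →
      (∑ x, ((pX x : ℝ) : EReal) * renyiDE α (fun y => pYX x y) qY)
      = ((∑ x, pX x * ((α-1)⁻¹ * Real.log (∑ y, pYX x y ^ α * qY y ^ (1-α))) : ℝ) : EReal) := by
    intro qY hqYpos
    rw [acmi_coe_sum]
    refine Finset.sum_congr rfl (fun x _ => ?_)
    rw [renyiDE, if_neg (by
      rintro ⟨-, z, -, hz⟩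
      exact (hqYpos z).ne' hz)]
    rw [← EReal.coe_mul, one_div]
  -- acMI equals the coercion of the real value at qs
  have hACMI : acMI α pX pYX
      = ((∑ x, pX x * ((α-1)⁻¹ * Real.log (∑ y, pYX x y ^ α * qs y ^ (1-α))) : ℝ) : EReal) := by
    apply le_antisymm
    · apply sInf_le
      exact ⟨qs, ⟨fun y => (hqspos y).le, hqssum⟩, (helem qs hqspos).symm⟩
    · apply le_sInf
      rintro v ⟨qY, hqY, rfl⟩
      by_cases hz : ∃ y, qY y = 0
      · have htop : ∀ x ∈ Finset.univ, ((pX x : ℝ) : EReal) *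
            renyiDE α (fun y => pYX x y) qY = ⊤ := by
          intro x _
          obtain ⟨y0, hy0⟩ := hz
          rw [renyiDE, if_pos ⟨hα, y0, (hpYXpos x y0).ne', hy0⟩]
          exact EReal.coe_mul_top_of_pos (hpXpos x)
        rw [acmi_sum_eq_top _ Finset.univ_nonempty _ htop]
        exact le_top
      · push_neg at hz
        have hqYpos : ∀ y, 0 < qY y := fun y => (hqY.1 y).lt_of_ne' (hz y)
        rw [helem qY hqYpos, EReal.coe_le_coe_iff]
        calc ∑ x, pX x * ((α-1)⁻¹ * Real.log (∑ y, pYX x y ^ α * qs y ^ (1-α)))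
            = (α / (1 - α)) * klD (fun z : X × Y => pX z.1 * W z.1 z.2)
                (fun z : X × Y => pX z.1 * pYX z.1 z.2)
              + ∑ x, ∑ y, pX x * W x y * Real.log (R y x / pX x) := hFeq.symm
          _ ≤ _ := acmi_FC_le α hα pX hpXsum hpXpos pYX hpYXpos qY hqYpos hqY.2
              W (fun x y => (hWpos x y).le) hWsum R hRpos hRsum
  constructor
  · refine ⟨W, fun x => ⟨fun y => (hWpos x y).le, hWsum x⟩,
      R, fun y => ⟨fun x => (hRpos y x).le, hRsum y⟩, hRpos, ?_⟩
    rw [hACMI, hFeq]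
  · rintro v ⟨qt, hqt, r, hr, hrpos, rfl⟩
    rw [hACMI, EReal.coe_le_coe_iff]
    exact acmi_FC_le α hα pX hpXsum hpXpos pYX hpYXpos qs hqspos hqssum
      qt (fun x y => (hqt x).1 y) (fun x => (hqt x).2) r hrpos (fun y => (hr y).2)
end

section
/- Let α ∈ (0,1), let p_X be a strictly positive probability distribution on 𝒳 and p_{Y|X} a channel with p_{Y|X}(y|x) > 0 for all x, y. Then the Lapidoth–Pfister mutual information of order α satisfies I_α^{LP} = inf over strictly positive probability distributions q̃_{X,Y} on 𝒳×𝒴 and strictly positive probability distributions q_Y on 𝒴 of F_α^{LP}(q̃_{X,Y}, q_Y) := (α/(1−α)) D(q̃_{X,Y} ‖ q̃_X p_{Y|X}) + D(q̃_{X,Y} ‖ q̃_X q_Y) + (α/(1−α)) D(q̃_X ‖ p_X), where q̃_X(x) := Σ_y q̃_{X,Y}(x,y) and (q̃_X q_Y)(x,y) := q̃_X(x) q_Y(y), and the infimum is attained. -/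
lemma gibbs {Z : Type*} [Fintype Z] {r s : Z → ℝ} (hr : IsPMF r) (hs : IsPMF s)
    (hrp : ∀ z, 0 < r z) (hsp : ∀ z, 0 < s z) : 0 ≤ klD r s := by
  have key : ∑ z, r z * Real.log (s z / r z) ≤ 0 := by
    have h1 : ∀ z, r z * Real.log (s z / r z) ≤ s z - r z := by
      intro z
      have := Real.log_le_sub_one_of_pos (div_pos (hsp z) (hrp z))
      have h2 : r z * Real.log (s z / r z) ≤ r z * (s z / r z - 1) :=
        mul_le_mul_of_nonneg_left this (le_of_lt (hrp z))
      calc r z * Real.log (s z / r z) ≤ r z * (s z / r z - 1) := h2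
        _ = s z - r z := by
            have h3 : r z ≠ 0 := ne_of_gt (hrp z)
            field_simp
    calc ∑ z, r z * Real.log (s z / r z) ≤ ∑ z, (s z - r z) := Finset.sum_le_sum (fun z _ => h1 z)
      _ = 0 := by rw [Finset.sum_sub_distrib, hr.2, hs.2]; ring
  have : klD r s = -∑ z, r z * Real.log (s z / r z) := by
    rw [klD, ← Finset.sum_neg_distrib]
    refine Finset.sum_congr rfl fun z _ => ?_
    rw [show s z / r z = (r z / s z)⁻¹ by rw [inv_div], Real.log_inv]
    ring
  linarith [this ▸ neg_nonneg.mpr key]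

lemma klD_self {Z : Type*} [Fintype Z] (s : Z → ℝ) (hs : ∀ z, 0 < s z) : klD s s = 0 := by
  rw [klD]
  refine Finset.sum_eq_zero fun z _ => ?_
  rw [div_self (ne_of_gt (hs z)), Real.log_one, mul_zero]

lemma tilt_identity {Z : Type*} [Fintype Z] {α : ℝ} (hα0 : 0 < α) (hα1 : α < 1)
    (p q r : Z → ℝ) (hp : ∀ z, 0 < p z) (hq : ∀ z, 0 < q z)
    (hr : IsPMF r) (hZ : 0 < ∑ z, p z ^ α * q z ^ (1 - α)) :
    α * klD r p + (1 - α) * klD r q =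
      klD r (fun z => p z ^ α * q z ^ (1 - α) / (∑ z, p z ^ α * q z ^ (1 - α)))
        - Real.log (∑ z, p z ^ α * q z ^ (1 - α)) := by
  set Z0 : ℝ := ∑ z, p z ^ α * q z ^ (1 - α) with hZ0
  have hconf : klD r (fun z => p z ^ α * q z ^ (1 - α) / Z0)
      = α * klD r p + (1 - α) * klD r q + (∑ z, r z) * Real.log Z0 := by
    rw [klD, klD, klD, Finset.mul_sum, Finset.mul_sum, Finset.sum_mul, ← Finset.sum_add_distrib,
      ← Finset.sum_add_distrib]
    refine Finset.sum_congr rfl fun z _ => ?_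
    rcases eq_or_lt_of_le (hr.1 z) with h0 | hrz
    · simp [← h0]
    have hpz := hp z; have hqz := hq z
    have hppow : (0:ℝ) < p z ^ α := Real.rpow_pos_of_pos hpz _
    have hqpow : (0:ℝ) < q z ^ (1 - α) := Real.rpow_pos_of_pos hqz _
    rw [Real.log_div (ne_of_gt hrz) (ne_of_gt (div_pos (mul_pos hppow hqpow) hZ)),
        Real.log_div (ne_of_gt (mul_pos hppow hqpow)) (ne_of_gt hZ),
        Real.log_mul (ne_of_gt hppow) (ne_of_gt hqpow),
        Real.log_rpow hpz, Real.log_rpow hqz,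
        Real.log_div (ne_of_gt hrz) (ne_of_gt hpz),
        Real.log_div (ne_of_gt hrz) (ne_of_gt hqz)]
    ring
  rw [hconf, hr.2]; ring

lemma holder_core {ι : Type*} [Fintype ι] [Nonempty ι] {α : ℝ} (hα0 : 0 < α) (hα1 : α < 1)
    (A : ι → ℝ) (hA : ∀ i, 0 < A i) :
    ∃ u0 : ι → ℝ, IsPMF u0 ∧ (∀ i, 0 < u0 i) ∧
      ∀ u : ι → ℝ, IsPMF u →
        ∑ i, (u i) ^ (1 - α) * A i ≤ ∑ i, (u0 i) ^ (1 - α) * A i := by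
  set w : ι → ℝ := fun i => (A i) ^ (1 / α) with hw
  have hwpos : ∀ i, 0 < w i := fun i => Real.rpow_pos_of_pos (hA i) _
  set W : ℝ := ∑ i, w i with hW
  have hWpos : 0 < W := Finset.sum_pos (fun i _ => hwpos i) Finset.univ_nonempty
  have hwA : ∀ i, (w i) ^ α = A i := by
    intro i
    simp only [hw]
    rw [← Real.rpow_mul (le_of_lt (hA i)), one_div, inv_mul_cancel₀ (ne_of_gt hα0),
      Real.rpow_one]
  refine ⟨fun i => w i / W, ⟨fun i => le_of_lt (div_pos (hwpos i) hWpos), by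
      rw [← Finset.sum_div, ← hW, div_self (ne_of_gt hWpos)]⟩,
    fun i => div_pos (hwpos i) hWpos, fun u hu => ?_⟩
  have hval : ∑ i, (w i / W) ^ (1 - α) * A i = W ^ α := by
    have : ∀ i, (w i / W) ^ (1 - α) * A i = w i / W ^ (1 - α) := by
      intro i
      rw [← hwA i, Real.div_rpow (le_of_lt (hwpos i)) (le_of_lt hWpos), div_mul_eq_mul_div,
        ← Real.rpow_add (hwpos i)]
      norm_num
    rw [Finset.sum_congr rfl fun i _ => this i, ← Finset.sum_div, ← hW,
      div_eq_iff (ne_of_gt (Real.rpow_pos_of_pos hWpos _)), ← Real.rpow_add hWpos]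
    norm_num
  rw [hval]
  have hbound : ∀ i, (u i) ^ (1 - α) * A i ≤ W ^ α * ((1 - α) * u i + α * (w i / W)) := by
    intro i
    have hAi : A i = (w i / W) ^ α * W ^ α := by
      rw [← Real.mul_rpow (le_of_lt (div_pos (hwpos i) hWpos)) (le_of_lt hWpos),
        div_mul_cancel₀ _ (ne_of_gt hWpos), hwA i]
    have hgm := Real.geom_mean_le_arith_mean2_weighted (by linarith : (0:ℝ) ≤ 1 - α)
      (le_of_lt hα0) (hu.1 i) (le_of_lt (div_pos (hwpos i) hWpos)) (by ring)
    calc (u i) ^ (1 - α) * A i = ((u i) ^ (1 - α) * (w i / W) ^ α) * W ^ α := by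
          rw [hAi]; ring
      _ ≤ ((1 - α) * u i + α * (w i / W)) * W ^ α :=
          mul_le_mul_of_nonneg_right hgm (le_of_lt (Real.rpow_pos_of_pos hWpos _))
      _ = W ^ α * ((1 - α) * u i + α * (w i / W)) := by ring
  calc ∑ i, (u i) ^ (1 - α) * A i ≤ ∑ i, W ^ α * ((1 - α) * u i + α * (w i / W)) :=
        Finset.sum_le_sum fun i _ => hbound i
    _ = W ^ α := by
        rw [← Finset.mul_sum, Finset.sum_add_distrib, ← Finset.mul_sum, ← Finset.mul_sum,
          hu.2, ← Finset.sum_div, ← hW, div_self (ne_of_gt hWpos)]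
        ring

lemma chain_rule {X Y : Type*} [Fintype X] [Fintype Y] [Nonempty Y]
    (qt : X × Y → ℝ) (hqt : ∀ z, 0 < qt z)
    (pX : X → ℝ) (hpX : ∀ x, 0 < pX x)
    (pYX : X → Y → ℝ) (hpYX : ∀ x y, 0 < pYX x y) :
    klD qt (fun z : X × Y => (∑ y, qt (z.1, y)) * pYX z.1 z.2)
      + klD (fun x => ∑ y, qt (x, y)) pX
    = klD qt (fun z : X × Y => pX z.1 * pYX z.1 z.2) := by
  have hM : ∀ x, 0 < ∑ y, qt (x, y) :=
    fun x => Finset.sum_pos (fun y _ => hqt (x, y)) Finset.univ_nonempty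
  have h2 : klD (fun x => ∑ y, qt (x, y)) pX
      = ∑ z : X × Y, qt z * Real.log ((∑ y, qt (z.1, y)) / pX z.1) := by
    rw [klD, Fintype.sum_prod_type]
    refine Finset.sum_congr rfl fun x _ => ?_
    rw [Finset.sum_mul]
  rw [h2, klD, klD, ← Finset.sum_add_distrib]
  refine Finset.sum_congr rfl fun z _ => ?_
  have hq := hqt z; have hMz := hM z.1; have hp := hpX z.1; have hc := hpYX z.1 z.2
  rw [Real.log_div (ne_of_gt hq) (ne_of_gt (mul_pos hMz hc)),
    Real.log_div (ne_of_gt hMz) (ne_of_gt hp),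
    Real.log_div (ne_of_gt hq) (ne_of_gt (mul_pos hp hc)),
    Real.log_mul (ne_of_gt hMz) (ne_of_gt hc), Real.log_mul (ne_of_gt hp) (ne_of_gt hc)]
  ring

lemma marginal_split {X Y : Type*} [Fintype X] [Fintype Y] [Nonempty Y]
    (qt : X × Y → ℝ) (hqt : ∀ z, 0 < qt z)
    (qX : X → ℝ) (hqX : ∀ x, 0 < qX x)
    (qY : Y → ℝ) (hqY : ∀ y, 0 < qY y) :
    klD qt (fun z : X × Y => qX z.1 * qY z.2)
    = klD qt (fun z : X × Y => (∑ y, qt (z.1, y)) * qY z.2)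
      + klD (fun x => ∑ y, qt (x, y)) qX := by
  have hM : ∀ x, 0 < ∑ y, qt (x, y) :=
    fun x => Finset.sum_pos (fun y _ => hqt (x, y)) Finset.univ_nonempty
  have h2 : klD (fun x => ∑ y, qt (x, y)) qX
      = ∑ z : X × Y, qt z * Real.log ((∑ y, qt (z.1, y)) / qX z.1) := by
    rw [klD, Fintype.sum_prod_type]
    refine Finset.sum_congr rfl fun x _ => ?_
    rw [Finset.sum_mul]
  rw [h2, klD, klD, ← Finset.sum_add_distrib]
  refine Finset.sum_congr rfl fun z _ => ?_
  have hq := hqt z; have hMz := hM z.1; have hx := hqX z.1; have hy := hqY z.2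
  rw [Real.log_div (ne_of_gt hq) (ne_of_gt (mul_pos hx hy)),
    Real.log_div (ne_of_gt hq) (ne_of_gt (mul_pos hMz hy)),
    Real.log_div (ne_of_gt hMz) (ne_of_gt hx),
    Real.log_mul (ne_of_gt hMz) (ne_of_gt hy), Real.log_mul (ne_of_gt hx) (ne_of_gt hy)]
  ring

/-- Lapidoth--Pfister mutual information of order `α`:
the minimum over product distributions `q_X q_Y` of `D_α(p_X p_{Y|X} ‖ q_X q_Y)`. -/
noncomputable def lpMI {X Y : Type*} [Fintype X] [Fintype Y]
    (α : ℝ) (pX : X → ℝ) (pYX : X → Y → ℝ) : EReal :=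
  sInf {v : EReal | ∃ qX : X → ℝ, ∃ qY : Y → ℝ, IsPMF qX ∧ IsPMF qY ∧
    v = renyiDE α (fun z : X × Y => pX z.1 * pYX z.1 z.2)
          (fun z : X × Y => qX z.1 * qY z.2)}

/-- For `α ∈ (0,1)`, the Lapidoth--Pfister mutual information of order `α` is the infimum,
over strictly positive joint distributions `q̃_{X,Y}` and strictly positive output
distributions `q_Y`, of
`F_α^{LP}(q̃_{X,Y}, q_Y) = (α/(1−α)) D(q̃_{X,Y} ‖ q̃_X p_{Y|X}) + D(q̃_{X,Y} ‖ q̃_X q_Y)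
  + (α/(1−α)) D(q̃_X ‖ p_X)`, and the infimum is attained. -/
theorem lpMI_eq_inf_FLP {X Y : Type*} [Fintype X] [Fintype Y] [Nonempty X] [Nonempty Y]
    (α : ℝ) (hα : 0 < α ∧ α < 1)
    (pX : X → ℝ) (hpX : IsPMF pX) (hpXpos : ∀ x, 0 < pX x)
    (pYX : X → Y → ℝ) (hpYX : ∀ x, IsPMF (pYX x)) (hpYXpos : ∀ x y, 0 < pYX x y) :
    IsLeast
      {v : EReal | ∃ qt : X × Y → ℝ, IsPMF qt ∧ (∀ z, 0 < qt z) ∧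
        ∃ qY : Y → ℝ, IsPMF qY ∧ (∀ y, 0 < qY y) ∧
        v = (((α / (1 - α)) *
                klD qt (fun z : X × Y => (∑ y, qt (z.1, y)) * pYX z.1 z.2)
              + klD qt (fun z : X × Y => (∑ y, qt (z.1, y)) * qY z.2)
              + (α / (1 - α)) * klD (fun x => ∑ y, qt (x, y)) pX : ℝ) : EReal)}
      (lpMI α pX pYX) := by
  obtain ⟨hα0, hα1⟩ := hα
  have hβ : (0:ℝ) < 1 - α := by linarith
  have hαm : α - 1 < 0 := by linarith
  set P : X × Y → ℝ := fun z => pX z.1 * pYX z.1 z.2 with hPdef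
  have hP : ∀ z, 0 < P z := fun z => mul_pos (hpXpos z.1) (hpYXpos z.1 z.2)
  set G : (X → ℝ) → (Y → ℝ) → ℝ :=
    fun u v => ∑ z : X × Y, P z ^ α * (u z.1 * v z.2) ^ (1 - α) with hGdef
  have hGpos : ∀ u v, IsPMF u → IsPMF v → 0 < G u v := by
    intro u v hu hv
    obtain ⟨x1, -, hx1⟩ := Finset.exists_ne_zero_of_sum_ne_zero
      (by rw [hu.2]; exact one_ne_zero : ∑ x, u x ≠ 0)
    obtain ⟨y1, -, hy1⟩ := Finset.exists_ne_zero_of_sum_ne_zero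
      (by rw [hv.2]; exact one_ne_zero : ∑ y, v y ≠ 0)
    refine Finset.sum_pos' (fun z _ => mul_nonneg (Real.rpow_nonneg (hP z).le _)
      (Real.rpow_nonneg (mul_nonneg (hu.1 _) (hv.1 _)) _)) ⟨(x1, y1), Finset.mem_univ _, ?_⟩
    exact mul_pos (Real.rpow_pos_of_pos (hP _) _)
      (Real.rpow_pos_of_pos (mul_pos ((hu.1 x1).lt_of_ne (Ne.symm hx1))
        ((hv.1 y1).lt_of_ne (Ne.symm hy1))) _)
  -- continuity and compactness: existence of a maximizer of G
  have hcont : Continuous (fun pq : (X → ℝ) × (Y → ℝ) => G pq.1 pq.2) := by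
    apply continuous_finset_sum
    intro z _
    have h1 : Continuous fun pq : (X → ℝ) × (Y → ℝ) => pq.1 z.1 * pq.2 z.2 :=
      ((continuous_apply z.1).comp continuous_fst).mul
        ((continuous_apply z.2).comp continuous_snd)
    exact continuous_const.mul (h1.rpow_const fun x => Or.inr hβ.le)
  have hK : IsCompact ((stdSimplex ℝ X) ×ˢ (stdSimplex ℝ Y)) :=
    (isCompact_stdSimplex (ι := X) (𝕜 := ℝ)).prod (isCompact_stdSimplex (ι := Y) (𝕜 := ℝ))
  have hKne : ((stdSimplex ℝ X) ×ˢ (stdSimplex ℝ Y)).Nonempty := by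
    refine ⟨(fun _ => (Fintype.card X : ℝ)⁻¹, fun _ => (Fintype.card Y : ℝ)⁻¹),
      ⟨fun _ => inv_nonneg.2 (Nat.cast_nonneg _), ?_⟩,
      ⟨fun _ => inv_nonneg.2 (Nat.cast_nonneg _), ?_⟩⟩
    · rw [Finset.sum_const, Finset.card_univ, nsmul_eq_mul, mul_inv_cancel₀]
      exact_mod_cast Fintype.card_ne_zero
    · rw [Finset.sum_const, Finset.card_univ, nsmul_eq_mul, mul_inv_cancel₀]
      exact_mod_cast Fintype.card_ne_zero
  obtain ⟨⟨uu, vv⟩, hmem, hmax⟩ := hK.exists_isMaxOn hKne hcont.continuousOn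
  have huu : IsPMF uu := hmem.1
  have hvv : IsPMF vv := hmem.2
  -- rearrangement of G
  have hGx : ∀ (u : X → ℝ) (v : Y → ℝ), (∀ x, 0 ≤ u x) → (∀ y, 0 ≤ v y) →
      G u v = ∑ x, (u x) ^ (1 - α) * (∑ y, P (x, y) ^ α * (v y) ^ (1 - α)) := by
    intro u v hu hv
    simp only [hGdef]
    rw [Fintype.sum_prod_type]
    refine Finset.sum_congr rfl fun x _ => ?_
    rw [Finset.mul_sum]
    refine Finset.sum_congr rfl fun y _ => ?_
    rw [Real.mul_rpow (hu x) (hv y)]; ring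
  have hGy : ∀ (u : X → ℝ) (v : Y → ℝ), (∀ x, 0 ≤ u x) → (∀ y, 0 ≤ v y) →
      G u v = ∑ y, (v y) ^ (1 - α) * (∑ x, P (x, y) ^ α * (u x) ^ (1 - α)) := by
    intro u v hu hv
    simp only [hGdef]
    rw [Fintype.sum_prod_type_right]
    refine Finset.sum_congr rfl fun y _ => ?_
    rw [Finset.mul_sum]
    refine Finset.sum_congr rfl fun x _ => ?_
    rw [Real.mul_rpow (hu x) (hv y)]; ring
  -- improve the maximizer to a strictly positive one
  have hA : ∀ x, 0 < ∑ y, P (x, y) ^ α * (vv y) ^ (1 - α) := by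
    intro x
    obtain ⟨y1, -, hy1⟩ := Finset.exists_ne_zero_of_sum_ne_zero
      (by rw [hvv.2]; exact one_ne_zero : ∑ y, vv y ≠ 0)
    refine Finset.sum_pos' (fun y _ => mul_nonneg (Real.rpow_nonneg (hP _).le _)
      (Real.rpow_nonneg (hvv.1 _) _)) ⟨y1, Finset.mem_univ _, ?_⟩
    exact mul_pos (Real.rpow_pos_of_pos (hP _) _)
      (Real.rpow_pos_of_pos ((hvv.1 y1).lt_of_ne (Ne.symm hy1)) _)
  obtain ⟨u2, hu2P, hu2pos, hu2opt⟩ := holder_core hα0 hα1 _ hA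
  have hstep1 : ∀ u, IsPMF u → G u vv ≤ G u2 vv := by
    intro u hu
    rw [hGx u vv hu.1 hvv.1, hGx u2 vv hu2P.1 hvv.1]
    exact hu2opt u hu
  have hB : ∀ y, 0 < ∑ x, P (x, y) ^ α * (u2 x) ^ (1 - α) := by
    intro y
    exact Finset.sum_pos (fun x _ => mul_pos (Real.rpow_pos_of_pos (hP _) _)
      (Real.rpow_pos_of_pos (hu2pos x) _)) Finset.univ_nonempty
  obtain ⟨v2, hv2P, hv2pos, hv2opt⟩ := holder_core hα0 hα1 _ hB
  have hstep2 : ∀ v, IsPMF v → G u2 v ≤ G u2 v2 := by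
    intro v hv
    rw [hGy u2 v hu2P.1 hv.1, hGy u2 v2 hu2P.1 hv2P.1]
    exact hv2opt v hv
  have hstar : ∀ u v, IsPMF u → IsPMF v → G u v ≤ G u2 v2 := by
    intro u v hu hv
    have h1 : G u v ≤ G uu vv := hmax (Set.mk_mem_prod hu hv)
    exact h1.trans ((hstep1 uu huu).trans (hstep2 vv hvv))
  set Zs : ℝ := G u2 v2 with hZsdef
  have hZspos : 0 < Zs := hGpos u2 v2 hu2P hv2P
  set vr : ℝ := 1 / (α - 1) * Real.log Zs with hvrdef
  have hmono : ∀ t : ℝ, 0 < t → t ≤ Zs → vr ≤ 1 / (α - 1) * Real.log t := by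
    intro t ht hle
    rw [hvrdef]
    have hlog : Real.log t ≤ Real.log Zs := Real.log_le_log ht hle
    have hc : 1 / (α - 1) ≤ 0 := by
      apply div_nonpos_of_nonneg_of_nonpos <;> linarith
    exact mul_le_mul_of_nonpos_left hlog hc
  -- evaluation of the Rényi divergence against product distributions
  have hren : ∀ (qX : X → ℝ) (qY : Y → ℝ),
      renyiDE α P (fun z : X × Y => qX z.1 * qY z.2)
        = ((1 / (α - 1) * Real.log (G qX qY) : ℝ) : EReal) := by
    intro qX qY
    rw [renyiDE, if_neg (by rintro ⟨h1, -⟩; linarith :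
      ¬(1 < α ∧ ∃ z, P z ≠ 0 ∧ qX z.1 * qY z.2 = 0))]
  -- identification of lpMI
  have hlp : lpMI α pX pYX = (vr : EReal) := by
    have hleast : IsLeast {v : EReal | ∃ qX : X → ℝ, ∃ qY : Y → ℝ, IsPMF qX ∧ IsPMF qY ∧
        v = renyiDE α (fun z : X × Y => pX z.1 * pYX z.1 z.2)
              (fun z : X × Y => qX z.1 * qY z.2)} (vr : EReal) := by
      constructor
      · refine ⟨u2, v2, hu2P, hv2P, ?_⟩
        rw [← hPdef, hren u2 v2, ← hZsdef, hvrdef]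
      · rintro v ⟨qX, qY, hqX, hqY, rfl⟩
        rw [← hPdef, hren qX qY]
        exact EReal.coe_le_coe_iff.2
          (hmono (G qX qY) (hGpos qX qY hqX hqY) (hstar qX qY hqX hqY))
    exact hleast.csInf_eq
  -- the key lower bound
  have key : ∀ qt : X × Y → ℝ, IsPMF qt → (∀ z, 0 < qt z) →
      ∀ qY : Y → ℝ, IsPMF qY → (∀ y, 0 < qY y) →
      vr ≤ (α / (1 - α)) *
              klD qt (fun z : X × Y => (∑ y, qt (z.1, y)) * pYX z.1 z.2)
            + klD qt (fun z : X × Y => (∑ y, qt (z.1, y)) * qY z.2)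
            + (α / (1 - α)) * klD (fun x => ∑ y, qt (x, y)) pX := by
    intro qt hqt hqtpos qY hqY hqYpos
    have hMpos : ∀ x, 0 < ∑ y, qt (x, y) :=
      fun x => Finset.sum_pos (fun y _ => hqtpos (x, y)) Finset.univ_nonempty
    have hMpmf : IsPMF (fun x => ∑ y, qt (x, y)) := by
      refine ⟨fun x => (hMpos x).le, ?_⟩
      rw [← Fintype.sum_prod_type]
      exact hqt.2
    have hqpos : ∀ z : X × Y, 0 < (∑ y, qt (z.1, y)) * qY z.2 :=
      fun z => mul_pos (hMpos z.1) (hqYpos z.2)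
    have hchain := chain_rule qt hqtpos pX hpXpos pYX hpYXpos
    have hZ0pos : 0 < G (fun x => ∑ y, qt (x, y)) qY :=
      hGpos _ qY hMpmf hqY
    have hZ0eq : ∑ z : X × Y, P z ^ α * ((∑ y, qt (z.1, y)) * qY z.2) ^ (1 - α)
        = G (fun x => ∑ y, qt (x, y)) qY := rfl
    have htilt := tilt_identity hα0 hα1 P
      (fun z : X × Y => (∑ y, qt (z.1, y)) * qY z.2) qt hP hqpos hqt
      (by rw [hZ0eq]; exact hZ0pos)
    -- Gibbs for the tilted distribution
    set Z0 : ℝ := ∑ z : X × Y, P z ^ α * ((∑ y, qt (z.1, y)) * qY z.2) ^ (1 - α) with hZ0def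
    have hZ0pos' : 0 < Z0 := by rw [hZ0eq]; exact hZ0pos
    have hspos : ∀ z : X × Y,
        0 < P z ^ α * ((∑ y, qt (z.1, y)) * qY z.2) ^ (1 - α) / Z0 :=
      fun z => div_pos (mul_pos (Real.rpow_pos_of_pos (hP z) _)
        (Real.rpow_pos_of_pos (hqpos z) _)) hZ0pos'
    have hspmf : IsPMF (fun z : X × Y =>
        P z ^ α * ((∑ y, qt (z.1, y)) * qY z.2) ^ (1 - α) / Z0) := by
      refine ⟨fun z => (hspos z).le, ?_⟩
      rw [← Finset.sum_div, ← hZ0def, div_self hZ0pos'.ne']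
    have hgib := gibbs hqt hspmf hqtpos hspos
    -- algebra
    set a : ℝ := klD qt P with hadef
    set b : ℝ := klD qt (fun z : X × Y => (∑ y, qt (z.1, y)) * qY z.2) with hbdef
    have hmerge : (α / (1 - α)) *
          klD qt (fun z : X × Y => (∑ y, qt (z.1, y)) * pYX z.1 z.2)
        + (α / (1 - α)) * klD (fun x => ∑ y, qt (x, y)) pX = (α / (1 - α)) * a := by
      rw [← mul_add, hchain]
    have hvrle : vr ≤ 1 / (α - 1) * Real.log Z0 := by
      apply hmono Z0 hZ0pos'
      rw [hZ0eq]
      exact hstar _ qY hMpmf hqY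
    have halg : 1 / (α - 1) * Real.log Z0 ≤ (α / (1 - α)) * a + b := by
      have h1 : α * a + (1 - α) * b = klD qt
          (fun z : X × Y => P z ^ α * ((∑ y, qt (z.1, y)) * qY z.2) ^ (1 - α) / Z0)
          - Real.log Z0 := htilt
      have hne : (1:ℝ) - α ≠ 0 := hβ.ne'
      have hne2 : α - (1:ℝ) ≠ 0 := hαm.ne
      have h2 : (α / (1 - α)) * a + b = (α * a + (1 - α) * b) / (1 - α) := by
        field_simp
      rw [h2, h1]
      have h3 : 1 / (α - 1) * Real.log Z0 = (0 - Real.log Z0) / (1 - α) := by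
        field_simp; ring
      rw [h3]
      apply div_le_div_of_nonneg_right ?_ hβ.le
      linarith
    linarith
  -- the optimal tilted distribution
  have hsum2 : (∑ z : X × Y, P z ^ α * (u2 z.1 * v2 z.2) ^ (1 - α)) = Zs := rfl
  set qts : X × Y → ℝ := fun z => P z ^ α * (u2 z.1 * v2 z.2) ^ (1 - α) / Zs with hqtsdef
  have hqtspos : ∀ z, 0 < qts z := fun z => div_pos (mul_pos
    (Real.rpow_pos_of_pos (hP z) _)
    (Real.rpow_pos_of_pos (mul_pos (hu2pos z.1) (hv2pos z.2)) _)) hZspos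
  have hqtsP : IsPMF qts := by
    refine ⟨fun z => (hqtspos z).le, ?_⟩
    simp only [hqtsdef]
    rw [← Finset.sum_div, hsum2, div_self hZspos.ne']
  have hMspos : ∀ x, 0 < ∑ y, qts (x, y) :=
    fun x => Finset.sum_pos (fun y _ => hqtspos (x, y)) Finset.univ_nonempty
  have hMspmf : IsPMF (fun x => ∑ y, qts (x, y)) := by
    refine ⟨fun x => (hMspos x).le, ?_⟩
    rw [← Fintype.sum_prod_type]
    exact hqtsP.2
  have hchain2 := chain_rule qts hqtspos pX hpXpos pYX hpYXpos
  have hms := marginal_split qts hqtspos u2 hu2pos v2 hv2pos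
  have hgib2 := gibbs hMspmf hu2P hMspos hu2pos
  have htilt2 := tilt_identity hα0 hα1 P (fun z : X × Y => u2 z.1 * v2 z.2) qts hP
    (fun z => mul_pos (hu2pos z.1) (hv2pos z.2)) hqtsP (by rw [hsum2]; exact hZspos)
  rw [hsum2] at htilt2
  rw [show klD qts (fun z : X × Y => P z ^ α * (u2 z.1 * v2 z.2) ^ (1 - α) / Zs) = 0
    from klD_self qts hqtspos] at htilt2
  -- value of F at the optimal point
  have hveq : (α / (1 - α)) * klD qts P
      + klD qts (fun z : X × Y => u2 z.1 * v2 z.2) = vr := by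
    have h2 : (α / (1 - α)) * klD qts P + klD qts (fun z : X × Y => u2 z.1 * v2 z.2)
        = (α * klD qts P
          + (1 - α) * klD qts (fun z : X × Y => u2 z.1 * v2 z.2)) / (1 - α) := by
      field_simp
    rw [h2, htilt2, hvrdef]
    have hne2 : α - (1:ℝ) ≠ 0 := hαm.ne
    rw [div_eq_iff hβ.ne']
    field_simp
    ring
  have hFs_le : (α / (1 - α)) *
          klD qts (fun z : X × Y => (∑ y, qts (z.1, y)) * pYX z.1 z.2)
        + klD qts (fun z : X × Y => (∑ y, qts (z.1, y)) * v2 z.2)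
        + (α / (1 - α)) * klD (fun x => ∑ y, qts (x, y)) pX ≤ vr := by
    have hmerge2 : (α / (1 - α)) *
          klD qts (fun z : X × Y => (∑ y, qts (z.1, y)) * pYX z.1 z.2)
        + (α / (1 - α)) * klD (fun x => ∑ y, qts (x, y)) pX
        = (α / (1 - α)) * klD qts P := by
      rw [← mul_add, hchain2]
    linarith [hms, hgib2, hveq]
  have hFs_ge := key qts hqtsP hqtspos v2 hv2P hv2pos
  have hFs : (α / (1 - α)) *
          klD qts (fun z : X × Y => (∑ y, qts (z.1, y)) * pYX z.1 z.2)
        + klD qts (fun z : X × Y => (∑ y, qts (z.1, y)) * v2 z.2)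
        + (α / (1 - α)) * klD (fun x => ∑ y, qts (x, y)) pX = vr :=
    le_antisymm hFs_le hFs_ge
  constructor
  · rw [hlp]
    refine ⟨qts, hqtsP, hqtspos, v2, hv2P, hv2pos, ?_⟩
    exact_mod_cast hFs.symm
  · rintro v ⟨qt, hqt, hqtpos, qY, hqY, hqYpos, rfl⟩
    rw [hlp]
    exact EReal.coe_le_coe_iff.2 (key qt hqt hqtpos qY hqY hqYpos)
end

section
/- Let α ∈ (1,∞), let p_X be a strictly positive probability distribution on 𝒳 and p_{Y|X} a channel with p_{Y|X}(y|x) > 0 for all x, y. Then I_α^{LP} = sup over strictly positive probability distributions q̃_{X,Y} on 𝒳×𝒴 and strictly positive reverse channels r_{X|Y} of F̃_α^{LP}(q̃_{X,Y}, r_{X|Y}) := (α/(1−α)) D(q̃_{X,Y} ‖ q̃_X p_{Y|X}) + Σ_{x,y} q̃_{X,Y}(x,y) log( r_{X|Y}(x|y) / q̃_X(x) ) + (α/(1−α)) D(q̃_X ‖ p_X), where q̃_X(x) := Σ_y q̃_{X,Y}(x,y), and the supremum is attained. -/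
section AuxLemmas

open Real Finset

/-- Gibbs' inequality for strictly positive reference distributions. -/
lemma gibbs_ineq {ι : Type*} [Fintype ι] (f g : ι → ℝ) (hf : ∀ i, 0 ≤ f i) (hg : ∀ i, 0 < g i)
    (hf1 : ∑ i, f i = 1) (hg1 : ∑ i, g i = 1) :
    ∑ i, f i * Real.log (g i) ≤ ∑ i, f i * Real.log (f i) := by
  have key : ∀ i, f i * Real.log (g i) - f i * Real.log (f i) ≤ g i - f i := by
    intro i
    rcases eq_or_lt_of_le (hf i) with h0 | h0
    · simp [← h0]; exact (hg i).le
    · have hlog : Real.log (g i) - Real.log (f i) = Real.log (g i / f i) :=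
        (Real.log_div (hg i).ne' h0.ne').symm
      have h1 : f i * Real.log (g i) - f i * Real.log (f i) = f i * Real.log (g i / f i) := by
        rw [← mul_sub, hlog]
      have h2 : f i * Real.log (g i / f i) ≤ f i * (g i / f i - 1) :=
        mul_le_mul_of_nonneg_left (Real.log_le_sub_one_of_pos (div_pos (hg i) h0)) (hf i)
      have h3 : f i * (g i / f i - 1) = g i - f i := by field_simp
      linarith
  have hsum := Finset.sum_le_sum (fun i (_ : i ∈ Finset.univ) => key i)
  rw [Finset.sum_sub_distrib, Finset.sum_sub_distrib, hf1, hg1] at hsum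
  linarith

/-- First-order condition: if a strictly positive pmf `q` minimizes
`∑ i, a i * q i ^ γ` among strictly positive pmfs, then `a i * q i ^ (γ - 1)` is constant. -/
lemma slice_min_const {ι : Type*} [Fintype ι] [Nonempty ι] (γ : ℝ) (hγ : γ < 0)
    (a q : ι → ℝ) (ha : ∀ i, 0 < a i) (hq : ∀ i, 0 < q i) (hq1 : ∑ i, q i = 1)
    (hmin : ∀ u : ι → ℝ, (∀ i, 0 < u i) → ∑ i, u i = 1 →
      ∑ i, a i * q i ^ γ ≤ ∑ i, a i * u i ^ γ) :
    ∀ i j, a i * q i ^ (γ - 1) = a j * q j ^ (γ - 1) := by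
  classical
  intro i j
  rcases eq_or_ne i j with rfl | hij
  · rfl
  obtain ⟨k, -, hk⟩ := Finset.exists_min_image Finset.univ q
    ⟨Classical.arbitrary ι, Finset.mem_univ _⟩
  set δ := q k with hδ
  have hδpos : 0 < δ := hq k
  set e : ι → ℝ := fun l => (if l = i then (1:ℝ) else 0) - (if l = j then 1 else 0) with he
  have habs : ∀ l, |e l| ≤ 1 := by
    intro l
    by_cases h1 : l = i <;> by_cases h2 : l = j <;> simp [he, h1, h2, hij, Ne.symm hij]
  have hesum : ∑ l, e l = 0 := by
    simp [he, Finset.sum_sub_distrib, Finset.sum_ite_eq' Finset.univ]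
  set φ : ℝ → ℝ := fun t => ∑ l, a l * (q l + t * e l) ^ γ with hφ
  have hpos : ∀ t : ℝ, |t| < δ → ∀ l, 0 < q l + t * e l := by
    intro t ht l
    have h1 : |t * e l| ≤ |t| := by
      rw [abs_mul]
      calc |t| * |e l| ≤ |t| * 1 := mul_le_mul_of_nonneg_left (habs l) (abs_nonneg t)
        _ = |t| := mul_one _
    have h2 : δ ≤ q l := hk l (Finset.mem_univ l)
    have := neg_abs_le (t * e l)
    linarith [abs_nonneg (t * e l), (neg_abs_le (t * e l)), h1, ht]
  have hlocmin : IsLocalMin φ 0 := by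
    have hb : Metric.ball (0:ℝ) δ ∈ nhds (0:ℝ) := Metric.ball_mem_nhds 0 hδpos
    refine Filter.eventually_of_mem hb ?_
    intro t ht
    have ht' : |t| < δ := by simpa [Real.dist_eq] using ht
    have hsum : ∑ l, (q l + t * e l) = 1 := by
      rw [Finset.sum_add_distrib, hq1, ← Finset.mul_sum, hesum]; ring
    have h0 : φ 0 = ∑ l, a l * q l ^ γ := by simp [hφ]
    rw [h0]
    exact hmin _ (hpos t ht') hsum
  have hderiv : HasDerivAt φ (∑ l, a l * (e l * γ * (q l + 0 * e l) ^ (γ - 1))) 0 := by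
    apply HasDerivAt.fun_sum
    intro l _
    have hinner : HasDerivAt (fun t : ℝ => q l + t * e l) (e l) 0 := by
      simpa using ((hasDerivAt_id (0:ℝ)).mul_const (e l)).const_add (q l)
    have hne : q l + 0 * e l ≠ 0 := by simpa using (hq l).ne'
    exact (hinner.rpow_const (Or.inl hne)).const_mul (a l)
  have hzero := hlocmin.hasDerivAt_eq_zero hderiv
  have hsimp : ∑ l, a l * (e l * γ * (q l + 0 * e l) ^ (γ - 1))
      = γ * (a i * q i ^ (γ - 1) - a j * q j ^ (γ - 1)) := by
    have h1 : ∀ l : ι, a l * (e l * γ * (q l + 0 * e l) ^ (γ - 1))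
        = (if l = i then γ * (a l * q l ^ (γ-1)) else 0)
          - (if l = j then γ * (a l * q l ^ (γ-1)) else 0) := by
      intro l
      by_cases h1 : l = i <;> by_cases h2 : l = j <;>
        simp [he, h1, h2, hij, Ne.symm hij] <;> ring
    rw [Finset.sum_congr rfl (fun l _ => h1 l), Finset.sum_sub_distrib,
      Finset.sum_ite_eq' Finset.univ, Finset.sum_ite_eq' Finset.univ]
    simp only [Finset.mem_univ, if_true]
    ring
  have hfin : γ * (a i * q i ^ (γ - 1) - a j * q j ^ (γ - 1)) = 0 := by
    rw [← hsimp]; exact hzero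
  rcases mul_eq_zero.mp hfin with h | h
  · exact absurd h hγ.ne
  · linarith

/-- Marginalization of sums over a product type. -/
lemma sum_marg {X Y : Type*} [Fintype X] [Fintype Y] (q : X × Y → ℝ) (f : X → ℝ) :
    ∑ z : X × Y, q z * f z.1 = ∑ x, (∑ y, q (x, y)) * f x := by
  rw [Fintype.sum_prod_type]
  exact Finset.sum_congr rfl fun x _ => by rw [Finset.sum_mul]

/-- Evaluation of the objective functional in terms of elementary log-sums. -/
lemma FLP_eval {X Y : Type*} [Fintype X] [Fintype Y] [Nonempty X] [Nonempty Y] (α : ℝ)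
    (pX : X → ℝ) (hpXpos : ∀ x, 0 < pX x)
    (pYX : X → Y → ℝ) (hpYXpos : ∀ x y, 0 < pYX x y)
    (qt : X × Y → ℝ) (hqtpos : ∀ z, 0 < qt z)
    (r : Y → X → ℝ) (hrpos : ∀ y x, 0 < r y x) :
    (α / (1 - α)) * klD qt (fun z : X × Y => (∑ y, qt (z.1, y)) * pYX z.1 z.2)
      + ∑ z : X × Y, qt z * Real.log (r z.2 z.1 / ∑ y, qt (z.1, y))
      + (α / (1 - α)) * klD (fun x => ∑ y, qt (x, y)) pX
    = (α / (1 - α)) * ((∑ z : X × Y, qt z * Real.log (qt z))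
          - ∑ z : X × Y, qt z * Real.log (pX z.1 * pYX z.1 z.2))
      + ((∑ z : X × Y, qt z * Real.log (r z.2 z.1))
          - ∑ z : X × Y, qt z * Real.log (∑ y, qt (z.1, y))) := by
  have hqtXpos : ∀ x, 0 < ∑ y, qt (x, y) :=
    fun x => Finset.sum_pos (fun y _ => hqtpos (x, y)) Finset.univ_nonempty
  have hT1 : klD qt (fun z : X × Y => (∑ y, qt (z.1, y)) * pYX z.1 z.2)
      = (∑ z : X × Y, qt z * Real.log (qt z))
        - (∑ z : X × Y, qt z * Real.log (∑ y, qt (z.1, y)))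
        - (∑ z : X × Y, qt z * Real.log (pYX z.1 z.2)) := by
    rw [klD, ← Finset.sum_sub_distrib, ← Finset.sum_sub_distrib]
    refine Finset.sum_congr rfl fun z _ => ?_
    rw [Real.log_div (hqtpos z).ne' (mul_pos (hqtXpos z.1) (hpYXpos z.1 z.2)).ne',
      Real.log_mul (hqtXpos z.1).ne' (hpYXpos z.1 z.2).ne']
    ring
  have hT2 : (∑ z : X × Y, qt z * Real.log (r z.2 z.1 / ∑ y, qt (z.1, y)))
      = (∑ z : X × Y, qt z * Real.log (r z.2 z.1))
        - (∑ z : X × Y, qt z * Real.log (∑ y, qt (z.1, y))) := by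
    rw [← Finset.sum_sub_distrib]
    refine Finset.sum_congr rfl fun z _ => ?_
    rw [Real.log_div (hrpos z.2 z.1).ne' (hqtXpos z.1).ne']
    ring
  have hT3 : klD (fun x => ∑ y, qt (x, y)) pX
      = (∑ z : X × Y, qt z * Real.log (∑ y, qt (z.1, y)))
        - (∑ z : X × Y, qt z * Real.log (pX z.1)) := by
    rw [klD, sum_marg qt (fun x => Real.log (∑ y, qt (x, y))),
      sum_marg qt (fun x => Real.log (pX x)), ← Finset.sum_sub_distrib]
    refine Finset.sum_congr rfl fun x _ => ?_
    rw [Real.log_div (hqtXpos x).ne' (hpXpos x).ne']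
    ring
  have hA : (∑ z : X × Y, qt z * Real.log (pX z.1 * pYX z.1 z.2))
      = (∑ z : X × Y, qt z * Real.log (pX z.1))
        + (∑ z : X × Y, qt z * Real.log (pYX z.1 z.2)) := by
    rw [← Finset.sum_add_distrib]
    refine Finset.sum_congr rfl fun z _ => ?_
    rw [Real.log_mul (hpXpos z.1).ne' (hpYXpos z.1 z.2).ne']
    ring
  rw [hT1, hT2, hT3, hA]
  ring

end AuxLemmas

/-- For `α > 1`, the Lapidoth--Pfister mutual information of order `α` is the supremum,
over strictly positive joint distributions `q̃_{X,Y}` and strictly positive reverse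
channels `r_{X|Y}`, of
`F̃_α^{LP}(q̃_{X,Y}, r) = (α/(1−α)) D(q̃_{X,Y} ‖ q̃_X p_{Y|X})
  + Σ_{x,y} q̃_{X,Y}(x,y) log(r(x|y)/q̃_X(x)) + (α/(1−α)) D(q̃_X ‖ p_X)`,
and the supremum is attained. -/
theorem lpMI_eq_sup_FLP {X Y : Type*} [Fintype X] [Fintype Y] [Nonempty X] [Nonempty Y]
    (α : ℝ) (hα : 1 < α)
    (pX : X → ℝ) (hpX : IsPMF pX) (hpXpos : ∀ x, 0 < pX x)
    (pYX : X → Y → ℝ) (hpYX : ∀ x, IsPMF (pYX x)) (hpYXpos : ∀ x y, 0 < pYX x y) :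
    IsGreatest
      {v : EReal | ∃ qt : X × Y → ℝ, IsPMF qt ∧ (∀ z, 0 < qt z) ∧
        ∃ r : Y → X → ℝ, (∀ y, IsPMF (r y)) ∧ (∀ y x, 0 < r y x) ∧
        v = (((α / (1 - α)) *
                klD qt (fun z : X × Y => (∑ y, qt (z.1, y)) * pYX z.1 z.2)
              + ∑ z : X × Y, qt z * Real.log (r z.2 z.1 / ∑ y, qt (z.1, y))
              + (α / (1 - α)) * klD (fun x => ∑ y, qt (x, y)) pX : ℝ) : EReal)}
      (lpMI α pX pYX) := by
  classical
  obtain ⟨hpX0, hpX1⟩ := hpX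
  have hα1 : (0:ℝ) < α - 1 := by linarith
  have hγ : (1 - α : ℝ) < 0 := by linarith
  have hγne : (1 - α : ℝ) ≠ 0 := by linarith
  set p : X × Y → ℝ := fun z => pX z.1 * pYX z.1 z.2 with hp
  have hpz : ∀ z : X × Y, pX z.1 * pYX z.1 z.2 = p z := fun _ => rfl
  have hppos : ∀ z, 0 < p z := fun z => mul_pos (hpXpos _) (hpYXpos _ _)
  set S : (X → ℝ) → (Y → ℝ) → ℝ :=
    fun u v => ∑ z : X × Y, p z ^ α * (u z.1 * v z.2) ^ (1 - α) with hS
  -- uniform distributions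
  set uX : X → ℝ := fun _ => ((Fintype.card X : ℝ))⁻¹ with huX
  set uY : Y → ℝ := fun _ => ((Fintype.card Y : ℝ))⁻¹ with huY
  have hcX : (0:ℝ) < Fintype.card X := by exact_mod_cast Fintype.card_pos
  have hcY : (0:ℝ) < Fintype.card Y := by exact_mod_cast Fintype.card_pos
  have huXpos : ∀ x, 0 < uX x := fun _ => inv_pos.2 hcX
  have huYpos : ∀ y, 0 < uY y := fun _ => inv_pos.2 hcY
  have huX1 : ∑ x, uX x = 1 := by
    simp [huX, Finset.sum_const, Finset.card_univ, nsmul_eq_mul]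
  have huY1 : ∑ y, uY y = 1 := by
    simp [huY, Finset.sum_const, Finset.card_univ, nsmul_eq_mul]
  have hSpos : ∀ (u : X → ℝ) (v : Y → ℝ), (∀ x, 0 < u x) → (∀ y, 0 < v y) → 0 < S u v := by
    intro u v hu hv
    exact Finset.sum_pos (fun z _ => mul_pos (Real.rpow_pos_of_pos (hppos z) α)
      (Real.rpow_pos_of_pos (mul_pos (hu z.1) (hv z.2)) _)) Finset.univ_nonempty
  set Su : ℝ := S uX uY with hSu
  have hSupos : 0 < Su := hSpos uX uY huXpos huYpos
  -- minimum of p^α over the product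
  obtain ⟨z0, -, hz0⟩ := Finset.exists_min_image Finset.univ (fun z : X × Y => p z ^ α)
    ⟨Classical.arbitrary (X × Y), Finset.mem_univ _⟩
  set c : ℝ := p z0 ^ α with hc
  have hcpos : 0 < c := Real.rpow_pos_of_pos (hppos z0) α
  -- choice of ε
  set ε : ℝ := min (min ((Fintype.card X : ℝ))⁻¹ ((Fintype.card Y : ℝ))⁻¹)
    ((Su / c) ^ (1 - α)⁻¹) with hε
  have hεpos : 0 < ε :=
    lt_min (lt_min (inv_pos.2 hcX) (inv_pos.2 hcY))
      (Real.rpow_pos_of_pos (div_pos hSupos hcpos) _)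
  have hε3 : Su ≤ c * ε ^ (1 - α) := by
    have h1 : ε ≤ (Su / c) ^ (1 - α)⁻¹ := min_le_right _ _
    have h2 : ((Su / c) ^ (1 - α)⁻¹) ^ (1 - α) ≤ ε ^ (1 - α) :=
      Real.rpow_le_rpow_of_nonpos hεpos h1 hγ.le
    have h3 : ((Su / c) ^ (1 - α)⁻¹) ^ (1 - α) = Su / c := by
      rw [← Real.rpow_mul (div_pos hSupos hcpos).le, inv_mul_cancel₀ hγne, Real.rpow_one]
    rw [mul_comm]
    exact (div_le_iff₀ hcpos).mp (by rw [← h3]; exact h2)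
  -- the compact set of ε-bounded pmf pairs
  set K : Set ((X → ℝ) × (Y → ℝ)) :=
    {w | (∀ x, ε ≤ w.1 x) ∧ ∑ x, w.1 x = 1 ∧ (∀ y, ε ≤ w.2 y) ∧ ∑ y, w.2 y = 1} with hK
  have hεX : ε ≤ ((Fintype.card X : ℝ))⁻¹ := le_trans (min_le_left _ _) (min_le_left _ _)
  have hεY : ε ≤ ((Fintype.card Y : ℝ))⁻¹ := le_trans (min_le_left _ _) (min_le_right _ _)
  have hKmem : (uX, uY) ∈ K := ⟨fun _ => hεX, huX1, fun _ => hεY, huY1⟩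
  have hKcl : IsClosed K := by
    have e1 : K = (⋂ x, {w : (X → ℝ) × (Y → ℝ) | ε ≤ w.1 x})
        ∩ ({w : (X → ℝ) × (Y → ℝ) | ∑ x, w.1 x = 1}
        ∩ ((⋂ y, {w : (X → ℝ) × (Y → ℝ) | ε ≤ w.2 y})
        ∩ {w : (X → ℝ) × (Y → ℝ) | ∑ y, w.2 y = 1})) := by
      ext w
      simp only [hK, Set.mem_setOf_eq, Set.mem_inter_iff, Set.mem_iInter]
    rw [e1]
    refine IsClosed.inter (isClosed_iInter fun x => ?_)
      (IsClosed.inter ?_ (IsClosed.inter (isClosed_iInter fun y => ?_) ?_))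
    · exact isClosed_le continuous_const ((continuous_apply x).comp continuous_fst)
    · exact isClosed_eq (continuous_finset_sum _ fun x _ =>
        (continuous_apply x).comp continuous_fst) continuous_const
    · exact isClosed_le continuous_const ((continuous_apply y).comp continuous_snd)
    · exact isClosed_eq (continuous_finset_sum _ fun y _ =>
        (continuous_apply y).comp continuous_snd) continuous_const
  have hKcpt : IsCompact K := by
    have hsub : K ⊆ (Set.univ.pi fun _ : X => Set.Icc (0:ℝ) 1) ×ˢ
        (Set.univ.pi fun _ : Y => Set.Icc (0:ℝ) 1) := by
      rintro ⟨u, v⟩ ⟨h1, h2, h3, h4⟩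
      constructor
      · intro x _
        refine ⟨le_trans hεpos.le (h1 x), ?_⟩
        calc u x ≤ ∑ x', u x' := Finset.single_le_sum
              (fun x' _ => le_trans hεpos.le (h1 x')) (Finset.mem_univ x)
          _ = 1 := h2
      · intro y _
        refine ⟨le_trans hεpos.le (h3 y), ?_⟩
        calc v y ≤ ∑ y', v y' := Finset.single_le_sum
              (fun y' _ => le_trans hεpos.le (h3 y')) (Finset.mem_univ y)
          _ = 1 := h4
    exact IsCompact.of_isClosed_subset
      ((isCompact_univ_pi fun _ => isCompact_Icc).prod
        (isCompact_univ_pi fun _ => isCompact_Icc)) hKcl hsub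
  have hScont : ContinuousOn (fun w : (X → ℝ) × (Y → ℝ) => S w.1 w.2) K := by
    apply continuousOn_finset_sum
    intro z _
    apply ContinuousOn.mul continuousOn_const
    apply ContinuousOn.rpow_const
    · exact ContinuousOn.mul
        (((continuous_apply z.1).comp continuous_fst).continuousOn)
        (((continuous_apply z.2).comp continuous_snd).continuousOn)
    · rintro ⟨u, v⟩ hw
      exact Or.inl (mul_pos (lt_of_lt_of_le hεpos (hw.1 z.1))
        (lt_of_lt_of_le hεpos (hw.2.2.1 z.2))).ne'
  obtain ⟨w, hwK, hwmin⟩ := hKcpt.exists_isMinOn ⟨(uX, uY), hKmem⟩ hScont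
  obtain ⟨qX, qY⟩ := w
  have hmin' : ∀ w' ∈ K, S qX qY ≤ S w'.1 w'.2 := fun w' hw' => isMinOn_iff.mp hwmin w' hw'
  have hqXpos : ∀ x, 0 < qX x := fun x => lt_of_lt_of_le hεpos (hwK.1 x)
  have hqX1 : ∑ x, qX x = 1 := hwK.2.1
  have hqYpos : ∀ y, 0 < qY y := fun y => lt_of_lt_of_le hεpos (hwK.2.2.1 y)
  have hqY1 : ∑ y, qY y = 1 := hwK.2.2.2
  set M : ℝ := S qX qY with hM
  have hMpos : 0 < M := hSpos qX qY hqXpos hqYpos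
  have hSuM : M ≤ Su := hmin' (uX, uY) hKmem
  -- the global minimality of M over all strictly positive pmf pairs
  have hglobal : ∀ (u : X → ℝ) (v : Y → ℝ), (∀ x, 0 < u x) → ∑ x, u x = 1 →
      (∀ y, 0 < v y) → ∑ y, v y = 1 → M ≤ S u v := by
    intro u v hu hu1 hv hv1
    by_cases hcase : (∀ x, ε ≤ u x) ∧ (∀ y, ε ≤ v y)
    · exact hmin' (u, v) ⟨hcase.1, hu1, hcase.2, hv1⟩
    · have key : ∀ (x0 : X) (y0 : Y), u x0 * v y0 ≤ ε → M ≤ S u v := by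
        intro x0 y0 hb
        have h1 : p (x0, y0) ^ α * (u x0 * v y0) ^ (1 - α) ≤ S u v := by
          refine Finset.single_le_sum (f := fun z : X × Y =>
            p z ^ α * (u z.1 * v z.2) ^ (1 - α)) ?_ (Finset.mem_univ (x0, y0))
          intro z _
          exact le_of_lt (mul_pos (Real.rpow_pos_of_pos (hppos z) α)
            (Real.rpow_pos_of_pos (mul_pos (hu z.1) (hv z.2)) _))
        have h2 : ε ^ (1 - α) ≤ (u x0 * v y0) ^ (1 - α) :=
          Real.rpow_le_rpow_of_nonpos (mul_pos (hu x0) (hv y0)) hb hγ.le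
        have h3 : c ≤ p (x0, y0) ^ α := hz0 _ (Finset.mem_univ _)
        have h4 : c * ε ^ (1 - α) ≤ p (x0, y0) ^ α * (u x0 * v y0) ^ (1 - α) :=
          mul_le_mul h3 h2 (Real.rpow_pos_of_pos hεpos _).le
            (Real.rpow_pos_of_pos (hppos _) _).le
        linarith
      have hu_le_one : ∀ x, u x ≤ 1 := by
        intro x
        calc u x ≤ ∑ x', u x' := Finset.single_le_sum
              (fun x' _ => (hu x').le) (Finset.mem_univ x)
          _ = 1 := hu1
      have hv_le_one : ∀ y, v y ≤ 1 := by
        intro y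
        calc v y ≤ ∑ y', v y' := Finset.single_le_sum
              (fun y' _ => (hv y').le) (Finset.mem_univ y)
          _ = 1 := hv1
      rcases not_and_or.mp hcase with h | h
      · push_neg at h
        obtain ⟨x0, hx0⟩ := h
        refine key x0 (Classical.arbitrary Y) ?_
        calc u x0 * v _ ≤ u x0 * 1 :=
              mul_le_mul_of_nonneg_left (hv_le_one _) (hu x0).le
          _ = u x0 := mul_one _
          _ ≤ ε := hx0.le
      · push_neg at h
        obtain ⟨y0, hy0⟩ := h
        refine key (Classical.arbitrary X) y0 ?_
        calc u _ * v y0 ≤ 1 * v y0 :=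
              mul_le_mul_of_nonneg_right (hu_le_one _) (hv y0).le
          _ = v y0 := one_mul _
          _ ≤ ε := hy0.le
  -- slice functions
  set a : X → ℝ := fun x => ∑ y, p (x, y) ^ α * qY y ^ (1 - α) with ha
  set b : Y → ℝ := fun y => ∑ x, p (x, y) ^ α * qX x ^ (1 - α) with hb
  have hapos : ∀ x, 0 < a x := fun x => Finset.sum_pos (fun y _ =>
    mul_pos (Real.rpow_pos_of_pos (hppos (x, y)) α)
      (Real.rpow_pos_of_pos (hqYpos y) _)) Finset.univ_nonempty
  have hbpos : ∀ y, 0 < b y := fun y => Finset.sum_pos (fun x _ =>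
    mul_pos (Real.rpow_pos_of_pos (hppos (x, y)) α)
      (Real.rpow_pos_of_pos (hqXpos x) _)) Finset.univ_nonempty
  have hSa : ∀ u : X → ℝ, (∀ x, 0 < u x) → S u qY = ∑ x, a x * u x ^ (1 - α) := by
    intro u hu
    calc S u qY = ∑ z : X × Y, (p z ^ α * qY z.2 ^ (1 - α)) * u z.1 ^ (1 - α) :=
          Finset.sum_congr rfl fun z _ => by
            rw [Real.mul_rpow (hu z.1).le (hqYpos z.2).le]; ring
      _ = ∑ x, ∑ y, (p (x, y) ^ α * qY y ^ (1 - α)) * u x ^ (1 - α) :=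
          Fintype.sum_prod_type _
      _ = ∑ x, a x * u x ^ (1 - α) :=
          Finset.sum_congr rfl fun x _ => by rw [← Finset.sum_mul]
  have hSb : ∀ v : Y → ℝ, (∀ y, 0 < v y) → S qX v = ∑ y, b y * v y ^ (1 - α) := by
    intro v hv
    calc S qX v = ∑ z : X × Y, (p z ^ α * qX z.1 ^ (1 - α)) * v z.2 ^ (1 - α) :=
          Finset.sum_congr rfl fun z _ => by
            rw [Real.mul_rpow (hqXpos z.1).le (hv z.2).le]; ring
      _ = ∑ x, ∑ y, (p (x, y) ^ α * qX x ^ (1 - α)) * v y ^ (1 - α) :=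
          Fintype.sum_prod_type _
      _ = ∑ y, ∑ x, (p (x, y) ^ α * qX x ^ (1 - α)) * v y ^ (1 - α) := Finset.sum_comm
      _ = ∑ y, b y * v y ^ (1 - α) :=
          Finset.sum_congr rfl fun y _ => by rw [← Finset.sum_mul]
  have hCX : ∀ i j, a i * qX i ^ ((1 - α) - 1) = a j * qX j ^ ((1 - α) - 1) := by
    apply slice_min_const (1 - α) hγ a qX hapos hqXpos hqX1
    intro u hu hu1
    rw [← hSa qX hqXpos, ← hSa u hu]
    exact hglobal u qY hu hu1 hqYpos hqY1
  have hCY : ∀ i j, b i * qY i ^ ((1 - α) - 1) = b j * qY j ^ ((1 - α) - 1) := by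
    apply slice_min_const (1 - α) hγ b qY hbpos hqYpos hqY1
    intro v hv hv1
    rw [← hSb qY hqYpos, ← hSb v hv]
    exact hglobal qX v hqXpos hqX1 hv hv1
  -- the optimal joint distribution
  set F : X × Y → ℝ := fun z => p z ^ α * (qX z.1 * qY z.2) ^ (1 - α) / M with hF
  have hFpos : ∀ z, 0 < F z := fun z => div_pos (mul_pos (Real.rpow_pos_of_pos (hppos z) α)
    (Real.rpow_pos_of_pos (mul_pos (hqXpos z.1) (hqYpos z.2)) _)) hMpos
  have hFsum : ∑ z, F z = 1 := by
    rw [hF, ← Finset.sum_div]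
    exact div_self hMpos.ne'
  -- marginals of F are the optimal qX, qY
  have hmargX : ∀ x, ∑ y, F (x, y) = qX x := by
    have hrow : ∀ x, ∑ y, F (x, y) = a x * qX x ^ (1 - α) / M := by
      intro x
      rw [← Finset.sum_div]
      congr 1
      calc ∑ y, p (x, y) ^ α * (qX x * qY y) ^ (1 - α)
          = ∑ y, (p (x, y) ^ α * qY y ^ (1 - α)) * qX x ^ (1 - α) :=
            Finset.sum_congr rfl fun y _ => by
              rw [Real.mul_rpow (hqXpos x).le (hqYpos y).le]; ring
        _ = a x * qX x ^ (1 - α) := by rw [← Finset.sum_mul]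
    have hax : ∀ x, a x * qX x ^ (1 - α)
        = (a (Classical.arbitrary X) * qX (Classical.arbitrary X) ^ ((1 - α) - 1)) * qX x := by
      intro x
      have h1 := hCX x (Classical.arbitrary X)
      calc a x * qX x ^ (1 - α) = a x * (qX x ^ ((1 - α) - 1) * qX x ^ (1 : ℝ)) := by
            rw [← Real.rpow_add (hqXpos x)]; ring_nf
        _ = (a x * qX x ^ ((1 - α) - 1)) * qX x := by rw [Real.rpow_one]; ring
        _ = _ := by rw [h1]
    have hCM : a (Classical.arbitrary X) * qX (Classical.arbitrary X) ^ ((1 - α) - 1) = M := by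
      have h1 : ∑ x, a x * qX x ^ (1 - α) = M := (hSa qX hqXpos).symm
      rw [Finset.sum_congr rfl (fun x _ => hax x), ← Finset.mul_sum, hqX1, mul_one] at h1
      exact h1
    intro x
    rw [hrow x, hax x, hCM, mul_comm, mul_div_assoc, div_self hMpos.ne', mul_one]
  have hmargY : ∀ y, ∑ x, F (x, y) = qY y := by
    have hrow : ∀ y, ∑ x, F (x, y) = b y * qY y ^ (1 - α) / M := by
      intro y
      rw [← Finset.sum_div]
      congr 1
      calc ∑ x, p (x, y) ^ α * (qX x * qY y) ^ (1 - α)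
          = ∑ x, (p (x, y) ^ α * qX x ^ (1 - α)) * qY y ^ (1 - α) :=
            Finset.sum_congr rfl fun x _ => by
              rw [Real.mul_rpow (hqXpos x).le (hqYpos y).le]; ring
        _ = b y * qY y ^ (1 - α) := by rw [← Finset.sum_mul]
    have hby : ∀ y, b y * qY y ^ (1 - α)
        = (b (Classical.arbitrary Y) * qY (Classical.arbitrary Y) ^ ((1 - α) - 1)) * qY y := by
      intro y
      have h1 := hCY y (Classical.arbitrary Y)
      calc b y * qY y ^ (1 - α) = b y * (qY y ^ ((1 - α) - 1) * qY y ^ (1 : ℝ)) := by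
            rw [← Real.rpow_add (hqYpos y)]; ring_nf
        _ = (b y * qY y ^ ((1 - α) - 1)) * qY y := by rw [Real.rpow_one]; ring
        _ = _ := by rw [h1]
    have hCM : b (Classical.arbitrary Y) * qY (Classical.arbitrary Y) ^ ((1 - α) - 1) = M := by
      have h1 : ∑ y, b y * qY y ^ (1 - α) = M := (hSb qY hqYpos).symm
      rw [Finset.sum_congr rfl (fun y _ => hby y), ← Finset.mul_sum, hqY1, mul_one] at h1
      exact h1
    intro y
    rw [hrow y, hby y, hCM, mul_comm, mul_div_assoc, div_self hMpos.ne', mul_one]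
  -- evaluation of renyiDE at strictly positive pairs
  have hren : ∀ (u : X → ℝ) (v : Y → ℝ), (∀ x, 0 < u x) → (∀ y, 0 < v y) →
      renyiDE α (fun z : X × Y => pX z.1 * pYX z.1 z.2) (fun z : X × Y => u z.1 * v z.2)
        = ((1 / (α - 1) * Real.log (S u v) : ℝ) : EReal) := by
    intro u v hu hv
    simp only [renyiDE]
    rw [if_neg]
    rintro ⟨-, z, -, hz⟩
    exact (mul_pos (hu z.1) (hv z.2)).ne' hz
  set vStar : ℝ := 1 / (α - 1) * Real.log M with hvStar
  have hlp : lpMI α pX pYX = (vStar : EReal) := by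
    apply le_antisymm
    · apply sInf_le
      exact ⟨qX, qY, ⟨fun x => (hqXpos x).le, hqX1⟩, ⟨fun y => (hqYpos y).le, hqY1⟩,
        (hren qX qY hqXpos hqYpos).symm⟩
    · apply le_sInf
      rintro w ⟨u, v, hu, hv, rfl⟩
      simp only [renyiDE]
      split_ifs with hcond
      · exact le_top
      · have hu0 : ∀ x, 0 < u x := by
          intro x
          rcases (hu.1 x).lt_or_eq with h | h
          · exact h
          · exact absurd ⟨hα, (x, Classical.arbitrary Y),
              (hppos (x, Classical.arbitrary Y)).ne', by simp [← h]⟩ hcond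
        have hv0 : ∀ y, 0 < v y := by
          intro y
          rcases (hv.1 y).lt_or_eq with h | h
          · exact h
          · exact absurd ⟨hα, (Classical.arbitrary X, y),
              (hppos (Classical.arbitrary X, y)).ne', by simp [← h]⟩ hcond
        have hle : vStar ≤ 1 / (α - 1) * Real.log (S u v) := by
          have h1 : M ≤ S u v := hglobal u v hu0 hu.2 hv0 hv.2
          have h2 : Real.log M ≤ Real.log (S u v) :=
            (Real.log_le_log_iff hMpos (hSpos u v hu0 hv0)).mpr h1
          exact mul_le_mul_of_nonneg_left h2 (by positivity)
        exact EReal.coe_le_coe_iff.mpr hle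
  -- the reverse channel
  set r0 : Y → X → ℝ := fun y x => F (x, y) / qY y with hr0
  have hr0pos : ∀ y x, 0 < r0 y x := fun y x => div_pos (hFpos (x, y)) (hqYpos y)
  have hr0pmf : ∀ y, IsPMF (r0 y) := by
    intro y
    refine ⟨fun x => (hr0pos y x).le, ?_⟩
    rw [hr0, ← Finset.sum_div, hmargY y, div_self (hqYpos y).ne']
  -- logarithm of the optimal joint distribution
  have hlogF : ∀ z : X × Y, Real.log (F z) = α * Real.log (p z)
      + (1 - α) * Real.log (qX z.1) + (1 - α) * Real.log (qY z.2) - Real.log M := by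
    intro z
    rw [hF]
    rw [Real.log_div (mul_pos (Real.rpow_pos_of_pos (hppos z) α)
        (Real.rpow_pos_of_pos (mul_pos (hqXpos z.1) (hqYpos z.2)) _)).ne' hMpos.ne',
      Real.log_mul (Real.rpow_pos_of_pos (hppos z) α).ne'
        (Real.rpow_pos_of_pos (mul_pos (hqXpos z.1) (hqYpos z.2)) _).ne',
      Real.log_rpow (hppos z), Real.log_rpow (mul_pos (hqXpos z.1) (hqYpos z.2)),
      Real.log_mul (hqXpos z.1).ne' (hqYpos z.2).ne']
    ring
  have hsumlogF : ∀ qt : X × Y → ℝ, ∑ z, qt z = 1 →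
      ∑ z : X × Y, qt z * Real.log (F z)
        = α * (∑ z : X × Y, qt z * Real.log (p z))
          + (1 - α) * (∑ z : X × Y, qt z * Real.log (qX z.1))
          + (1 - α) * (∑ z : X × Y, qt z * Real.log (qY z.2)) - Real.log M := by
    intro qt hqt1
    have h1 : ∀ z : X × Y, qt z * Real.log (F z)
        = α * (qt z * Real.log (p z)) + (1 - α) * (qt z * Real.log (qX z.1))
          + (1 - α) * (qt z * Real.log (qY z.2)) - Real.log M * qt z := by
      intro z; rw [hlogF z]; ring
    rw [Finset.sum_congr rfl fun z _ => h1 z, Finset.sum_sub_distrib,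
      Finset.sum_add_distrib, Finset.sum_add_distrib,
      ← Finset.mul_sum, ← Finset.mul_sum, ← Finset.mul_sum, ← Finset.mul_sum, hqt1]
    ring
  -- value of the objective at the witness
  have hmemval : (α / (1 - α)) * klD F (fun z : X × Y => (∑ y, F (z.1, y)) * pYX z.1 z.2)
      + ∑ z : X × Y, F z * Real.log (r0 z.2 z.1 / ∑ y, F (z.1, y))
      + (α / (1 - α)) * klD (fun x => ∑ y, F (x, y)) pX = vStar := by
    rw [FLP_eval α pX hpXpos pYX hpYXpos F hFpos r0 hr0pos]
    simp only [hpz, hmargX]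
    have hQ0 := hsumlogF F hFsum
    have hR0 : ∑ z : X × Y, F z * Real.log (r0 z.2 z.1)
        = (∑ z : X × Y, F z * Real.log (F z))
          - ∑ z : X × Y, F z * Real.log (qY z.2) := by
      rw [← Finset.sum_sub_distrib]
      refine Finset.sum_congr rfl fun z _ => ?_
      have hz : r0 z.2 z.1 = F z / qY z.2 := by rw [hr0]
      rw [hz, Real.log_div (hFpos z).ne' (hqYpos z.2).ne']; ring
    rw [hR0, hQ0, hvStar]
    field_simp
    ring
  constructor
  · exact ⟨F, ⟨fun z => (hFpos z).le, hFsum⟩, hFpos, r0, hr0pmf, hr0pos, by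
      rw [hlp]; exact congrArg _ hmemval.symm⟩
  · rintro w ⟨qt, ⟨hqt0, hqt1⟩, hqtpos, r, hrpmf, hrpos, rfl⟩
    rw [hlp]
    refine EReal.coe_le_coe_iff.mpr ?_
    rw [FLP_eval α pX hpXpos pYX hpYXpos qt hqtpos r hrpos]
    simp only [hpz]
    have hqtXpos : ∀ x, 0 < ∑ y, qt (x, y) := fun x =>
      Finset.sum_pos (fun y _ => hqtpos (x, y)) Finset.univ_nonempty
    have hqtX1 : ∑ x, (∑ y, qt (x, y)) = 1 := by
      rw [← Fintype.sum_prod_type]; exact hqt1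
    have hG1 : ∑ z : X × Y, qt z * Real.log (qX z.1)
        ≤ ∑ z : X × Y, qt z * Real.log (∑ y, qt (z.1, y)) := by
      rw [sum_marg qt (fun x => Real.log (qX x)),
        sum_marg qt (fun x => Real.log (∑ y, qt (x, y)))]
      exact gibbs_ineq (fun x => ∑ y, qt (x, y)) qX
        (fun x => (hqtXpos x).le) hqXpos hqtX1 hqX1
    have hG2 : (∑ z : X × Y, qt z * Real.log (qY z.2))
        + (∑ z : X × Y, qt z * Real.log (r z.2 z.1))
        ≤ ∑ z : X × Y, qt z * Real.log (qt z) := by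
      have hg1 : ∑ z : X × Y, qY z.2 * r z.2 z.1 = 1 := by
        rw [Fintype.sum_prod_type, Finset.sum_comm]
        calc ∑ y, ∑ x, qY y * r y x = ∑ y, qY y :=
              Finset.sum_congr rfl fun y _ => by rw [← Finset.mul_sum, (hrpmf y).2, mul_one]
          _ = 1 := hqY1
      have h2 := gibbs_ineq qt (fun z : X × Y => qY z.2 * r z.2 z.1) hqt0
        (fun z => mul_pos (hqYpos z.2) (hrpos z.2 z.1)) hqt1 hg1
      have h3 : ∑ z : X × Y, qt z * Real.log (qY z.2 * r z.2 z.1)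
          = (∑ z : X × Y, qt z * Real.log (qY z.2))
            + (∑ z : X × Y, qt z * Real.log (r z.2 z.1)) := by
        rw [← Finset.sum_add_distrib]
        refine Finset.sum_congr rfl fun z _ => ?_
        rw [Real.log_mul (hqYpos z.2).ne' (hrpos z.2 z.1).ne']; ring
      rw [h3] at h2
      exact h2
    have hG3 : α * (∑ z : X × Y, qt z * Real.log (p z))
        + (1 - α) * (∑ z : X × Y, qt z * Real.log (qX z.1))
        + (1 - α) * (∑ z : X × Y, qt z * Real.log (qY z.2))
        - Real.log M ≤ ∑ z : X × Y, qt z * Real.log (qt z) := by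
      have h2 := gibbs_ineq qt F hqt0 hFpos hqt1 hFsum
      rw [hsumlogF qt hqt1] at h2
      exact h2
    set Q : ℝ := ∑ z : X × Y, qt z * Real.log (qt z) with hQd
    set A : ℝ := ∑ z : X × Y, qt z * Real.log (p z) with hAd
    set B : ℝ := ∑ z : X × Y, qt z * Real.log (qX z.1) with hBd
    set C : ℝ := ∑ z : X × Y, qt z * Real.log (qY z.2) with hCd
    set R : ℝ := ∑ z : X × Y, qt z * Real.log (r z.2 z.1) with hRd
    set Bt : ℝ := ∑ z : X × Y, qt z * Real.log (∑ y, qt (z.1, y)) with hBtd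
    rw [hvStar]
    have hfr : (0:ℝ) ≤ 1 / (α - 1) := by positivity
    have hiden : 1 / (α - 1) * Real.log M - ((α / (1 - α)) * (Q - A) + (R - Bt))
        = 1 / (α - 1) * (Real.log M - (α * A + (1 - α) * B + (1 - α) * C - Q))
          + (Q - C - R) + (Bt - B) := by
      field_simp
      ring
    have hnn : 0 ≤ 1 / (α - 1) * (Real.log M - (α * A + (1 - α) * B + (1 - α) * C - Q)) :=
      mul_nonneg hfr (by linarith [hG3])
    linarith [hiden, hnn, hG1, hG2]
end

section
/- Let α ∈ (1,∞), let p_X be a strictly positive probability distribution on 𝒳 and p_{Y|X} a channel with p_{Y|X}(y|x) > 0 for all x, y. Then I_α^{LP} = sup over strictly positive reverse channels r_{X|Y} of ((2α−1)/(α−1)) · log Σ_x p_X(x)^{α/(2α−1)} ( Σ_y p_{Y|X}(y|x) r_{X|Y}(x|y)^{1−1/α} )^{α/(2α−1)}, and the supremum is attained. -/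
open Finset in
lemma sum_rpow_mul_rpow_ge {ι : Type*} [Fintype ι] [Nonempty ι] {α : ℝ} (hα : 1 < α)
    (a b : ι → ℝ) (ha : ∀ i, 0 ≤ a i) (hb : ∀ i, 0 < b i) :
    (∑ i, a i) ^ α * (∑ i, b i) ^ (1 - α) ≤ ∑ i, a i ^ α * b i ^ (1 - α) := by
  have hαpos : (0:ℝ) < α := lt_trans one_pos hα
  have hBpos : 0 < ∑ i, b i := Finset.sum_pos (fun i _ => hb i) Finset.univ_nonempty
  have key := Real.inner_le_weight_mul_Lp_of_nonneg Finset.univ hα.le b (fun i => a i / b i)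
      (fun i => (hb i).le) (fun i => div_nonneg (ha i) (hb i).le)
  have h1 : ∀ i, b i * (a i / b i) = a i := fun i => by
    rw [mul_div_assoc']; exact mul_div_cancel_left₀ (a i) (ne_of_gt (hb i))
  have h2 : ∀ i, b i * (a i / b i) ^ α = a i ^ α * b i ^ (1 - α) := by
    intro i
    rw [Real.div_rpow (ha i) (hb i).le, Real.rpow_sub (hb i), Real.rpow_one]
    ring
  simp only [h1, h2] at key
  set S := ∑ i, a i with hS
  set B := ∑ i, b i with hB
  set R := ∑ i, a i ^ α * b i ^ (1 - α) with hR
  have hSnn : 0 ≤ S := Finset.sum_nonneg fun i _ => ha i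
  have hRnn : 0 ≤ R := Finset.sum_nonneg fun i _ =>
    mul_nonneg (Real.rpow_nonneg (ha i) _) (Real.rpow_nonneg (hb i).le _)
  have key2 : S ^ α ≤ (B ^ (1 - α⁻¹) * R ^ α⁻¹) ^ α := by
    exact Real.rpow_le_rpow hSnn key hαpos.le
  rw [Real.mul_rpow (Real.rpow_nonneg hBpos.le _) (Real.rpow_nonneg hRnn _),
    ← Real.rpow_mul hBpos.le, ← Real.rpow_mul hRnn] at key2
  have e1 : (1 - α⁻¹) * α = α - 1 := by field_simp
  have e2 : α⁻¹ * α = 1 := inv_mul_cancel₀ (ne_of_gt hαpos)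
  rw [e1, e2, Real.rpow_one] at key2
  calc S ^ α * B ^ (1 - α)
      ≤ (B ^ (α - 1) * R) * B ^ (1 - α) := by
        apply mul_le_mul_of_nonneg_right key2 (Real.rpow_nonneg hBpos.le _)
    _ = R * (B ^ (α - 1) * B ^ (1 - α)) := by ring
    _ = R := by
        rw [← Real.rpow_add hBpos]
        norm_num

noncomputable def Fv {X Y : Type*} [Fintype X] [Fintype Y] (α : ℝ)
    (pX : X → ℝ) (pYX : X → Y → ℝ) (qX : X → ℝ) (qY : Y → ℝ) : ℝ :=
  ∑ x, ∑ y, (pX x * pYX x y) ^ α * (qX x * qY y) ^ (1 - α)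

lemma Fv_eq_X {X Y : Type*} [Fintype X] [Fintype Y] (α : ℝ)
    (pX : X → ℝ) (pYX : X → Y → ℝ) (qX : X → ℝ) (qY : Y → ℝ)
    (hqX : ∀ x, 0 ≤ qX x) (hqY : ∀ y, 0 ≤ qY y) :
    Fv α pX pYX qX qY
      = ∑ x, qX x ^ (1-α) * (∑ y, (pX x * pYX x y) ^ α * qY y ^ (1-α)) := by
  unfold Fv
  refine Finset.sum_congr rfl fun x _ => ?_
  rw [Finset.mul_sum]
  refine Finset.sum_congr rfl fun y _ => ?_
  rw [Real.mul_rpow (hqX x) (hqY y)]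
  ring

lemma Fv_eq_Y {X Y : Type*} [Fintype X] [Fintype Y] (α : ℝ)
    (pX : X → ℝ) (pYX : X → Y → ℝ) (qX : X → ℝ) (qY : Y → ℝ)
    (hqX : ∀ x, 0 ≤ qX x) (hqY : ∀ y, 0 ≤ qY y) :
    Fv α pX pYX qX qY
      = ∑ y, qY y ^ (1-α) * (∑ x, (pX x * pYX x y) ^ α * qX x ^ (1-α)) := by
  unfold Fv
  rw [Finset.sum_comm]
  refine Finset.sum_congr rfl fun y _ => ?_
  rw [Finset.mul_sum]
  refine Finset.sum_congr rfl fun x _ => ?_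
  rw [Real.mul_rpow (hqX x) (hqY y)]
  ring

lemma Fv_nonneg {X Y : Type*} [Fintype X] [Fintype Y] (α : ℝ)
    (pX : X → ℝ) (pYX : X → Y → ℝ) (qX : X → ℝ) (qY : Y → ℝ)
    (hP : ∀ x y, 0 ≤ pX x * pYX x y) (hqX : ∀ x, 0 ≤ qX x) (hqY : ∀ y, 0 ≤ qY y) :
    0 ≤ Fv α pX pYX qX qY :=
  Finset.sum_nonneg fun x _ => Finset.sum_nonneg fun y _ =>
    mul_nonneg (Real.rpow_nonneg (hP x y) _)
      (Real.rpow_nonneg (mul_nonneg (hqX x) (hqY y)) _)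

lemma deriv_kkt {ι : Type*} [Fintype ι] [DecidableEq ι] {α : ℝ} (hα : 1 < α) (w d : ι → ℝ)
    (hw : ∀ i, 0 < w i) (i1 i2 : ι) (h12 : i1 ≠ i2)
    (δ : ℝ) (hδ : 0 < δ)
    (hmin : ∀ e : ℝ, |e| < δ →
      ∑ i, w i ^ (1-α) * d i ≤
      ∑ i, (w i + e * ((if i = i1 then (1:ℝ) else 0) - if i = i2 then 1 else 0)) ^ (1-α) * d i) :
    d i1 * w i1 ^ (-α) = d i2 * w i2 ^ (-α) := by
  classical
  set a : ι → ℝ := fun i => (if i = i1 then (1:ℝ) else 0) - if i = i2 then 1 else 0 with ha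
  set φ : ℝ → ℝ := fun e => ∑ i, (w i + e * a i) ^ (1-α) * d i with hφ
  have hderiv : HasDerivAt φ (∑ i, (a i * (1-α) * w i ^ (1-α-1)) * d i) 0 := by
    apply HasDerivAt.fun_sum
    intro i _
    have h1 : HasDerivAt (fun e : ℝ => w i + e * a i) (a i) 0 := by
      simpa using ((hasDerivAt_id (0:ℝ)).mul_const (a i)).const_add (w i)
    have h2 := h1.rpow_const (p := 1-α) (Or.inl (by simpa using (hw i).ne'))
    simpa using h2.mul_const (d i)
  have hloc : IsLocalMin φ 0 := by
    have hev : ∀ᶠ e in nhds (0:ℝ), φ 0 ≤ φ e := by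
      rw [Metric.eventually_nhds_iff]
      refine ⟨δ, hδ, fun {e} he => ?_⟩
      have habs : |e| < δ := by simpa [Real.dist_eq] using he
      simpa [hφ, ha] using hmin e habs
    exact hev
  have h0 : (∑ i, (a i * (1-α) * w i ^ (1-α-1)) * d i) = 0 := by
    rw [← hderiv.deriv]; exact hloc.deriv_eq_zero
  have hsum : ∑ i, (a i * (1-α) * w i ^ (1-α-1)) * d i
      = (1-α) * (d i1 * w i1 ^ (-α) - d i2 * w i2 ^ (-α)) := by
    rw [Finset.sum_eq_add_of_mem i1 i2 (Finset.mem_univ _) (Finset.mem_univ _) h12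
      (fun c _ hc => by simp [ha, hc.1, hc.2])]
    have e1 : (1:ℝ) - α - 1 = -α := by ring
    simp only [ha, if_pos rfl, if_neg h12, if_neg h12.symm, e1]
    norm_num
    ring
  rw [hsum] at h0
  have hne : (1:ℝ) - α ≠ 0 := by intro h; linarith
  have := mul_eq_zero.mp h0
  rcases this with h | h
  · exact absurd h hne
  · linarith [sub_eq_zero.mp h]

lemma kkt_normalize {ι : Type*} [Fintype ι] {α : ℝ} (w d : ι → ℝ)
    (hw : ∀ i, 0 < w i) (hsum : ∑ i, w i = 1)
    (h : ∀ i j, d i * w i ^ (-α) = d j * w j ^ (-α)) (i : ι) :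
    d i = (∑ j, w j ^ (1-α) * d j) * w i ^ α := by
  have key : ∀ j, w j ^ (1-α) * d j * w i ^ α = w j * d i := by
    intro j
    have hj := congrArg (· * (w j ^ α * w i ^ α)) (h j i)
    have cancel : ∀ (k : ι) (c : ℝ), w k ^ (-α) * w k ^ α = 1 := fun k _ => by
      rw [← Real.rpow_add (hw k)]; simp
    have e1 : d j * w j ^ (-α) * (w j ^ α * w i ^ α) = (d j * w i ^ α) * (w j ^ (-α) * w j ^ α) := by ring
    have e2 : d i * w i ^ (-α) * (w j ^ α * w i ^ α) = (d i * w j ^ α) * (w i ^ (-α) * w i ^ α) := by ring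
    rw [e1, e2, cancel j 0, cancel i 0, mul_one, mul_one] at hj
    have e3 : w j ^ (1-α) * w j ^ α = w j := by
      rw [← Real.rpow_add (hw j)]; norm_num
    calc w j ^ (1-α) * d j * w i ^ α = w j ^ (1-α) * (d j * w i ^ α) := by ring
      _ = w j ^ (1-α) * (d i * w j ^ α) := by rw [hj]
      _ = (w j ^ (1-α) * w j ^ α) * d i := by ring
      _ = w j * d i := by rw [e3]
  calc d i = (∑ j, w j) * d i := by rw [hsum, one_mul]
    _ = ∑ j, w j * d i := by rw [Finset.sum_mul]
    _ = ∑ j, w j ^ (1-α) * d j * w i ^ α := by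
        exact (Finset.sum_congr rfl fun j _ => (key j)).symm
    _ = (∑ j, w j ^ (1-α) * d j) * w i ^ α := by rw [Finset.sum_mul]

/-- Key inequality: `T(r) ^ (2α-1) ≤ F(qX,qY)` for positive PMFs and positive reverse channel. -/
lemma key_ineq {X Y : Type*} [Fintype X] [Fintype Y] [Nonempty X] [Nonempty Y]
    {α : ℝ} (hα : 1 < α)
    (pX : X → ℝ) (hpXpos : ∀ x, 0 < pX x)
    (pYX : X → Y → ℝ) (hpYXpos : ∀ x y, 0 < pYX x y)
    (qX : X → ℝ) (qY : Y → ℝ) (hqX : ∀ x, 0 < qX x) (hqY : ∀ y, 0 < qY y)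
    (hqX1 : ∑ x, qX x = 1) (hqY1 : ∑ y, qY y = 1)
    (r : Y → X → ℝ) (hr : ∀ y x, 0 < r y x) (hr1 : ∀ y, ∑ x, r y x = 1) :
    (∑ x, pX x ^ (α / (2 * α - 1)) *
        (∑ y, pYX x y * r y x ^ (1 - 1 / α)) ^ (α / (2 * α - 1))) ^ (2 * α - 1)
      ≤ ∑ x, ∑ y, (pX x * pYX x y) ^ α * (qX x * qY y) ^ (1 - α) := by
  have hαpos : (0:ℝ) < α := lt_trans one_pos hα
  have hα1 : (0:ℝ) < α - 1 := by linarith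
  have h2α1 : (0:ℝ) < 2 * α - 1 := by linarith
  set u : ℝ := α / (2 * α - 1) with hu
  set β : ℝ := 1 - 1 / α with hβ
  have hβpos : 0 < β := by
    rw [hβ]; have : 1 / α < 1 := by rw [div_lt_one hαpos]; exact hα
    linarith
  set s : X → ℝ := fun x => ∑ y, pYX x y * r y x ^ β with hs
  have hspos : ∀ x, 0 < s x := fun x => Finset.sum_pos
    (fun y _ => mul_pos (hpYXpos x y) (Real.rpow_pos_of_pos (hr y x) _)) Finset.univ_nonempty
  set t : X → ℝ := fun x => ∑ y, qY y * r y x with ht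
  have htpos : ∀ x, 0 < t x := fun x => Finset.sum_pos
    (fun y _ => mul_pos (hqY y) (hr y x)) Finset.univ_nonempty
  have ht1 : ∑ x, t x = 1 := by
    rw [ht]
    rw [Finset.sum_comm]
    rw [show ∑ y, ∑ x, qY y * r y x = ∑ y, qY y * ∑ x, r y x by
      refine Finset.sum_congr rfl fun y _ => ?_; rw [Finset.mul_sum]]
    simp only [hr1, mul_one, hqY1]
  -- Step 1 : for each x
  have step1 : ∀ x, (pX x * s x) ^ α * (t x) ^ (1 - α)
      ≤ ∑ y, (pX x * pYX x y) ^ α * (qY y) ^ (1 - α) := by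
    intro x
    have key := sum_rpow_mul_rpow_ge hα (fun y => pX x * pYX x y * r y x ^ β)
      (fun y => qY y * r y x)
      (fun y => mul_nonneg (mul_nonneg (hpXpos x).le (hpYXpos x y).le)
        (Real.rpow_nonneg (hr y x).le _))
      (fun y => mul_pos (hqY y) (hr y x))
    have ea : ∑ y, pX x * pYX x y * r y x ^ β = pX x * s x := by
      rw [hs, Finset.mul_sum]; refine Finset.sum_congr rfl fun y _ => by ring
    have eterm : ∀ y, (pX x * pYX x y * r y x ^ β) ^ α * (qY y * r y x) ^ (1 - α)
        = (pX x * pYX x y) ^ α * (qY y) ^ (1 - α) := by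
      intro y
      rw [Real.mul_rpow (mul_nonneg (hpXpos x).le (hpYXpos x y).le)
        (Real.rpow_nonneg (hr y x).le _),
        Real.mul_rpow (hqY y).le (hr y x).le,
        ← Real.rpow_mul (hr y x).le]
      have hrr : r y x ^ (β * α) * r y x ^ (1 - α) = 1 := by
        rw [← Real.rpow_add (hr y x)]
        have hexp : β * α + (1 - α) = 0 := by rw [hβ]; field_simp; ring
        rw [hexp, Real.rpow_zero]
      calc (pX x * pYX x y) ^ α * r y x ^ (β * α) * (qY y ^ (1 - α) * r y x ^ (1 - α))
          = (pX x * pYX x y) ^ α * qY y ^ (1 - α) * (r y x ^ (β * α) * r y x ^ (1 - α)) := by ring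
        _ = (pX x * pYX x y) ^ α * qY y ^ (1 - α) := by rw [hrr, mul_one]
    calc (pX x * s x) ^ α * t x ^ (1 - α)
        = (∑ y, pX x * pYX x y * r y x ^ β) ^ α * (∑ y, qY y * r y x) ^ (1 - α) := by
          rw [ea]
      _ ≤ ∑ y, (pX x * pYX x y * r y x ^ β) ^ α * (qY y * r y x) ^ (1 - α) := key
      _ = ∑ y, (pX x * pYX x y) ^ α * (qY y) ^ (1 - α) := by
          exact Finset.sum_congr rfl fun y _ => eterm y
  -- F ≥ middle quantity
  have mid : ∑ x, (qX x) ^ (1 - α) * ((pX x * s x) ^ α * (t x) ^ (1 - α))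
      ≤ ∑ x, ∑ y, (pX x * pYX x y) ^ α * (qX x * qY y) ^ (1 - α) := by
    refine Finset.sum_le_sum fun x _ => ?_
    have : ∑ y, (pX x * pYX x y) ^ α * (qX x * qY y) ^ (1 - α)
        = qX x ^ (1 - α) * ∑ y, (pX x * pYX x y) ^ α * (qY y) ^ (1 - α) := by
      rw [Finset.mul_sum]
      refine Finset.sum_congr rfl fun y _ => ?_
      rw [Real.mul_rpow (hqX x).le (hqY y).le]; ring
    rw [this]
    exact mul_le_mul_of_nonneg_left (step1 x) (Real.rpow_nonneg (hqX x).le _)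
  -- Step 2 : Hölder over x
  have step2 : (∑ x, pX x ^ u * (s x) ^ u) ^ (2 * α - 1)
      ≤ ∑ x, (qX x) ^ (1 - α) * ((pX x * s x) ^ α * (t x) ^ (1 - α)) := by
    set p : ℝ := 2 * α - 1 with hp
    set q : ℝ := (2 * α - 1) / (2 * α - 2) with hq
    have hppos : 0 < p := h2α1
    have h2α2 : (0:ℝ) < 2 * α - 2 := by linarith
    have hpq : p.HolderConjugate q := by
      rw [Real.holderConjugate_iff]
      constructor
      · rw [hp]; linarith
      · rw [hp, hq]; have hne1 : (2*α-1:ℝ) ≠ 0 := (by linarith); have hne2 : (α*2-1:ℝ) ≠ 0 := (by linarith); field_simp; ring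
    set f : X → ℝ := fun x => (qX x ^ (1-α) * ((pX x * s x) ^ α * t x ^ (1 - α))) ^ (1/p)
      with hf
    set g : X → ℝ := fun x => (qX x * t x) ^ ((α-1)/p) with hg
    have hcnn : ∀ x, 0 ≤ qX x ^ (1-α) * ((pX x * s x) ^ α * t x ^ (1 - α)) := fun x =>
      mul_nonneg (Real.rpow_nonneg (hqX x).le _)
        (mul_nonneg (Real.rpow_nonneg (mul_pos (hpXpos x) (hspos x)).le _)
          (Real.rpow_nonneg (htpos x).le _))
    have hfg : ∀ x, pX x ^ u * s x ^ u = f x * g x := by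
      intro x
      have hps : (0:ℝ) < pX x * s x := mul_pos (hpXpos x) (hspos x)
      rw [hf, hg]; beta_reduce
      rw [Real.mul_rpow (Real.rpow_nonneg (hqX x).le _)
        (mul_nonneg (Real.rpow_nonneg hps.le _) (Real.rpow_nonneg (htpos x).le _)),
        Real.mul_rpow (Real.rpow_nonneg hps.le _) (Real.rpow_nonneg (htpos x).le _),
        Real.mul_rpow (hqX x).le (htpos x).le,
        ← Real.rpow_mul (hqX x).le, ← Real.rpow_mul hps.le, ← Real.rpow_mul (htpos x).le]
      have grp : qX x ^ ((1-α) * (1/p)) * ((pX x * s x) ^ (α * (1/p)) * t x ^ ((1-α) * (1/p)))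
          * (qX x ^ ((α-1)/p) * t x ^ ((α-1)/p))
          = (qX x ^ ((1-α) * (1/p)) * qX x ^ ((α-1)/p))
            * (t x ^ ((1-α) * (1/p)) * t x ^ ((α-1)/p)) * (pX x * s x) ^ (α * (1/p)) := by
        ring
      rw [grp, ← Real.rpow_add (hqX x), ← Real.rpow_add (htpos x)]
      have e0 : (1-α) * (1/p) + (α-1)/p = 0 := by rw [hp]; field_simp; ring
      have eu : α * (1/p) = u := by rw [hu, hp]; field_simp
      rw [e0, Real.rpow_zero, one_mul, Real.rpow_zero, one_mul, eu, Real.mul_rpow (hpXpos x).le (hspos x).le]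
    have holder := Real.inner_le_Lp_mul_Lq_of_nonneg (Finset.univ) hpq
      (fun x _ => Real.rpow_nonneg (hcnn x) (1/p) : ∀ x ∈ Finset.univ, 0 ≤ f x)
      (fun x _ => Real.rpow_nonneg (mul_pos (hqX x) (htpos x)).le _ : ∀ x ∈ Finset.univ, 0 ≤ g x)
    have hfp : ∀ x, f x ^ p = qX x ^ (1-α) * ((pX x * s x) ^ α * t x ^ (1 - α)) := by
      intro x
      rw [hf]; beta_reduce; rw [← Real.rpow_mul (hcnn x)]
      rw [show 1/p * p = 1 by field_simp, Real.rpow_one]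
    have hgq : ∀ x, g x ^ q = (qX x * t x) ^ (1/2 : ℝ) := by
      intro x
      rw [hg]; beta_reduce; rw [← Real.rpow_mul (mul_pos (hqX x) (htpos x)).le]
      congr 1
      rw [hp, hq]
      have hne1 : (2*α-1:ℝ) ≠ 0 := (by linarith); have hne2 : (α*2-1:ℝ) ≠ 0 := (by linarith); field_simp
    have hCS : ∑ x, (qX x * t x) ^ (1/2 : ℝ) ≤ 1 := by
      have conj2 : (2:ℝ).HolderConjugate 2 := by constructor <;> norm_num
      have cs := Real.inner_le_Lp_mul_Lq_of_nonneg (Finset.univ) conj2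
        (fun x _ => Real.rpow_nonneg (hqX x).le (1/2 : ℝ))
        (fun x _ => Real.rpow_nonneg (htpos x).le (1/2 : ℝ))
      have e1 : ∀ x, qX x ^ (1/2:ℝ) * t x ^ (1/2:ℝ) = (qX x * t x) ^ (1/2:ℝ) := fun x =>
        (Real.mul_rpow (hqX x).le (htpos x).le).symm
      have e2 : ∀ x, (qX x ^ (1/2:ℝ)) ^ (2:ℝ) = qX x := by
        intro x
        rw [← Real.rpow_mul (hqX x).le]
        norm_num
      have e3 : ∀ x, (t x ^ (1/2:ℝ)) ^ (2:ℝ) = t x := by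
        intro x
        rw [← Real.rpow_mul (htpos x).le]
        norm_num
      simp only [e1, e2, e3, hqX1, ht1] at cs
      simpa using cs
    have hTnn : 0 ≤ ∑ x, f x * g x := Finset.sum_nonneg fun x _ =>
      mul_nonneg (Real.rpow_nonneg (hcnn x) _) (Real.rpow_nonneg (mul_pos (hqX x) (htpos x)).le _)
    have hA2nn : 0 ≤ ∑ x, qX x ^ (1-α) * ((pX x * s x) ^ α * t x ^ (1 - α)) :=
      Finset.sum_nonneg fun x _ => hcnn x
    have hgq1 : (∑ x, g x ^ q) ^ (1/q) ≤ 1 := by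
      apply Real.rpow_le_one (Finset.sum_nonneg fun x _ => Real.rpow_nonneg
        (Real.rpow_nonneg (mul_pos (hqX x) (htpos x)).le _) _)
      · calc ∑ x, g x ^ q = ∑ x, (qX x * t x) ^ (1/2:ℝ) :=
              Finset.sum_congr rfl fun x _ => hgq x
          _ ≤ 1 := hCS
      · positivity
    have step : ∑ x, f x * g x ≤ (∑ x, f x ^ p) ^ (1/p) := by
      calc ∑ x, f x * g x ≤ (∑ x, f x ^ p) ^ (1/p) * (∑ x, g x ^ q) ^ (1/q) := holder
        _ ≤ (∑ x, f x ^ p) ^ (1/p) * 1 := by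
            apply mul_le_mul_of_nonneg_left hgq1
            exact Real.rpow_nonneg (Finset.sum_nonneg fun x _ =>
              Real.rpow_nonneg (Real.rpow_nonneg (hcnn x) _) _) _
        _ = (∑ x, f x ^ p) ^ (1/p) := mul_one _
    have hsum_eq : ∑ x, pX x ^ u * s x ^ u = ∑ x, f x * g x :=
      Finset.sum_congr rfl fun x _ => hfg x
    have hfpsum : ∑ x, f x ^ p = ∑ x, qX x ^ (1-α) * ((pX x * s x) ^ α * t x ^ (1 - α)) :=
      Finset.sum_congr rfl fun x _ => hfp x
    calc (∑ x, pX x ^ u * s x ^ u) ^ p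
        ≤ ((∑ x, f x ^ p) ^ (1/p)) ^ p := by
          apply Real.rpow_le_rpow (by rw [hsum_eq]; exact hTnn) (by rw [hsum_eq]; exact step)
            hppos.le
      _ = ∑ x, f x ^ p := by
          rw [← Real.rpow_mul (by rw [hfpsum]; exact hA2nn)]
          rw [show 1/p * p = 1 by field_simp, Real.rpow_one]
      _ = _ := hfpsum
  calc (∑ x, pX x ^ u * (s x) ^ u) ^ (2*α-1)
      ≤ ∑ x, (qX x) ^ (1 - α) * ((pX x * s x) ^ α * (t x) ^ (1 - α)) := step2
    _ ≤ _ := mid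

set_option maxHeartbeats 2000000 in
lemma exists_minimizer {X Y : Type*} [Fintype X] [Fintype Y] [Nonempty X] [Nonempty Y]
    {α : ℝ} (hα : 1 < α)
    (pX : X → ℝ) (pYX : X → Y → ℝ) (hP : ∀ x y, 0 < pX x * pYX x y) :
    ∃ qX : X → ℝ, ∃ qY : Y → ℝ, (∀ x, 0 < qX x) ∧ (∀ y, 0 < qY y) ∧
      (∑ x, qX x = 1) ∧ (∑ y, qY y = 1) ∧
      (∀ x, (∑ y, (pX x * pYX x y) ^ α * qY y ^ (1-α))
          = Fv α pX pYX qX qY * qX x ^ α) ∧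
      (∀ y, (∑ x, (pX x * pYX x y) ^ α * qX x ^ (1-α))
          = Fv α pX pYX qX qY * qY y ^ α) ∧
      (∀ qX' : X → ℝ, ∀ qY' : Y → ℝ, (∀ x, 0 < qX' x) → (∀ y, 0 < qY' y) →
        (∑ x, qX' x = 1) → (∑ y, qY' y = 1) →
        Fv α pX pYX qX qY ≤ Fv α pX pYX qX' qY') := by
  classical
  have hα1 : (0:ℝ) < α - 1 := by linarith
  -- minimum of p
  obtain ⟨z0, _, hz0⟩ := Finset.exists_min_image (Finset.univ : Finset (X × Y))
    (fun z => pX z.1 * pYX z.1 z.2) ⟨Classical.arbitrary _, Finset.mem_univ _⟩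
  set pm : ℝ := pX z0.1 * pYX z0.1 z0.2 with hpm
  have hpmpos : 0 < pm := hP _ _
  have hpmle : ∀ x y, pm ≤ pX x * pYX x y := fun x y => hz0 (x, y) (Finset.mem_univ _)
  -- uniform distributions
  set uX : X → ℝ := fun _ => (Fintype.card X : ℝ)⁻¹ with huX
  set uY : Y → ℝ := fun _ => (Fintype.card Y : ℝ)⁻¹ with huY
  have hcX : (0:ℝ) < (Fintype.card X : ℝ) := by
    exact_mod_cast Fintype.card_pos
  have hcY : (0:ℝ) < (Fintype.card Y : ℝ) := by
    exact_mod_cast Fintype.card_pos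
  have huX1 : ∑ x, uX x = 1 := by
    simp only [huX, Finset.sum_const, Finset.card_univ, nsmul_eq_mul]
    exact mul_inv_cancel₀ hcX.ne'
  have huY1 : ∑ y, uY y = 1 := by
    simp only [huY, Finset.sum_const, Finset.card_univ, nsmul_eq_mul]
    exact mul_inv_cancel₀ hcY.ne'
  set M : ℝ := Fv α pX pYX uX uY with hM
  have hM0 : 0 ≤ M := Fv_nonneg α pX pYX uX uY (fun x y => (hP x y).le)
    (fun _ => by positivity) (fun _ => by positivity)
  -- choice of ε
  set ε : ℝ := min (min (Fintype.card X : ℝ)⁻¹ (Fintype.card Y : ℝ)⁻¹)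
    ((pm ^ α / (M + 1)) ^ (α - 1)⁻¹) with hε
  have hεpos : 0 < ε := by
    apply lt_min (lt_min (inv_pos.mpr hcX) (inv_pos.mpr hcY))
    apply Real.rpow_pos_of_pos
    positivity
  have hbound : ∀ c : ℝ, 0 < c → c ≤ ε → M + 1 ≤ c ^ (1 - α) * pm ^ α := by
    intro c hc hcε
    have hle : c ≤ (pm ^ α / (M + 1)) ^ (α - 1)⁻¹ := le_trans hcε (min_le_right _ _)
    have h1 : ((pm ^ α / (M + 1)) ^ (α - 1)⁻¹) ^ (1 - α) ≤ c ^ (1 - α) :=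
      Real.rpow_le_rpow_of_nonpos hc hle (by linarith)
    have h2 : ((pm ^ α / (M + 1)) ^ (α - 1)⁻¹) ^ (1 - α)
        = (M + 1) / pm ^ α := by
      rw [← Real.rpow_mul (by positivity)]
      have : (α - 1)⁻¹ * (1 - α) = -1 := by field_simp; ring
      rw [this, Real.rpow_neg_one, inv_div]
    rw [h2] at h1
    calc M + 1 = (M + 1) / pm ^ α * pm ^ α := by field_simp
      _ ≤ c ^ (1 - α) * pm ^ α := by
          apply mul_le_mul_of_nonneg_right h1 (by positivity)
  -- the compact set
  set K : Set ((X → ℝ) × (Y → ℝ)) :=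
    ((Set.univ.pi fun _ : X => Set.Icc ε 1) ∩ {f | ∑ x, f x = 1}) ×ˢ
    ((Set.univ.pi fun _ : Y => Set.Icc ε 1) ∩ {f | ∑ y, f y = 1}) with hK
  have hKmem : ∀ q : (X → ℝ) × (Y → ℝ), q ∈ K ↔
      ((∀ x, q.1 x ∈ Set.Icc ε 1) ∧ ∑ x, q.1 x = 1) ∧
      ((∀ y, q.2 y ∈ Set.Icc ε 1) ∧ ∑ y, q.2 y = 1) := by
    intro q
    simp [hK, Set.mem_pi, Set.mem_prod, Pi.le_def, forall_and]
  have hKcomp : IsCompact K := by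
    apply IsCompact.prod
    · exact (isCompact_univ_pi fun _ => isCompact_Icc).inter_right
        (isClosed_eq (continuous_finset_sum _ fun i _ => continuous_apply i) continuous_const)
    · exact (isCompact_univ_pi fun _ => isCompact_Icc).inter_right
        (isClosed_eq (continuous_finset_sum _ fun i _ => continuous_apply i) continuous_const)
  have hεX : ε ≤ (Fintype.card X : ℝ)⁻¹ := le_trans (min_le_left _ _) (min_le_left _ _)
  have hεY : ε ≤ (Fintype.card Y : ℝ)⁻¹ := le_trans (min_le_left _ _) (min_le_right _ _)
  have hXinv1 : (Fintype.card X : ℝ)⁻¹ ≤ 1 := by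
    rw [inv_le_one_iff₀]
    right
    exact_mod_cast Fintype.card_pos
  have hYinv1 : (Fintype.card Y : ℝ)⁻¹ ≤ 1 := by
    rw [inv_le_one_iff₀]
    right
    exact_mod_cast Fintype.card_pos
  have hune : (uX, uY) ∈ K := by
    rw [hKmem]
    refine ⟨⟨fun x => ⟨hεX, hXinv1⟩, huX1⟩, ⟨fun y => ⟨hεY, hYinv1⟩, huY1⟩⟩
  have hKne : K.Nonempty := ⟨(uX, uY), hune⟩
  -- continuity
  have hcont : ContinuousOn (fun q : (X → ℝ) × (Y → ℝ) => Fv α pX pYX q.1 q.2) K := by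
    unfold Fv
    apply continuousOn_finset_sum
    intro x _
    apply continuousOn_finset_sum
    intro y _
    apply ContinuousOn.mul continuousOn_const
    apply ContinuousOn.rpow_const
    · exact (((continuous_apply x).comp continuous_fst).mul
        ((continuous_apply y).comp continuous_snd)).continuousOn
    · intro q hq
      rw [hKmem] at hq
      left
      have h1 : 0 < q.1 x := lt_of_lt_of_le hεpos (hq.1.1 x).1
      have h2 : 0 < q.2 y := lt_of_lt_of_le hεpos (hq.2.1 y).1
      positivity
  obtain ⟨q0, hq0K, hq0min⟩ := hKcomp.exists_isMinOn hKne hcont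
  rw [hKmem] at hq0K
  obtain ⟨⟨hq01mem, hq01sum⟩, hq02mem, hq02sum⟩ := hq0K
  have hq01pos : ∀ x, 0 < q0.1 x := fun x => lt_of_lt_of_le hεpos (hq01mem x).1
  have hq02pos : ∀ y, 0 < q0.2 y := fun y => lt_of_lt_of_le hεpos (hq02mem y).1
  have hq0M : Fv α pX pYX q0.1 q0.2 ≤ M := hq0min hune
  -- lower bound when some coordinate is small
  have hFlb : ∀ (q1 : X → ℝ) (q2 : Y → ℝ), (∀ x, 0 < q1 x) → (∀ y, 0 < q2 y) →
      (∀ x, q1 x ≤ 1) → (∀ y, q2 y ≤ 1) →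
      ((∃ x, q1 x ≤ ε) ∨ (∃ y, q2 y ≤ ε)) → M + 1 ≤ Fv α pX pYX q1 q2 := by
    intro q1 q2 h1 h2 h1le h2le hsmall
    have key : ∀ x y, q1 x * q2 y ≤ ε → M + 1 ≤ Fv α pX pYX q1 q2 := by
      intro x y hxy
      have hc : 0 < q1 x * q2 y := mul_pos (h1 x) (h2 y)
      have hterm : (q1 x * q2 y) ^ (1-α) * pm ^ α
          ≤ (pX x * pYX x y) ^ α * (q1 x * q2 y) ^ (1 - α) := by
        rw [mul_comm]
        apply mul_le_mul_of_nonneg_right _ (Real.rpow_nonneg hc.le _)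
        exact Real.rpow_le_rpow hpmpos.le (hpmle x y) (by linarith)
      have hsum : (pX x * pYX x y) ^ α * (q1 x * q2 y) ^ (1 - α)
          ≤ Fv α pX pYX q1 q2 := by
        unfold Fv
        calc (pX x * pYX x y) ^ α * (q1 x * q2 y) ^ (1 - α)
            ≤ ∑ y', (pX x * pYX x y') ^ α * (q1 x * q2 y') ^ (1 - α) := by
              apply Finset.single_le_sum (fun y' _ => mul_nonneg
                (Real.rpow_nonneg (hP x y').le _)
                (Real.rpow_nonneg (mul_pos (h1 x) (h2 y')).le _)) (Finset.mem_univ y)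
          _ ≤ _ := by
              apply Finset.single_le_sum (fun x' _ => Finset.sum_nonneg fun y' _ =>
                mul_nonneg (Real.rpow_nonneg (hP x' y').le _)
                  (Real.rpow_nonneg (mul_pos (h1 x') (h2 y')).le _)) (Finset.mem_univ x)
      exact le_trans (le_trans (hbound _ hc hxy) hterm) hsum
    rcases hsmall with ⟨x, hx⟩ | ⟨y, hy⟩
    · obtain y := Classical.arbitrary Y
      refine key x y ?_
      calc q1 x * q2 y ≤ q1 x * 1 := by
            apply mul_le_mul_of_nonneg_left (h2le y) (h1 x).le
        _ = q1 x := mul_one _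
        _ ≤ ε := hx
    · obtain x := Classical.arbitrary X
      refine key x y ?_
      calc q1 x * q2 y ≤ 1 * q2 y := by
            apply mul_le_mul_of_nonneg_right (h1le x) (h2 y).le
        _ = q2 y := one_mul _
        _ ≤ ε := hy
  -- strict interiority
  have hq1le : ∀ x, q0.1 x ≤ 1 := fun x => (hq01mem x).2
  have hq2le : ∀ y, q0.2 y ≤ 1 := fun y => (hq02mem y).2
  have hgtX : ∀ x, ε < q0.1 x := by
    intro x
    by_contra hle
    push_neg at hle
    have h := hFlb q0.1 q0.2 hq01pos hq02pos hq1le hq2le (Or.inl ⟨x, hle⟩)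
    linarith
  have hgtY : ∀ y, ε < q0.2 y := by
    intro y
    by_contra hle
    push_neg at hle
    have h := hFlb q0.1 q0.2 hq01pos hq02pos hq1le hq2le (Or.inr ⟨y, hle⟩)
    linarith
  -- global minimality among positive PMFs
  have hglob : ∀ (q1 : X → ℝ) (q2 : Y → ℝ), (∀ x, 0 < q1 x) → (∀ y, 0 < q2 y) →
      (∑ x, q1 x = 1) → (∑ y, q2 y = 1) →
      Fv α pX pYX q0.1 q0.2 ≤ Fv α pX pYX q1 q2 := by
    intro q1 q2 h1 h2 hs1 hs2
    have h1le : ∀ x, q1 x ≤ 1 := by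
      intro x
      rw [← hs1]
      exact Finset.single_le_sum (fun i _ => (h1 i).le) (Finset.mem_univ x)
    have h2le : ∀ y, q2 y ≤ 1 := by
      intro y
      rw [← hs2]
      exact Finset.single_le_sum (fun i _ => (h2 i).le) (Finset.mem_univ y)
    by_cases hcase : (∀ x, ε ≤ q1 x) ∧ (∀ y, ε ≤ q2 y)
    · exact hq0min ((hKmem (q1, q2)).mpr
        ⟨⟨fun x => ⟨hcase.1 x, h1le x⟩, hs1⟩, fun y => ⟨hcase.2 y, h2le y⟩, hs2⟩)
    · rw [not_and_or] at hcase
      have hbig : M + 1 ≤ Fv α pX pYX q1 q2 := by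
        apply hFlb q1 q2 h1 h2 h1le h2le
        rcases hcase with h | h
        · push_neg at h
          obtain ⟨x, hx⟩ := h
          exact Or.inl ⟨x, hx.le⟩
        · push_neg at h
          obtain ⟨y, hy⟩ := h
          exact Or.inr ⟨y, hy.le⟩
      linarith
  -- KKT, X side
  set dd : X → ℝ := fun x => ∑ y, (pX x * pYX x y) ^ α * q0.2 y ^ (1-α) with hdd
  have hFX : Fv α pX pYX q0.1 q0.2 = ∑ x, q0.1 x ^ (1-α) * dd x :=
    Fv_eq_X α pX pYX q0.1 q0.2 (fun x => (hq01pos x).le) (fun y => (hq02pos y).le)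
  have hkktX : ∀ x1 x2, dd x1 * q0.1 x1 ^ (-α) = dd x2 * q0.1 x2 ^ (-α) := by
    intro x1 x2
    rcases eq_or_ne x1 x2 with rfl | h12
    · rfl
    apply deriv_kkt hα q0.1 dd hq01pos x1 x2 h12 (min (q0.1 x1 - ε) (q0.1 x2 - ε))
      (lt_min (by linarith [hgtX x1]) (by linarith [hgtX x2]))
    intro e he
    have habs := abs_lt.mp he
    have hd1 : min (q0.1 x1 - ε) (q0.1 x2 - ε) ≤ q0.1 x1 - ε := min_le_left _ _
    have hd2 : min (q0.1 x1 - ε) (q0.1 x2 - ε) ≤ q0.1 x2 - ε := min_le_right _ _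
    have hq12 : q0.1 x1 + q0.1 x2 ≤ 1 := by
      rw [← hq01sum]
      calc q0.1 x1 + q0.1 x2 = ∑ x ∈ ({x1, x2} : Finset X), q0.1 x :=
          (Finset.sum_pair h12).symm
        _ ≤ ∑ x, q0.1 x := Finset.sum_le_sum_of_subset_of_nonneg
            (Finset.subset_univ _) fun i _ _ => (hq01pos i).le
    set q1' : X → ℝ := fun x =>
      q0.1 x + e * ((if x = x1 then (1:ℝ) else 0) - if x = x2 then 1 else 0) with hq1'
    have hmem' : ∀ x, ε ≤ q1' x ∧ q1' x ≤ 1 := by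
      intro x
      rw [hq1']; beta_reduce
      by_cases hx1 : x = x1
      · subst hx1
        rw [if_pos rfl, if_neg h12]
        constructor <;> [linarith; linarith]
      · by_cases hx2 : x = x2
        · subst hx2
          rw [if_neg hx1, if_pos rfl]
          constructor <;> [linarith; linarith]
        · rw [if_neg hx1, if_neg hx2]
          simp only [sub_zero, sub_self, mul_zero, add_zero]
          exact ⟨(hq01mem x).1, (hq01mem x).2⟩
    have hsum' : ∑ x, q1' x = 1 := by
      rw [hq1']; beta_reduce
      rw [Finset.sum_add_distrib, hq01sum, ← Finset.mul_sum, Finset.sum_sub_distrib]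
      rw [Finset.sum_ite_eq' Finset.univ x1 (fun _ => (1:ℝ)),
        Finset.sum_ite_eq' Finset.univ x2 (fun _ => (1:ℝ))]
      simp
    have hmemK : (q1', q0.2) ∈ K := (hKmem _).mpr
      ⟨⟨fun x => hmem' x, hsum'⟩, fun y => ⟨(hgtY y).le, hq2le y⟩, hq02sum⟩
    have hle := hq0min hmemK
    have hF' : Fv α pX pYX q1' q0.2 = ∑ x, q1' x ^ (1-α) * dd x :=
      Fv_eq_X α pX pYX q1' q0.2 (fun x => le_trans hεpos.le (hmem' x).1)
        (fun y => (hq02pos y).le)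
    calc ∑ x, q0.1 x ^ (1-α) * dd x = Fv α pX pYX q0.1 q0.2 := hFX.symm
      _ ≤ Fv α pX pYX q1' q0.2 := hle
      _ = ∑ x, q1' x ^ (1-α) * dd x := hF'
  have hddX : ∀ x, dd x = Fv α pX pYX q0.1 q0.2 * q0.1 x ^ α := by
    intro x
    rw [hFX]
    exact kkt_normalize q0.1 dd hq01pos hq01sum hkktX x
  -- KKT, Y side
  set ee : Y → ℝ := fun y => ∑ x, (pX x * pYX x y) ^ α * q0.1 x ^ (1-α) with hee
  have hFY : Fv α pX pYX q0.1 q0.2 = ∑ y, q0.2 y ^ (1-α) * ee y :=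
    Fv_eq_Y α pX pYX q0.1 q0.2 (fun x => (hq01pos x).le) (fun y => (hq02pos y).le)
  have hkktY : ∀ y1 y2, ee y1 * q0.2 y1 ^ (-α) = ee y2 * q0.2 y2 ^ (-α) := by
    intro y1 y2
    rcases eq_or_ne y1 y2 with rfl | h12
    · rfl
    apply deriv_kkt hα q0.2 ee hq02pos y1 y2 h12 (min (q0.2 y1 - ε) (q0.2 y2 - ε))
      (lt_min (by linarith [hgtY y1]) (by linarith [hgtY y2]))
    intro e he
    have habs := abs_lt.mp he
    have hd1 : min (q0.2 y1 - ε) (q0.2 y2 - ε) ≤ q0.2 y1 - ε := min_le_left _ _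
    have hd2 : min (q0.2 y1 - ε) (q0.2 y2 - ε) ≤ q0.2 y2 - ε := min_le_right _ _
    have hq12 : q0.2 y1 + q0.2 y2 ≤ 1 := by
      rw [← hq02sum]
      calc q0.2 y1 + q0.2 y2 = ∑ y ∈ ({y1, y2} : Finset Y), q0.2 y :=
          (Finset.sum_pair h12).symm
        _ ≤ ∑ y, q0.2 y := Finset.sum_le_sum_of_subset_of_nonneg
            (Finset.subset_univ _) fun i _ _ => (hq02pos i).le
    set q2' : Y → ℝ := fun y =>
      q0.2 y + e * ((if y = y1 then (1:ℝ) else 0) - if y = y2 then 1 else 0) with hq2'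
    have hmem' : ∀ y, ε ≤ q2' y ∧ q2' y ≤ 1 := by
      intro y
      rw [hq2']; beta_reduce
      by_cases hy1 : y = y1
      · subst hy1
        rw [if_pos rfl, if_neg h12]
        constructor <;> [linarith; linarith]
      · by_cases hy2 : y = y2
        · subst hy2
          rw [if_neg hy1, if_pos rfl]
          constructor <;> [linarith; linarith]
        · rw [if_neg hy1, if_neg hy2]
          simp only [sub_zero, sub_self, mul_zero, add_zero]
          exact ⟨(hq02mem y).1, (hq02mem y).2⟩
    have hsum' : ∑ y, q2' y = 1 := by
      rw [hq2']; beta_reduce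
      rw [Finset.sum_add_distrib, hq02sum, ← Finset.mul_sum, Finset.sum_sub_distrib]
      rw [Finset.sum_ite_eq' Finset.univ y1 (fun _ => (1:ℝ)),
        Finset.sum_ite_eq' Finset.univ y2 (fun _ => (1:ℝ))]
      simp
    have hmemK : (q0.1, q2') ∈ K := (hKmem _).mpr
      ⟨⟨fun x => ⟨(hgtX x).le, hq1le x⟩, hq01sum⟩, fun y => hmem' y, hsum'⟩
    have hle := hq0min hmemK
    have hF' : Fv α pX pYX q0.1 q2' = ∑ y, q2' y ^ (1-α) * ee y :=
      Fv_eq_Y α pX pYX q0.1 q2' (fun x => (hq01pos x).le)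
        (fun y => le_trans hεpos.le (hmem' y).1)
    calc ∑ y, q0.2 y ^ (1-α) * ee y = Fv α pX pYX q0.1 q0.2 := hFY.symm
      _ ≤ Fv α pX pYX q0.1 q2' := hle
      _ = ∑ y, q2' y ^ (1-α) * ee y := hF'
  have hddY : ∀ y, ee y = Fv α pX pYX q0.1 q0.2 * q0.2 y ^ α := by
    intro y
    rw [hFY]
    exact kkt_normalize q0.2 ee hq02pos hq02sum hkktY y
  exact ⟨q0.1, q0.2, hq01pos, hq02pos, hq01sum, hq02sum, hddX, hddY, hglob⟩

section opt
variable {X Y : Type*} [Fintype X] [Fintype Y] [Nonempty X] [Nonempty Y]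

lemma optimal_r {α : ℝ} (hα : 1 < α)
    (pX : X → ℝ) (hpXpos : ∀ x, 0 < pX x)
    (pYX : X → Y → ℝ) (hpYXpos : ∀ x y, 0 < pYX x y)
    (qX : X → ℝ) (qY : Y → ℝ) (hqX : ∀ x, 0 < qX x) (hqY : ∀ y, 0 < qY y)
    (hqX1 : ∑ x, qX x = 1)
    (hddX : ∀ x, (∑ y, (pX x * pYX x y) ^ α * qY y ^ (1-α))
        = Fv α pX pYX qX qY * qX x ^ α)
    (hddY : ∀ y, (∑ x, (pX x * pYX x y) ^ α * qX x ^ (1-α))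
        = Fv α pX pYX qX qY * qY y ^ α) :
    ∃ r : Y → X → ℝ, (∀ y x, 0 < r y x) ∧ (∀ y, ∑ x, r y x = 1) ∧
      (∑ x, pX x ^ (α/(2*α-1)) * (∑ y, pYX x y * r y x ^ (1 - 1/α)) ^ (α/(2*α-1)))
        = Fv α pX pYX qX qY ^ (1/(2*α-1)) := by
  classical
  have hαpos : (0:ℝ) < α := by linarith
  have h2α1 : (0:ℝ) < 2*α - 1 := by linarith
  set F : ℝ := Fv α pX pYX qX qY with hF
  have hFpos : 0 < F := by
    obtain x₀ := Classical.arbitrary X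
    have hdpos : 0 < ∑ y, (pX x₀ * pYX x₀ y) ^ α * qY y ^ (1-α) :=
      Finset.sum_pos (fun y _ => mul_pos
        (Real.rpow_pos_of_pos (mul_pos (hpXpos x₀) (hpYXpos x₀ y)) _)
        (Real.rpow_pos_of_pos (hqY y) _)) Finset.univ_nonempty
    rw [hddX x₀] at hdpos
    rcases mul_pos_iff.mp hdpos with ⟨h, _⟩ | ⟨_, h⟩
    · exact h
    · exact absurd (Real.rpow_pos_of_pos (hqX x₀) α) (by linarith)
  set β : ℝ := 1 - 1/α with hβ
  set u : ℝ := α / (2*α - 1) with hu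
  set r : Y → X → ℝ := fun y x =>
    (pX x * pYX x y) ^ α * qX x ^ (1-α) / (F * qY y ^ α) with hr
  have hden : ∀ y, 0 < F * qY y ^ α := fun y =>
    mul_pos hFpos (Real.rpow_pos_of_pos (hqY y) _)
  have hrpos : ∀ y x, 0 < r y x := fun y x => div_pos
    (mul_pos (Real.rpow_pos_of_pos (mul_pos (hpXpos x) (hpYXpos x y)) _)
      (Real.rpow_pos_of_pos (hqX x) _)) (hden y)
  have hrsum : ∀ y, ∑ x, r y x = 1 := by
    intro y
    rw [hr]; beta_reduce
    rw [← Finset.sum_div, hddY y, div_self (hden y).ne']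
  refine ⟨r, hrpos, hrsum, ?_⟩
  -- pointwise computation
  have hβα : α * β = α - 1 := by rw [hβ]; field_simp
  have hsx : ∀ x, ∑ y, pYX x y * r y x ^ β
      = F ^ (1 - β) * qX x ^ (α + (1-α)*β) / pX x := by
    intro x
    have hP : ∀ y, (0:ℝ) < pX x * pYX x y := fun y => mul_pos (hpXpos x) (hpYXpos x y)
    have hinner : ∀ y, pYX x y * r y x ^ β
        = ((pX x * pYX x y) ^ α * qY y ^ (1-α)) * (qX x ^ ((1-α)*β) / (F ^ β * pX x)) := by
      intro y
      rw [hr]; beta_reduce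
      rw [Real.div_rpow (mul_nonneg (Real.rpow_nonneg (hP y).le _)
          (Real.rpow_nonneg (hqX x).le _)) (hden y).le,
        Real.mul_rpow (Real.rpow_nonneg (hP y).le _) (Real.rpow_nonneg (hqX x).le _),
        Real.mul_rpow hFpos.le (Real.rpow_nonneg (hqY y).le _),
        ← Real.rpow_mul (hP y).le, ← Real.rpow_mul (hqX x).le, ← Real.rpow_mul (hqY y).le,
        hβα]
      have hden1 : (0:ℝ) < F ^ β * qY y ^ (α-1) :=
        mul_pos (Real.rpow_pos_of_pos hFpos _) (Real.rpow_pos_of_pos (hqY y) _)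
      have hden2 : (0:ℝ) < F ^ β * pX x :=
        mul_pos (Real.rpow_pos_of_pos hFpos _) (hpXpos x)
      rw [← mul_div_assoc, ← mul_div_assoc, div_eq_div_iff hden1.ne' hden2.ne']
      have hqY1 : qY y ^ (1-α) * qY y ^ (α-1) = 1 := by
        rw [← Real.rpow_add (hqY y)]; norm_num
      have hPα : pX x * pYX x y * (pX x * pYX x y) ^ (α-1) = (pX x * pYX x y) ^ α := by
        have h := Real.rpow_add (hP y) 1 (α-1)
        rw [Real.rpow_one, show (1:ℝ) + (α-1) = α from by ring] at h
        exact h.symm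
      calc pYX x y * ((pX x * pYX x y) ^ (α-1) * qX x ^ ((1-α)*β)) * (F ^ β * pX x)
          = (pX x * pYX x y * (pX x * pYX x y) ^ (α-1)) * qX x ^ ((1-α)*β) * F ^ β := by
            ring
        _ = (pX x * pYX x y) ^ α * qX x ^ ((1-α)*β) * F ^ β := by rw [hPα]
        _ = (pX x * pYX x y) ^ α * qX x ^ ((1-α)*β) * F ^ β
            * (qY y ^ (1-α) * qY y ^ (α-1)) := by rw [hqY1, mul_one]
        _ = (pX x * pYX x y) ^ α * qY y ^ (1-α) * qX x ^ ((1-α)*β)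
            * (F ^ β * qY y ^ (α-1)) := by ring
    rw [Finset.sum_congr rfl fun y _ => hinner y, ← Finset.sum_mul, hddX x]
    have hFβ : (0:ℝ) < F ^ β * pX x :=
      mul_pos (Real.rpow_pos_of_pos hFpos _) (hpXpos x)
    rw [← mul_div_assoc, div_eq_div_iff hFβ.ne' (hpXpos x).ne']
    have e2 : qX x ^ α * qX x ^ ((1-α)*β) = qX x ^ (α + (1-α)*β) := by
      rw [← Real.rpow_add (hqX x)]
    have e3 : F ^ (1-β) * F ^ β = F ^ (1 : ℝ) := by
      rw [← Real.rpow_add hFpos]; norm_num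
    calc F * qX x ^ α * qX x ^ ((1-α)*β) * pX x
        = F * (qX x ^ α * qX x ^ ((1-α)*β)) * pX x := by ring
      _ = F * qX x ^ (α + (1-α)*β) * pX x := by rw [e2]
      _ = (F ^ (1-β) * F ^ β) * qX x ^ (α + (1-α)*β) * pX x := by
          rw [e3, Real.rpow_one]
      _ = F ^ (1-β) * qX x ^ (α + (1-α)*β) * (F ^ β * pX x) := by ring
  have hterm : ∀ x, pX x ^ u * (∑ y, pYX x y * r y x ^ β) ^ u
      = F ^ (1/(2*α-1)) * qX x := by
    intro x
    rw [hsx x]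
    have hpos1 : (0:ℝ) < F ^ (1-β) * qX x ^ (α + (1-α)*β) :=
      mul_pos (Real.rpow_pos_of_pos hFpos _) (Real.rpow_pos_of_pos (hqX x) _)
    rw [← Real.mul_rpow (hpXpos x).le (div_pos hpos1 (hpXpos x)).le,
      show pX x * (F ^ (1-β) * qX x ^ (α + (1-α)*β) / pX x)
          = F ^ (1-β) * qX x ^ (α + (1-α)*β) from by
        rw [← mul_div_assoc]; exact mul_div_cancel_left₀ _ (hpXpos x).ne',
      Real.mul_rpow (Real.rpow_pos_of_pos hFpos _).le (Real.rpow_pos_of_pos (hqX x) _).le,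
      ← Real.rpow_mul hFpos.le, ← Real.rpow_mul (hqX x).le]
    have e4 : (1 - β) * u = 1/(2*α-1) := by
      rw [hβ, hu]; have hne1 : (2*α-1:ℝ) ≠ 0 := (by linarith); have hne2 : (α*2-1:ℝ) ≠ 0 := (by linarith); field_simp; ring
    have e5 : (α + (1-α)*β) * u = 1 := by
      rw [hβ, hu]; have hne1 : (2*α-1:ℝ) ≠ 0 := (by linarith); have hne2 : (α*2-1:ℝ) ≠ 0 := (by linarith); field_simp; ring
    rw [e4, e5, Real.rpow_one]
  rw [Finset.sum_congr rfl fun x _ => hterm x, ← Finset.mul_sum, hqX1, mul_one]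

end opt

set_option maxHeartbeats 1000000 in
/-- For `α > 1`, the Lapidoth--Pfister mutual information of order `α` is the supremum,
over strictly positive reverse channels `r_{X|Y}`, of
`((2α−1)/(α−1)) log Σ_x p_X(x)^{α/(2α−1)} (Σ_y p_{Y|X}(y|x) r(x|y)^{1−1/α})^{α/(2α−1)}`,
and the supremum is attained. -/
theorem lpMI_eq_sup_closed_form {X Y : Type*} [Fintype X] [Fintype Y] [Nonempty X] [Nonempty Y]
    (α : ℝ) (hα : 1 < α)
    (pX : X → ℝ) (hpX : IsPMF pX) (hpXpos : ∀ x, 0 < pX x)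
    (pYX : X → Y → ℝ) (hpYX : ∀ x, IsPMF (pYX x)) (hpYXpos : ∀ x y, 0 < pYX x y) :
    IsGreatest
      {v : EReal | ∃ r : Y → X → ℝ, (∀ y, IsPMF (r y)) ∧ (∀ y x, 0 < r y x) ∧
        v = ((((2 * α - 1) / (α - 1)) * Real.log (∑ x, pX x ^ (α / (2 * α - 1)) *
              (∑ y, pYX x y * r y x ^ (1 - 1 / α)) ^ (α / (2 * α - 1))) : ℝ) : EReal)}
      (lpMI α pX pYX) := by
  classical
  have hα1 : (0:ℝ) < α - 1 := by linarith
  have h2α1 : (0:ℝ) < 2 * α - 1 := by linarith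
  have hP : ∀ x y, 0 < pX x * pYX x y := fun x y => mul_pos (hpXpos x) (hpYXpos x y)
  obtain ⟨qX, qY, hqXpos, hqYpos, hqXsum, hqYsum, hddX, hddY, hglob⟩ :=
    exists_minimizer hα pX pYX hP
  set F : ℝ := Fv α pX pYX qX qY with hFdef
  have hFpos : 0 < F := by
    rw [hFdef]
    unfold Fv
    refine Finset.sum_pos (fun x _ => Finset.sum_pos (fun y _ => mul_pos
      (Real.rpow_pos_of_pos (hP x y) _)
      (Real.rpow_pos_of_pos (mul_pos (hqXpos x) (hqYpos y)) _)) Finset.univ_nonempty)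
      Finset.univ_nonempty
  -- the value of the Lapidoth-Pfister mutual information
  have hlp : lpMI α pX pYX = (((1/(α-1)) * Real.log F : ℝ) : EReal) := by
    apply le_antisymm
    · apply sInf_le
      refine ⟨qX, qY, ⟨fun x => (hqXpos x).le, hqXsum⟩, ⟨fun y => (hqYpos y).le, hqYsum⟩, ?_⟩
      unfold renyiDE
      rw [if_neg]
      · have hsum : (∑ z : X × Y, (pX z.1 * pYX z.1 z.2) ^ α * (qX z.1 * qY z.2) ^ (1-α))
            = F := by
          rw [hFdef]
          unfold Fv
          exact Fintype.sum_prod_type _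
        norm_cast
        rw [hsum]
      · rintro ⟨-, z, -, hz⟩
        exact absurd hz (mul_pos (hqXpos z.1) (hqYpos z.2)).ne'
    · apply le_sInf
      rintro v ⟨q1, q2, ⟨h1nn, h1s⟩, ⟨h2nn, h2s⟩, rfl⟩
      unfold renyiDE
      by_cases hzero : ∃ z : X × Y, pX z.1 * pYX z.1 z.2 ≠ 0 ∧ q1 z.1 * q2 z.2 = 0
      · rw [if_pos ⟨hα, hzero⟩]
        exact le_top
      · rw [if_neg (by exact fun h => hzero h.2)]
        push_neg at hzero
        have hqprod : ∀ x y, 0 < q1 x * q2 y := by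
          intro x y
          have hne := hzero (x, y) (hP x y).ne'
          rcases (mul_nonneg (h1nn x) (h2nn y)).lt_or_eq with h | h
          · exact h
          · exact absurd h.symm hne
        have h1pos : ∀ x, 0 < q1 x := by
          intro x
          obtain y := Classical.arbitrary Y
          rcases (h1nn x).lt_or_eq with h | h
          · exact h
          · exact absurd (by rw [← h, zero_mul] : q1 x * q2 y = 0) (hqprod x y).ne'
        have h2pos : ∀ y, 0 < q2 y := by
          intro y
          obtain x := Classical.arbitrary X
          rcases (h2nn y).lt_or_eq with h | h
          · exact h
          · exact absurd (by rw [← h, mul_zero] : q1 x * q2 y = 0) (hqprod x y).ne'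
        have hFle : F ≤ Fv α pX pYX q1 q2 := hglob q1 q2 h1pos h2pos h1s h2s
        have hsum : (∑ z : X × Y, (pX z.1 * pYX z.1 z.2) ^ α * (q1 z.1 * q2 z.2) ^ (1-α))
            = Fv α pX pYX q1 q2 := by
          unfold Fv
          exact Fintype.sum_prod_type _
        apply EReal.coe_le_coe_iff.mpr
        rw [hsum]
        apply mul_le_mul_of_nonneg_left _ (by positivity : (0:ℝ) ≤ 1/(α-1))
        exact Real.log_le_log hFpos hFle
  constructor
  · -- membership: the optimal reverse channel attains the value
    obtain ⟨r, hrpos, hrsum, hrT⟩ := optimal_r hα pX hpXpos pYX hpYXpos qX qY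
      hqXpos hqYpos hqXsum hddX hddY
    refine ⟨r, fun y => ⟨fun x => (hrpos y x).le, hrsum y⟩, hrpos, ?_⟩
    rw [hlp, hrT, EReal.coe_eq_coe_iff, Real.log_rpow hFpos]
    have hne1 : (2*α-1:ℝ) ≠ 0 := (by linarith); have hne2 : (α*2-1:ℝ) ≠ 0 := (by linarith); field_simp
  · -- upper bound
    rintro v ⟨r, hrpmf, hrpos, rfl⟩
    rw [hlp]
    apply EReal.coe_le_coe_iff.mpr
    set T : ℝ := ∑ x, pX x ^ (α/(2*α-1)) *
      (∑ y, pYX x y * r y x ^ (1 - 1/α)) ^ (α/(2*α-1)) with hT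
    have hTpos : 0 < T := by
      refine Finset.sum_pos (fun x _ => mul_pos (Real.rpow_pos_of_pos (hpXpos x) _)
        (Real.rpow_pos_of_pos (Finset.sum_pos (fun y _ => mul_pos (hpYXpos x y)
          (Real.rpow_pos_of_pos (hrpos y x) _)) Finset.univ_nonempty) _)) Finset.univ_nonempty
    have hkey : T ^ (2*α-1) ≤ F := key_ineq hα pX hpXpos pYX hpYXpos qX qY
      hqXpos hqYpos hqXsum hqYsum r hrpos (fun y => (hrpmf y).2)
    have hlog : (2*α-1) * Real.log T ≤ Real.log F := by
      rw [← Real.log_rpow hTpos]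
      exact Real.log_le_log (Real.rpow_pos_of_pos hTpos _) hkey
    calc (2*α-1)/(α-1) * Real.log T = (1/(α-1)) * ((2*α-1) * Real.log T) := by ring
      _ ≤ (1/(α-1)) * Real.log F := by
          apply mul_le_mul_of_nonneg_left hlog (by positivity)
end

section
/- Let α ∈ (1,∞), let p_X be a strictly positive probability distribution on 𝒳, p_{Y|X} a channel with p_{Y|X}(y|x) > 0 for all x, y, and let q̃_{Y|X} be a channel with q̃_{Y|X}(y|x) > 0 for all x, y. Then over all reverse channels r_{X|Y}, the functional F̃_α^C(q̃_{Y|X}, r_{X|Y}) is maximized by the posterior r*_{X|Y}(x|y) := p_X(x) q̃_{Y|X}(y|x) / Σ_{x'} p_X(x') q̃_{Y|X}(y|x'), i.e., F̃_α^C(q̃_{Y|X}, r_{X|Y}) ≤ F̃_α^C(q̃_{Y|X}, r*_{X|Y}) for every reverse channel r_{X|Y}. -/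
/-- Extended-real logarithm: `elog 0 = ⊥` (i.e. `log 0 = −∞`). -/
noncomputable def elog (t : ℝ) : EReal :=
  if t = 0 then ⊥ else ((Real.log t : ℝ) : EReal)

/-- `F̃_α^C(q̃_{Y|X}, r_{X|Y})`, valued in `ℝ ∪ {−∞}` (as `EReal`):
`(α/(1−α)) D(p_X q̃_{Y|X} ‖ p_X p_{Y|X}) + Σ_{x,y} p_X(x) q̃_{Y|X}(y|x) log(r(x|y)/p_X(x))`. -/
noncomputable def FtildeC {X Y : Type*} [Fintype X] [Fintype Y]
    (α : ℝ) (pX : X → ℝ) (pYX : X → Y → ℝ) (qt : X → Y → ℝ) (r : Y → X → ℝ) : EReal :=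
  (((α / (1 - α)) * klD (fun z : X × Y => pX z.1 * qt z.1 z.2)
      (fun z : X × Y => pX z.1 * pYX z.1 z.2) : ℝ) : EReal)
  + ∑ x, ∑ y, ((pX x * qt x y : ℝ) : EReal) * elog (r y x / pX x)

lemma ereal_coe_sum {ι : Type*} (s : Finset ι) (f : ι → ℝ) :
    ((∑ i ∈ s, f i : ℝ) : EReal) = ∑ i ∈ s, (f i : EReal) :=
  map_sum (⟨⟨Real.toEReal, EReal.coe_zero⟩, EReal.coe_add⟩ : ℝ →+ EReal) f s

lemma ereal_sum_eq_bot {ι : Type*} {s : Finset ι} {f : ι → EReal} {a : ι}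
    (ha : a ∈ s) (h : f a = ⊥) : ∑ i ∈ s, f i = ⊥ := by
  classical
  rw [← Finset.add_sum_erase s f ha, h, EReal.bot_add]

/-- Gibbs-type inequality. -/
lemma gibbs_s9 {X : Type*} [Fintype X] [Nonempty X] (w ρ p : X → ℝ)
    (hw : ∀ x, 0 < w x) (hρ : ∀ x, 0 < ρ x) (hp : ∀ x, 0 < p x)
    (hρ1 : ∑ x, ρ x = 1) :
    ∑ x, w x * Real.log (ρ x / p x) ≤
      ∑ x, w x * Real.log ((w x / ∑ x', w x') / p x) := by
  set W : ℝ := ∑ x', w x' with hWdef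
  have hW : 0 < W := Finset.sum_pos (fun x _ => hw x) Finset.univ_nonempty
  rw [← sub_nonpos, ← Finset.sum_sub_distrib]
  have key : ∀ x : X, w x * Real.log (ρ x / p x) - w x * Real.log ((w x / W) / p x)
      ≤ ρ x * W - w x := by
    intro x
    have h1 : Real.log (ρ x / p x) - Real.log ((w x / W) / p x)
        = Real.log (ρ x * W / w x) := by
      rw [Real.log_div (hρ x).ne' (hp x).ne',
        Real.log_div (div_pos (hw x) hW).ne' (hp x).ne',
        Real.log_div (hw x).ne' hW.ne',
        Real.log_div (mul_pos (hρ x) hW).ne' (hw x).ne',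
        Real.log_mul (hρ x).ne' hW.ne']
      ring
    rw [← mul_sub, h1]
    have h2 : Real.log (ρ x * W / w x) ≤ ρ x * W / w x - 1 :=
      Real.log_le_sub_one_of_pos (div_pos (mul_pos (hρ x) hW) (hw x))
    calc w x * Real.log (ρ x * W / w x) ≤ w x * (ρ x * W / w x - 1) :=
          mul_le_mul_of_nonneg_left h2 (hw x).le
      _ = ρ x * W - w x := by
          rw [mul_sub, mul_one, mul_div_assoc', mul_comm, mul_div_assoc, div_self (hw x).ne', mul_one]
  calc ∑ x, (w x * Real.log (ρ x / p x) - w x * Real.log ((w x / W) / p x))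
      ≤ ∑ x, (ρ x * W - w x) := Finset.sum_le_sum fun x _ => key x
    _ = 0 := by rw [Finset.sum_sub_distrib, ← Finset.sum_mul, hρ1, one_mul, ← hWdef, sub_self]

/-- For `α > 1`, fixed `q̃_{Y|X} > 0`: over all reverse channels `r_{X|Y}`, the functional
`F̃_α^C(q̃_{Y|X}, ·)` is maximized by the posterior
`r*(x|y) = p_X(x) q̃_{Y|X}(y|x) / Σ_{x'} p_X(x') q̃_{Y|X}(y|x')`. -/
theorem FtildeC_le_posterior {X Y : Type*} [Fintype X] [Fintype Y] [Nonempty X] [Nonempty Y]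
    (α : ℝ) (hα : 1 < α)
    (pX : X → ℝ) (hpX : IsPMF pX) (hpXpos : ∀ x, 0 < pX x)
    (pYX : X → Y → ℝ) (hpYX : ∀ x, IsPMF (pYX x)) (hpYXpos : ∀ x y, 0 < pYX x y)
    (qt : X → Y → ℝ) (hqt : ∀ x, IsPMF (qt x)) (hqtpos : ∀ x y, 0 < qt x y) :
    ∀ r : Y → X → ℝ, (∀ y, IsPMF (r y)) →
      FtildeC α pX pYX qt r ≤
      FtildeC α pX pYX qt
        (fun y x => pX x * qt x y / ∑ x', pX x' * qt x' y) := by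
  intro r hr
  unfold FtildeC
  refine add_le_add le_rfl ?_
  have hWpos : ∀ y : Y, 0 < ∑ x', pX x' * qt x' y := fun y =>
    Finset.sum_pos (fun x _ => mul_pos (hpXpos x) (hqtpos x y)) Finset.univ_nonempty
  have hwpos : ∀ x y, 0 < pX x * qt x y := fun x y => mul_pos (hpXpos x) (hqtpos x y)
  -- the posterior is positive, so its side is a real number
  have hrs : ∀ y x, (0:ℝ) < pX x * qt x y / ∑ x', pX x' * qt x' y := fun y x =>
    div_pos (hwpos x y) (hWpos y)
  by_cases hz : ∃ x y, r y x = 0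
  · obtain ⟨x0, y0, h0⟩ := hz
    have hterm : ((pX x0 * qt x0 y0 : ℝ) : EReal) * elog (r y0 x0 / pX x0) = ⊥ := by
      have : r y0 x0 / pX x0 = 0 := by rw [h0]; simp
      rw [this, elog, if_pos rfl]
      exact EReal.coe_mul_bot_of_pos (hwpos x0 y0)
    have hinner : ∑ y, ((pX x0 * qt x0 y : ℝ) : EReal) * elog (r y x0 / pX x0) = ⊥ :=
      ereal_sum_eq_bot (Finset.mem_univ y0) hterm
    have houter : (∑ x, ∑ y, ((pX x * qt x y : ℝ) : EReal) * elog (r y x / pX x)) = ⊥ :=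
      ereal_sum_eq_bot (Finset.mem_univ x0) hinner
    rw [houter]; exact bot_le
  · push_neg at hz
    have hrpos : ∀ x y, 0 < r y x := fun x y =>
      lt_of_le_of_ne ((hr y).1 x) (Ne.symm (hz x y))
    have coeify : ∀ (s : Y → X → ℝ), (∀ y x, 0 < s y x) →
        (∑ x, ∑ y, ((pX x * qt x y : ℝ) : EReal) * elog (s y x / pX x))
          = ((∑ x, ∑ y, (pX x * qt x y) * Real.log (s y x / pX x) : ℝ) : EReal) := by
      intro s hs
      rw [ereal_coe_sum]
      refine Finset.sum_congr rfl fun x _ => ?_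
      rw [ereal_coe_sum]
      refine Finset.sum_congr rfl fun y _ => ?_
      rw [elog, if_neg (div_pos (hs y x) (hpXpos x)).ne', ← EReal.coe_mul]
    rw [coeify r (fun y x => hrpos x y), coeify _ (fun y x => hrs y x),
      EReal.coe_le_coe_iff]
    rw [Finset.sum_comm, Finset.sum_comm (f := fun x y => (pX x * qt x y) *
      Real.log ((pX x * qt x y / ∑ x', pX x' * qt x' y) / pX x))]
    refine Finset.sum_le_sum fun y _ => ?_
    exact gibbs_s9 (fun x => pX x * qt x y) (fun x => r y x) pX
      (fun x => hwpos x y) (fun x => hrpos x y) hpXpos (hr y).2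
end

section
/- Let α ∈ (0,1)∪(1,∞) and let p_{X,Y} be a strictly positive probability distribution on 𝒳×𝒴. (1) For any strictly positive probability distribution q_Y on 𝒴, the map q_X ↦ D_α(p_{X,Y} ‖ q_X q_Y), over probability distributions q_X on 𝒳, is minimized by q*_X(x) := ( Σ_y p_{X,Y}(x,y)^α q_Y(y)^{1−α} )^{1/α} / Σ_{x'} ( Σ_y p_{X,Y}(x',y)^α q_Y(y)^{1−α} )^{1/α}. (2) Symmetrically, for any strictly positive probability distribution q_X on 𝒳, the map q_Y ↦ D_α(p_{X,Y} ‖ q_X q_Y) is minimized by q*_Y(y) := ( Σ_x p_{X,Y}(x,y)^α q_X(x)^{1−α} )^{1/α} / Σ_{y'} ( Σ_x p_{X,Y}(x,y')^α q_X(x)^{1−α} )^{1/α}. -/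
open Finset Real

/-- Hölder-type inequality, case `α < 1`. -/
lemma aux_holder_lt1 {ι : Type*} [Fintype ι] {α : ℝ} (hα0 : 0 < α) (hα1 : α < 1)
    (B w : ι → ℝ) (hB : ∀ i, 0 ≤ B i) (hw : ∀ i, 0 ≤ w i) :
    ∑ i, B i ^ α * w i ^ (1 - α) ≤ (∑ i, B i) ^ α * (∑ i, w i) ^ (1 - α) := by
  have h1α : (0:ℝ) < 1 - α := by linarith
  have hpq : Real.HolderConjugate (1/α) (1/(1-α)) := by
    rw [Real.holderConjugate_iff]
    constructor
    · rw [lt_div_iff₀ hα0]; linarith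
    · field_simp; ring
  have h := Real.inner_le_Lp_mul_Lq_of_nonneg (s := Finset.univ)
    (f := fun i => B i ^ α) (g := fun i => w i ^ (1 - α)) hpq
    (fun i _ => Real.rpow_nonneg (hB i) _) (fun i _ => Real.rpow_nonneg (hw i) _)
  have e1 : ∀ i, (B i ^ α) ^ (1/α) = B i := fun i => by
    rw [← Real.rpow_mul (hB i), mul_one_div_cancel hα0.ne', Real.rpow_one]
  have e2 : ∀ i, (w i ^ (1 - α)) ^ (1/(1-α)) = w i := fun i => by
    rw [← Real.rpow_mul (hw i), mul_one_div_cancel h1α.ne', Real.rpow_one]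
  simp only [e1, e2, one_div_one_div] at h
  exact h

/-- Hölder-type inequality, case `α > 1`. -/
lemma aux_holder_gt1 {ι : Type*} [Fintype ι] {α : ℝ} (hα : 1 < α)
    (B w : ι → ℝ) (hB : ∀ i, 0 ≤ B i) (hw : ∀ i, 0 < w i) (hw1 : ∑ i, w i = 1) :
    (∑ i, B i) ^ α ≤ ∑ i, B i ^ α * w i ^ (1 - α) := by
  have hα0 : (0:ℝ) < α := by linarith
  have hα1 : (0:ℝ) < α - 1 := by linarith
  have hpq : Real.HolderConjugate α (α/(α-1)) := by
    rw [Real.holderConjugate_iff]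
    constructor
    · exact hα
    · field_simp; ring
  have h := Real.inner_le_Lp_mul_Lq_of_nonneg (s := Finset.univ)
    (f := fun i => B i * w i ^ ((1-α)/α)) (g := fun i => w i ^ ((α-1)/α)) hpq
    (fun i _ => mul_nonneg (hB i) (Real.rpow_nonneg (hw i).le _))
    (fun i _ => Real.rpow_nonneg (hw i).le _)
  have e0 : ∀ i, (B i * w i ^ ((1-α)/α)) * w i ^ ((α-1)/α) = B i := fun i => by
    rw [mul_assoc, ← Real.rpow_add (hw i)]
    have he : (1 - α) / α + (α - 1) / α = 0 := by field_simp; ring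
    rw [he, Real.rpow_zero, mul_one]
  have e1 : ∀ i, (B i * w i ^ ((1-α)/α)) ^ α = B i ^ α * w i ^ (1 - α) := fun i => by
    rw [Real.mul_rpow (hB i) (Real.rpow_nonneg (hw i).le _),
      ← Real.rpow_mul (hw i).le, div_mul_cancel₀ _ hα0.ne']
  have e2 : ∀ i, (w i ^ ((α-1)/α)) ^ (α/(α-1)) = w i := fun i => by
    rw [← Real.rpow_mul (hw i).le, div_mul_div_comm, mul_comm,
      div_self (by positivity), Real.rpow_one]
  simp only [e0, e1, e2, hw1] at h
  have h' : ∑ i, B i ≤ (∑ i, B i ^ α * w i ^ (1 - α)) ^ (1/α) := by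
    have : (1:ℝ) ^ (1/(α/(α-1))) = 1 := Real.one_rpow _
    calc ∑ i, B i ≤ (∑ i, B i ^ α * w i ^ (1 - α)) ^ (1/α) * 1 ^ (1/(α/(α-1))) := h
    _ = (∑ i, B i ^ α * w i ^ (1 - α)) ^ (1/α) := by rw [Real.one_rpow, mul_one]
  have hT : 0 ≤ ∑ i, B i ^ α * w i ^ (1 - α) :=
    Finset.sum_nonneg fun i _ =>
      mul_nonneg (Real.rpow_nonneg (hB i) _) (Real.rpow_nonneg (hw i).le _)
  calc (∑ i, B i) ^ α ≤ ((∑ i, B i ^ α * w i ^ (1 - α)) ^ (1/α)) ^ α :=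
        Real.rpow_le_rpow (Finset.sum_nonneg fun i _ => hB i) h' hα0.le
  _ = ∑ i, B i ^ α * w i ^ (1 - α) := by
        rw [← Real.rpow_mul hT, one_div_mul_cancel hα0.ne', Real.rpow_one]

lemma aux_sum_prod_eq {X Y : Type*} [Fintype X] [Fintype Y] (α : ℝ) (p : X × Y → ℝ)
    (qY : Y → ℝ) (f : X → ℝ) (hf : ∀ x, 0 ≤ f x) (hqY : ∀ y, 0 ≤ qY y) :
    ∑ z : X × Y, p z ^ α * (f z.1 * qY z.2) ^ (1 - α)
      = ∑ x, (∑ y, p (x, y) ^ α * qY y ^ (1 - α)) * f x ^ (1 - α) := by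
  rw [Fintype.sum_prod_type]
  refine Finset.sum_congr rfl fun x _ => ?_
  rw [Finset.sum_mul]
  refine Finset.sum_congr rfl fun y _ => ?_
  rw [Real.mul_rpow (hf x) (hqY y)]; ring

lemma aux_congr {Z : Type*} [Fintype Z] (α : ℝ) (p q q' : Z → ℝ) (h : ∀ z, q z = q' z) :
    renyiDE α p q = renyiDE α p q' := by
  rw [funext h]

lemma aux_comm {X Y : Type*} [Fintype X] [Fintype Y] (α : ℝ) (p q : X × Y → ℝ) :
    renyiDE α p q = renyiDE α (fun z : Y × X => p z.swap) (fun z : Y × X => q z.swap) := by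
  unfold renyiDE
  have h1 : (∃ z : X × Y, p z ≠ 0 ∧ q z = 0) ↔ (∃ z : Y × X, p z.swap ≠ 0 ∧ q z.swap = 0) :=
    ⟨fun ⟨z, h⟩ => ⟨z.swap, by simpa using h⟩, fun ⟨z, h⟩ => ⟨z.swap, by simpa using h⟩⟩
  have h2 : ∑ z : X × Y, p z ^ α * q z ^ (1 - α)
      = ∑ z : Y × X, p z.swap ^ α * q z.swap ^ (1 - α) :=
    Fintype.sum_equiv (Equiv.prodComm X Y) _ _ (fun z => by simp)
  rw [h2]
  by_cases hc : 1 < α ∧ ∃ z : X × Y, p z ≠ 0 ∧ q z = 0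
  · rw [if_pos hc, if_pos ⟨hc.1, h1.mp hc.2⟩]
  · rw [if_neg hc, if_neg (fun hc' => hc ⟨hc'.1, h1.mpr hc'.2⟩)]

/-- The core one-sided minimization. -/
lemma aux_part1 {X Y : Type*} [Fintype X] [Fintype Y] [Nonempty X] [Nonempty Y]
    (α : ℝ) (hα : (0 < α ∧ α < 1) ∨ 1 < α)
    (p : X × Y → ℝ) (hppos : ∀ z, 0 < p z)
    (qY : Y → ℝ) (hqY : ∀ y, 0 < qY y)
    (qX : X → ℝ) (hqX : IsPMF qX) :
    renyiDE α p (fun z : X × Y =>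
        ((∑ y, p (z.1, y) ^ α * qY y ^ (1 - α)) ^ (1 / α) /
          ∑ x', (∑ y, p (x', y) ^ α * qY y ^ (1 - α)) ^ (1 / α)) * qY z.2) ≤
      renyiDE α p (fun z : X × Y => qX z.1 * qY z.2) := by
  have hα0 : 0 < α := hα.elim (·.1) (fun h => by linarith)
  set A : X → ℝ := fun x => ∑ y, p (x, y) ^ α * qY y ^ (1 - α) with hAdef
  have hA : ∀ x, 0 < A x := fun x => Finset.sum_pos
    (fun y _ => mul_pos (Real.rpow_pos_of_pos (hppos _) _) (Real.rpow_pos_of_pos (hqY y) _))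
    Finset.univ_nonempty
  set B : X → ℝ := fun x => A x ^ (1/α) with hBdef
  have hB : ∀ x, 0 < B x := fun x => Real.rpow_pos_of_pos (hA x) _
  set S : ℝ := ∑ x, B x with hSdef
  have hS : 0 < S := Finset.sum_pos (fun x _ => hB x) Finset.univ_nonempty
  have hBA : ∀ x, B x ^ α = A x := fun x => by
    rw [hBdef, ← Real.rpow_mul (hA x).le, one_div_mul_cancel hα0.ne', Real.rpow_one]
  -- value at the optimizer
  have hkey : ∑ z : X × Y, p z ^ α * ((B z.1 / S) * qY z.2) ^ (1 - α) = S ^ α := by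
    rw [aux_sum_prod_eq α p qY (fun x => B x / S)
      (fun x => div_nonneg (hB x).le hS.le) (fun y => (hqY y).le)]
    have : ∀ x, A x * (B x / S) ^ (1 - α) = B x / S ^ (1 - α) := fun x => by
      rw [Real.div_rpow (hB x).le hS.le, ← hBA x, ← mul_div_assoc,
        ← Real.rpow_add (hB x)]
      norm_num
    change ∑ x, A x * (B x / S) ^ (1 - α) = S ^ α
    simp only [this]
    rw [← Finset.sum_div, ← hSdef,
      div_eq_iff (ne_of_gt (Real.rpow_pos_of_pos hS _)), ← Real.rpow_add hS]
    norm_num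
  -- the optimizer is strictly positive, so the lhs is finite
  have hqstar : ∀ z : X × Y, 0 < (B z.1 / S) * qY z.2 :=
    fun z => mul_pos (div_pos (hB z.1) hS) (hqY z.2)
  have hlhs : renyiDE α p (fun z : X × Y => (B z.1 / S) * qY z.2)
      = (((1 / (α - 1)) * Real.log (S ^ α) : ℝ) : EReal) := by
    rw [renyiDE, if_neg, hkey]
    rintro ⟨-, z, -, hz⟩
    exact (hqstar z).ne' hz
  show renyiDE α p (fun z : X × Y => (B z.1 / S) * qY z.2) ≤ _
  rcases hα with ⟨hα0', hα1⟩ | hα1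
  · -- α < 1
    have hrhs : renyiDE α p (fun z : X × Y => qX z.1 * qY z.2)
        = (((1 / (α - 1)) * Real.log (∑ x, A x * qX x ^ (1 - α)) : ℝ) : EReal) := by
      rw [renyiDE, if_neg (fun h => absurd h.1 (by linarith)),
        aux_sum_prod_eq α p qY qX hqX.1 (fun y => (hqY y).le)]
    rw [hlhs, hrhs, EReal.coe_le_coe_iff]
    have hle : ∑ x, A x * qX x ^ (1 - α) ≤ S ^ α := by
      have h := aux_holder_lt1 hα0 hα1 B qX (fun x => (hB x).le) hqX.1
      simp only [hBA, hqX.2, Real.one_rpow, mul_one] at h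
      exact h
    have hpos : 0 < ∑ x, A x * qX x ^ (1 - α) := by
      obtain ⟨x0, hx0⟩ : ∃ x, 0 < qX x := by
        by_contra h
        push_neg at h
        have : ∑ x, qX x = 0 :=
          Finset.sum_eq_zero fun x _ => le_antisymm (h x) (hqX.1 x)
        rw [hqX.2] at this; norm_num at this
      exact Finset.sum_pos'
        (fun x _ => mul_nonneg (hA x).le (Real.rpow_nonneg (hqX.1 x) _))
        ⟨x0, Finset.mem_univ _, mul_pos (hA x0) (Real.rpow_pos_of_pos hx0 _)⟩
    have hfac : (1 / (α - 1) : ℝ) ≤ 0 := by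
      apply div_nonpos_of_nonneg_of_nonpos <;> linarith
    exact mul_le_mul_of_nonpos_left (Real.log_le_log hpos hle) hfac
  · -- α > 1
    by_cases hz : ∃ x, qX x = 0
    · obtain ⟨x0, hx0⟩ := hz
      have : renyiDE α p (fun z : X × Y => qX z.1 * qY z.2) = ⊤ := by
        rw [renyiDE, if_pos]
        exact ⟨hα1, ⟨(x0, Classical.arbitrary Y), (hppos _).ne', by simp [hx0]⟩⟩
      rw [this]; exact le_top
    · push_neg at hz
      have hqXp : ∀ x, 0 < qX x := fun x => (hqX.1 x).lt_of_ne (Ne.symm (hz x))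
      have hrhs : renyiDE α p (fun z : X × Y => qX z.1 * qY z.2)
          = (((1 / (α - 1)) * Real.log (∑ x, A x * qX x ^ (1 - α)) : ℝ) : EReal) := by
        rw [renyiDE, if_neg, aux_sum_prod_eq α p qY qX hqX.1 (fun y => (hqY y).le)]
        rintro ⟨-, z, -, hzz⟩
        exact (mul_pos (hqXp z.1) (hqY z.2)).ne' hzz
      rw [hlhs, hrhs, EReal.coe_le_coe_iff]
      have hle : S ^ α ≤ ∑ x, A x * qX x ^ (1 - α) := by
        have h := aux_holder_gt1 hα1 B qX (fun x => (hB x).le) hqXp hqX.2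
        simp only [hBA] at h
        exact h
      have hfac : (0:ℝ) ≤ 1 / (α - 1) := by
        have : (0:ℝ) < α - 1 := by linarith
        positivity
      exact mul_le_mul_of_nonneg_left
        (Real.log_le_log (Real.rpow_pos_of_pos hS _) hle) hfac

/-- Alternating minimization of `D_α(p_{X,Y} ‖ q_X q_Y)` over the two marginals:
(1) for fixed strictly positive `q_Y`, the minimizing `q_X` is
`q*_X(x) ∝ (Σ_y p_{X,Y}(x,y)^α q_Y(y)^{1−α})^{1/α}`; (2) symmetrically in `q_Y`. -/
theorem renyi_product_min_update {X Y : Type*} [Fintype X] [Fintype Y]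
    [Nonempty X] [Nonempty Y]
    (α : ℝ) (hα : (0 < α ∧ α < 1) ∨ 1 < α)
    (p : X × Y → ℝ) (hp : IsPMF p) (hppos : ∀ z, 0 < p z) :
    (∀ qY : Y → ℝ, IsPMF qY → (∀ y, 0 < qY y) →
      ∀ qX : X → ℝ, IsPMF qX →
        renyiDE α p (fun z : X × Y =>
          ((∑ y, p (z.1, y) ^ α * qY y ^ (1 - α)) ^ (1 / α) /
            ∑ x', (∑ y, p (x', y) ^ α * qY y ^ (1 - α)) ^ (1 / α)) * qY z.2) ≤
        renyiDE α p (fun z : X × Y => qX z.1 * qY z.2)) ∧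
    (∀ qX : X → ℝ, IsPMF qX → (∀ x, 0 < qX x) →
      ∀ qY : Y → ℝ, IsPMF qY →
        renyiDE α p (fun z : X × Y => qX z.1 *
          ((∑ x, p (x, z.2) ^ α * qX x ^ (1 - α)) ^ (1 / α) /
            ∑ y', (∑ x, p (x, y') ^ α * qX x ^ (1 - α)) ^ (1 / α))) ≤
        renyiDE α p (fun z : X × Y => qX z.1 * qY z.2)) := by
  constructor
  · intro qY _ hqYpos qX hqX
    exact aux_part1 α hα p hppos qY hqYpos qX hqX
  · intro qX hqX hqXpos qY hqY
    have h := aux_part1 (X := Y) (Y := X) α hα (fun z => p z.swap)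
      (fun z => hppos z.swap) qX hqXpos qY hqY
    have L : renyiDE α p (fun z : X × Y => qX z.1 *
          ((∑ x, p (x, z.2) ^ α * qX x ^ (1 - α)) ^ (1 / α) /
            ∑ y', (∑ x, p (x, y') ^ α * qX x ^ (1 - α)) ^ (1 / α)))
        = renyiDE α (fun z : Y × X => p z.swap) (fun z : Y × X =>
          ((∑ x, (fun w : Y × X => p w.swap) (z.1, x) ^ α * qX x ^ (1 - α)) ^ (1 / α) /
            ∑ y', (∑ x, (fun w : Y × X => p w.swap) (y', x) ^ α * qX x ^ (1 - α)) ^ (1 / α)) *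
            qX z.2) := by
      rw [aux_comm]
      apply aux_congr
      intro z
      simp [mul_comm]
    have R : renyiDE α p (fun z : X × Y => qX z.1 * qY z.2)
        = renyiDE α (fun z : Y × X => p z.swap) (fun z : Y × X => qY z.1 * qX z.2) := by
      rw [aux_comm]
      apply aux_congr
      intro z
      simp [mul_comm]
    rw [L, R]
    exact h
end
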